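/- arXiv:1610.01687 — 7 statements merged into one kernel-verified Lean document; each statement's English description precedes it below -/
import Mathlib

section
/- In the setting below, the expected regret of single-stream sampled fictitious play with sampling probability α against an oblivious opponent satisfies E[R_T] ≤ (N²/α) · max_{1 ≤ i,j ≤ N} Σ_{t=1}^T |g_{t,i} − g_{t,j}| · P( Σ_{τ=1}^{t−1} (1+ε_τ)(g_{τ,i} − g_{τ,j}) ≥ 0 and Σ_{τ=1}^{t} (1+ε_τ)(g_{τ,i} − g_{τ,j}) ≤ 0 ). In particular, for α = 1/2 the right-hand side equals 2N² times the maximum over i, j of the stated sum. -/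
open MeasureTheory ProbabilityTheory



lemma aux_indepFun_pair_right {Ω β γ δ : Type*} {mΩ : MeasurableSpace Ω}
    [MeasurableSpace β] [MeasurableSpace γ] [MeasurableSpace δ]
    {μ : Measure Ω} [IsProbabilityMeasure μ]
    {X : Ω → β} {Y : Ω → γ} {Z : Ω → δ}
    (hX : Measurable X) (hY : Measurable Y) (hZ : Measurable Z)
    (hXY : IndepFun X Y μ) (hXYZ : IndepFun (fun ω => (X ω, Y ω)) Z μ) :
    IndepFun X (fun ω => (Y ω, Z ω)) μ := by
  have hYZ : IndepFun Y Z μ := hXYZ.comp measurable_snd measurable_id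
  set m1 : MeasurableSpace Ω := MeasurableSpace.comap X ‹MeasurableSpace β› with hm1def
  set p1 : Set (Set Ω) := {s | MeasurableSet[m1] s} with hp1def
  set p2 : Set (Set Ω) := {s | ∃ u v : Set Ω, (∃ u', MeasurableSet u' ∧ u = Y ⁻¹' u') ∧
      (∃ v', MeasurableSet v' ∧ v = Z ⁻¹' v') ∧ s = u ∩ v} with hp2def
  have hm2 : MeasurableSpace.comap (fun ω => (Y ω, Z ω)) inferInstance
      = MeasurableSpace.generateFrom p2 := by
    conv_lhs => rw [← generateFrom_prod]
    rw [MeasurableSpace.comap_generateFrom]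
    congr 1
    ext s
    constructor
    · rintro ⟨_, ⟨u, hu, v, hv, rfl⟩, rfl⟩
      exact ⟨Y ⁻¹' u, Z ⁻¹' v, ⟨u, hu, rfl⟩, ⟨v, hv, rfl⟩, rfl⟩
    · rintro ⟨_, _, ⟨u, hu, rfl⟩, ⟨v, hv, rfl⟩, rfl⟩
      exact ⟨u ×ˢ v, ⟨u, hu, v, hv, rfl⟩, rfl⟩
  have hp2 : IsPiSystem p2 := by
    rintro _ ⟨_, _, ⟨u, hu, rfl⟩, ⟨v, hv, rfl⟩, rfl⟩ _ ⟨_, _, ⟨u', hu', rfl⟩, ⟨v', hv', rfl⟩, rfl⟩ -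
    refine ⟨Y ⁻¹' (u ∩ u'), Z ⁻¹' (v ∩ v'), ⟨u ∩ u', hu.inter hu', rfl⟩,
      ⟨v ∩ v', hv.inter hv', rfl⟩, ?_⟩
    ext ω; simp; tauto
  have hIS : IndepSets p1 p2 μ := by
    rw [IndepSets_iff]
    rintro t1 t2 ⟨a, ha, rfl⟩ ⟨_, _, ⟨u, hu, rfl⟩, ⟨v, hv, rfl⟩, rfl⟩
    have h1 : X ⁻¹' a ∩ (Y ⁻¹' u ∩ Z ⁻¹' v)
        = (fun ω => (X ω, Y ω)) ⁻¹' (a ×ˢ u) ∩ Z ⁻¹' v := by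
      ext ω; simp [Set.mem_prod, and_assoc]
    rw [h1, hXYZ.measure_inter_preimage_eq_mul _ _ (ha.prod hu) hv]
    have h2 : (fun ω => (X ω, Y ω)) ⁻¹' (a ×ˢ u) = X ⁻¹' a ∩ Y ⁻¹' u := rfl
    rw [h2, hXY.measure_inter_preimage_eq_mul _ _ ha hu,
      hYZ.measure_inter_preimage_eq_mul _ _ hu hv, mul_assoc]
  show Indep m1 _ μ
  exact IndepSets.indep hX.comap_le (hY.prodMk hZ).comap_le
    (@MeasurableSpace.isPiSystem_measurableSet Ω m1) hp2
    (@MeasurableSpace.generateFrom_measurableSet Ω m1).symm hm2 hIS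


/-- **regret-to-switching-probabilities bound.** Single-stream sampled
fictitious play with sampling probability `α` against an oblivious opponent with payoff
vectors `g_1,…,g_T ∈ [−1,1]^N`. The sampling variables `ε_t` are i.i.d. with
`P(ε_t = 1) = α`, `P(ε_t = −1) = 1−α`; the tie-breaking variables `U_t` (with values in an
arbitrary measurable space `γ`) are jointly independent of the process `(ε_t)`. The move
`k_t` is measurable w.r.t. `σ(ε_1,…,ε_{t−1}, U_t)` and is almost surely an argmax of
`j ↦ ∑_{τ<t} (1+ε_τ) g_{τ,j}` (time is 0-indexed). Then the expected regret is at most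
`(N²/α) · max_{i,j} ∑_{t=1}^T |g_{t,i} − g_{t,j}| · P(switch of i over j at time t)`. -/
theorem expected_regret_le_switching
    {Ω : Type*} [MeasurableSpace Ω] (μ : Measure Ω) [IsProbabilityMeasure μ]
    {γ : Type*} [MeasurableSpace γ]
    (N T : ℕ) (hN : 1 ≤ N) (hT : 1 ≤ T)
    (α : ℝ) (hα : α ∈ Set.Ioo (0 : ℝ) 1)
    (g : ℕ → Fin N → ℝ) (hg : ∀ t j, g t j ∈ Set.Icc (-1 : ℝ) 1)
    (ε : ℕ → Ω → ℝ) (U : ℕ → Ω → γ)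
    (hεmeas : ∀ t, Measurable (ε t)) (hUmeas : ∀ t, Measurable (U t))
    (hεdist : ∀ t, μ {ω | ε t ω = 1} = ENNReal.ofReal α ∧
                   μ {ω | ε t ω = -1} = ENNReal.ofReal (1 - α))
    (hεindep : iIndepFun ε μ)
    (hUindep : IndepFun (fun ω (t : ℕ) => ε t ω) (fun ω (t : ℕ) => U t ω) μ)
    (k : ℕ → Ω → Fin N)
    (hkmeas : ∀ t, Measurable[MeasurableSpace.comap
        (fun ω => ((fun τ : Fin t => ε τ ω), U t ω)) inferInstance] (k t))
    (hkargmax : ∀ t, ∀ᵐ ω ∂μ, ∀ j : Fin N,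
        ∑ τ ∈ Finset.range t, (1 + ε τ ω) * g τ j
          ≤ ∑ τ ∈ Finset.range t, (1 + ε τ ω) * g τ (k t ω)) :
    ∫ ω, ((⨆ j : Fin N, ∑ t ∈ Finset.range T, g t j)
            - ∑ t ∈ Finset.range T, g t (k t ω)) ∂μ
      ≤ ((N : ℝ) ^ 2 / α) * ⨆ i : Fin N, ⨆ j : Fin N,
          ∑ t ∈ Finset.range T, |g t i - g t j| *
            (μ {ω | (0 ≤ ∑ τ ∈ Finset.range t, (1 + ε τ ω) * (g τ i - g τ j)) ∧
                    (∑ τ ∈ Finset.range (t + 1), (1 + ε τ ω) * (g τ i - g τ j) ≤ 0)}).toReal := by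
  obtain ⟨hα0, hα1⟩ := hα
  haveI : Nonempty (Fin N) := ⟨⟨0, hN⟩⟩
  -- ε is a.e. ±1
  have hεae : ∀ t, ∀ᵐ ω ∂μ, ε t ω = 1 ∨ ε t ω = -1 := by
    intro t
    have hA : MeasurableSet {ω | ε t ω = 1} := (hεmeas t) (measurableSet_singleton 1)
    have hB : MeasurableSet {ω | ε t ω = -1} := (hεmeas t) (measurableSet_singleton (-1))
    have hdisj : Disjoint {ω | ε t ω = 1} {ω | ε t ω = -1} := by
      rw [Set.disjoint_left]; rintro ω h1 h2
      simp only [Set.mem_setOf_eq] at h1 h2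
      rw [h1] at h2; norm_num at h2
    have hμ : μ ({ω | ε t ω = 1} ∪ {ω | ε t ω = -1}) = 1 := by
      rw [measure_union hdisj hB, (hεdist t).1, (hεdist t).2,
        ← ENNReal.ofReal_add (by linarith) (by linarith)]
      norm_num
    rw [ae_iff]
    have hset : {ω | ¬(ε t ω = 1 ∨ ε t ω = -1)} = ({ω | ε t ω = 1} ∪ {ω | ε t ω = -1})ᶜ := by
      ext ω; simp [not_or]
    rw [hset]
    exact (prob_compl_eq_zero_iff (hA.union hB)).2 hμ
  -- integrability helper
  have hbd_int : ∀ (f : Ω → ℝ) (C : ℝ), AEMeasurable f μ → (∀ᵐ ω ∂μ, |f ω| ≤ C) →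
      Integrable f μ := by
    intro f C hm hb
    exact (integrable_const C).mono' hm.aestronglyMeasurable
      (by filter_upwards [hb] with ω h using by simpa [Real.norm_eq_abs] using h)
  have hεbd : ∀ t, ∀ᵐ ω ∂μ, |ε t ω| ≤ 1 := by
    intro t
    filter_upwards [hεae t] with ω h
    rcases h with h | h <;> rw [h] <;> norm_num
  have hεint : ∀ t, Integrable (ε t) μ := fun t =>
    hbd_int _ 1 (hεmeas t).aemeasurable (hεbd t)
  -- expectation of ε
  have hεE : ∀ t, ∫ ω, ε t ω ∂μ = 2 * α - 1 := by
    intro t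
    have hA : MeasurableSet {ω | ε t ω = 1} := (hεmeas t) (measurableSet_singleton 1)
    have hB : MeasurableSet {ω | ε t ω = -1} := (hεmeas t) (measurableSet_singleton (-1))
    have heq : ε t =ᵐ[μ] fun ω => Set.indicator {ω | ε t ω = 1} (fun _ => (1:ℝ)) ω
        + Set.indicator {ω | ε t ω = -1} (fun _ => (-1:ℝ)) ω := by
      filter_upwards [hεae t] with ω h
      rcases h with h | h
      · have h2 : ω ∉ {ω | ε t ω = -1} := by simp [Set.mem_setOf_eq, h]; norm_num
        simp [Set.indicator_of_mem, Set.indicator_of_notMem, h, h2, Set.mem_setOf_eq]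
      · have h2 : ω ∉ {ω | ε t ω = 1} := by simp [Set.mem_setOf_eq, h]; norm_num
        simp [Set.indicator_of_mem, Set.indicator_of_notMem, h, h2, Set.mem_setOf_eq]
    rw [integral_congr_ae heq, integral_add
        ((integrable_const (1:ℝ)).indicator hA) ((integrable_const (-1:ℝ)).indicator hB),
      integral_indicator_const _ hA, integral_indicator_const _ hB,
      measureReal_def, measureReal_def,
      (hεdist t).1, (hεdist t).2, ENNReal.toReal_ofReal hα0.le,
      ENNReal.toReal_ofReal (by linarith)]
    simp; ring
  -- measurability of moves
  have hWmeas : ∀ t, Measurable (fun ω => ((fun τ : Fin t => ε τ ω), U t ω)) := by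
    intro t
    exact (measurable_pi_lambda (fun ω (τ : Fin t) => ε (↑τ) ω)
      (fun τ => hεmeas (τ : ℕ))).prodMk (hUmeas t)
  have hkm : ∀ t, Measurable (k t) := by
    intro t
    exact (hkmeas t).mono ((hWmeas t).comap_le) le_rfl
  have hgm : ∀ t, Measurable (g t) := fun t => measurable_of_countable _
  have hXmeas : ∀ t, Measurable (fun ω => g t (k t ω)) := fun t => (hgm t).comp (hkm t)
  have hXbd : ∀ t ω, |g t (k t ω)| ≤ 1 := by
    intro t ω
    exact abs_le.2 ⟨(hg t _).1, (hg t _).2⟩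
  have hXint : ∀ t, Integrable (fun ω => g t (k t ω)) μ := fun t =>
    hbd_int _ 1 (hXmeas t).aemeasurable (Filter.Eventually.of_forall (hXbd t))
  -- independence of ε t and g t (k t ·)
  have hindep : ∀ t, IndepFun (ε t) (fun ω => g t (k t ω)) μ := by
    intro t
    have hXY : IndepFun (ε t) (fun ω => (fun τ : Fin t => ε τ ω)) μ := by
      have hd : Disjoint ({t} : Finset ℕ) (Finset.range t) := by
        simp [Finset.disjoint_left]
      have h := hεindep.indepFun_finset {t} (Finset.range t) hd hεmeas
      have := h.comp (_mγ := inferInstance) (_mγ' := inferInstance) (φ := fun v : {x : ℕ // x ∈ ({t} : Finset ℕ)} → ℝ => v ⟨t, by simp⟩)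
        (ψ := fun v : {x : ℕ // x ∈ Finset.range t} → ℝ =>
          (fun τ : Fin t => v ⟨(τ : ℕ), by simp [Finset.mem_range, τ.2]⟩))
        (measurable_pi_apply _)
        (measurable_pi_lambda _ fun τ => measurable_pi_apply _)
      exact this
    have hXYZ : IndepFun (fun ω => (ε t ω, (fun τ : Fin t => ε τ ω))) (U t) μ := by
      have := hUindep.comp (_mγ := inferInstance) (_mγ' := inferInstance)
        (φ := fun v : ℕ → ℝ => (v t, fun τ : Fin t => v (τ : ℕ)))
        (ψ := fun v : ℕ → γ => v t)
        ((measurable_pi_apply t).prodMk (measurable_pi_lambda _ fun τ => measurable_pi_apply _))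
        (measurable_pi_apply t)
      exact this
    have hW : IndepFun (ε t) (fun ω => ((fun τ : Fin t => ε τ ω), U t ω)) μ :=
      aux_indepFun_pair_right (hεmeas t)
        (measurable_pi_lambda (fun ω (τ : Fin t) => ε (↑τ) ω) (fun τ => hεmeas (τ : ℕ)))
        (hUmeas t) hXY hXYZ
    have hle : MeasurableSpace.comap (fun ω => g t (k t ω)) inferInstance
        ≤ MeasurableSpace.comap (fun ω => ((fun τ : Fin t => ε τ ω), U t ω)) inferInstance := by
      exact Measurable.comap_le ((hgm t).comp (hkmeas t))
    exact indep_of_indep_of_le_right hW hle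
  -- integrability of (1+ε)·c for bounded measurable c
  have h1εint : ∀ (t : ℕ) (c : Ω → ℝ), Measurable c → (∀ ω, |c ω| ≤ 1) →
      Integrable (fun ω => (1 + ε t ω) * c ω) μ := by
    intro t c hcm hcb
    refine hbd_int _ 2 ((measurable_const.add (hεmeas t)).mul hcm).aemeasurable ?_
    filter_upwards [hεbd t] with ω h
    calc |(1 + ε t ω) * c ω| = |1 + ε t ω| * |c ω| := abs_mul _ _
      _ ≤ 2 * 1 := by
          apply mul_le_mul _ (hcb ω) (abs_nonneg _) (by norm_num)
          calc |1 + ε t ω| ≤ |(1:ℝ)| + |ε t ω| := abs_add_le _ _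
            _ ≤ 1 + 1 := by simp [h]
            _ = 2 := by norm_num
      _ = 2 := by norm_num
  -- expectation identities
  have hconst : ∀ (t : ℕ) (c : ℝ), ∫ ω, (1 + ε t ω) * c ∂μ = 2 * α * c := by
    intro t c
    rw [integral_mul_const, integral_add (integrable_const 1) (hεint t), hεE t]
    have h1 : ∫ (_ : Ω), (1:ℝ) ∂μ = 1 := by simp
    rw [h1]; ring
  have hmul : ∀ t, ∫ ω, (1 + ε t ω) * g t (k t ω) ∂μ
      = 2 * α * ∫ ω, g t (k t ω) ∂μ := by
    intro t
    have hεX : Integrable (fun ω => ε t ω * g t (k t ω)) μ := by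
      refine hbd_int _ 1 ((hεmeas t).mul (hXmeas t)).aemeasurable ?_
      filter_upwards [hεbd t] with ω h
      calc |ε t ω * g t (k t ω)| = |ε t ω| * |g t (k t ω)| := abs_mul _ _
        _ ≤ 1 * 1 := mul_le_mul h (hXbd t ω) (abs_nonneg _) (by norm_num)
        _ = 1 := by norm_num
    have heq : (fun ω => (1 + ε t ω) * g t (k t ω))
        = fun ω => g t (k t ω) + ε t ω * g t (k t ω) := by
      ext ω; ring
    rw [heq, integral_add (hXint t) hεX]
    have h2 := (hindep t).integral_mul_eq_mul_integral (hεint t).aestronglyMeasurable (hXint t).aestronglyMeasurable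
    have h3 : ∫ a, ε t a * g t (k t a) ∂μ = (∫ ω, ε t ω ∂μ) * ∫ ω, g t (k t ω) ∂μ := h2
    rw [h3, hεE t]
    ring
  -- event sets
  set Eset : Fin N → Fin N → ℕ → Set Ω := fun i j t =>
    {ω | (0 ≤ ∑ τ ∈ Finset.range t, (1 + ε τ ω) * (g τ i - g τ j)) ∧
         (∑ τ ∈ Finset.range (t + 1), (1 + ε τ ω) * (g τ i - g τ j) ≤ 0)} with hEdef
  have hEmeas : ∀ i j (t : ℕ), MeasurableSet (Eset i j t) := by
    intro i j t
    have hSmeas : ∀ (n : ℕ), Measurable (fun ω =>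
        ∑ τ ∈ Finset.range n, (1 + ε τ ω) * (g τ i - g τ j)) := by
      intro n
      exact Finset.measurable_sum _ fun τ _ => (measurable_const.add (hεmeas τ)).mul_const _
    exact (measurableSet_le measurable_const (hSmeas t)).inter
      (measurableSet_le (hSmeas (t+1)) measurable_const)
  set P : Fin N → Fin N → ℕ → ℝ := fun i j t => (μ (Eset i j t)).toReal with hPdef
  -- best fixed action
  obtain ⟨js, hjs⟩ := Finite.exists_max (fun j : Fin N => ∑ t ∈ Finset.range T, g t j)
  have hsup_eq : (⨆ j : Fin N, ∑ t ∈ Finset.range T, g t j)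
      = ∑ t ∈ Finset.range T, g t js :=
    le_antisymm (ciSup_le hjs)
      (le_ciSup (f := fun j : Fin N => ∑ t ∈ Finset.range T, g t j)
        (Set.Finite.bddAbove (Set.finite_range _)) js)
  -- a.e. pointwise inequality (be-the-leader + switching)
  have hae_main : ∀ᵐ ω ∂μ,
      ∑ t ∈ Finset.range T, (1 + ε t ω) * g t js
        ≤ ∑ t ∈ Finset.range T, (1 + ε t ω) * g t (k t ω)
          + ∑ t ∈ Finset.range T, ∑ i : Fin N, ∑ j : Fin N,
              (Eset i j t).indicator (fun _ => 2 * |g t i - g t j|) ω := by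
    have h1 := ae_all_iff.2 hkargmax
    have h2 := ae_all_iff.2 hεae
    filter_upwards [h1, h2] with ω hargmax hpm
    have hBTL : ∀ n : ℕ, ∀ jj : Fin N,
        ∑ t ∈ Finset.range n, (1 + ε t ω) * g t jj
          ≤ ∑ t ∈ Finset.range n, (1 + ε t ω) * g t (k (t+1) ω) := by
      intro n
      induction n with
      | zero => simp
      | succ n ih =>
        intro jj
        calc ∑ t ∈ Finset.range (n+1), (1 + ε t ω) * g t jj
            ≤ ∑ t ∈ Finset.range (n+1), (1 + ε t ω) * g t (k (n+1) ω) := hargmax (n+1) jj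
          _ = ∑ t ∈ Finset.range n, (1 + ε t ω) * g t (k (n+1) ω)
              + (1 + ε n ω) * g n (k (n+1) ω) := Finset.sum_range_succ _ n
          _ ≤ ∑ t ∈ Finset.range n, (1 + ε t ω) * g t (k (t+1) ω)
              + (1 + ε n ω) * g n (k (n+1) ω) := by
                exact add_le_add_left (ih (k (n+1) ω)) _
          _ = ∑ t ∈ Finset.range (n+1), (1 + ε t ω) * g t (k (t+1) ω) :=
                (Finset.sum_range_succ _ n).symm
    have hterm : ∀ t : ℕ, (1 + ε t ω) * g t (k (t+1) ω) - (1 + ε t ω) * g t (k t ω)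
        ≤ ∑ i : Fin N, ∑ j : Fin N,
            (Eset i j t).indicator (fun _ => 2 * |g t i - g t j|) ω := by
      intro t
      have hε0 : 0 ≤ 1 + ε t ω := by rcases hpm t with h | h <;> rw [h] <;> norm_num
      have hε2 : 1 + ε t ω ≤ 2 := by rcases hpm t with h | h <;> rw [h] <;> norm_num
      have hsplit : ∀ n : ℕ, ∀ i j : Fin N,
          ∑ τ ∈ Finset.range n, (1 + ε τ ω) * (g τ i - g τ j)
            = ∑ τ ∈ Finset.range n, (1 + ε τ ω) * g τ i
              - ∑ τ ∈ Finset.range n, (1 + ε τ ω) * g τ j := by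
        intro n i j
        rw [← Finset.sum_sub_distrib]
        exact Finset.sum_congr rfl fun τ _ => by ring
      have hmem : ω ∈ Eset (k t ω) (k (t+1) ω) t := by
        constructor
        · rw [hsplit t (k t ω) (k (t+1) ω)]
          have := hargmax t (k (t+1) ω)
          linarith
        · rw [hsplit (t+1) (k t ω) (k (t+1) ω)]
          have := hargmax (t+1) (k t ω)
          linarith
      have hnn : ∀ i j : Fin N,
          0 ≤ (Eset i j t).indicator (fun _ => 2 * |g t i - g t j|) ω :=
        fun i j => Set.indicator_nonneg (fun _ _ => by positivity) ω
      calc (1 + ε t ω) * g t (k (t+1) ω) - (1 + ε t ω) * g t (k t ω)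
          = (1 + ε t ω) * (g t (k (t+1) ω) - g t (k t ω)) := by ring
        _ ≤ (1 + ε t ω) * |g t (k (t+1) ω) - g t (k t ω)| :=
            mul_le_mul_of_nonneg_left (le_abs_self _) hε0
        _ ≤ 2 * |g t (k (t+1) ω) - g t (k t ω)| :=
            mul_le_mul_of_nonneg_right hε2 (abs_nonneg _)
        _ = 2 * |g t (k t ω) - g t (k (t+1) ω)| := by rw [abs_sub_comm]
        _ = (Eset (k t ω) (k (t+1) ω) t).indicator
              (fun _ => 2 * |g t (k t ω) - g t (k (t+1) ω)|) ω :=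
            (Set.indicator_of_mem hmem
              (fun _ => 2 * |g t (k t ω) - g t (k (t+1) ω)|)).symm
        _ ≤ ∑ j : Fin N, (Eset (k t ω) j t).indicator
              (fun _ => 2 * |g t (k t ω) - g t j|) ω :=
            Finset.single_le_sum (fun j _ => hnn (k t ω) j) (Finset.mem_univ _)
        _ ≤ ∑ i : Fin N, ∑ j : Fin N,
              (Eset i j t).indicator (fun _ => 2 * |g t i - g t j|) ω :=
            Finset.single_le_sum
              (f := fun i => ∑ j : Fin N,
                (Eset i j t).indicator (fun _ => 2 * |g t i - g t j|) ω)
              (fun i _ => Finset.sum_nonneg fun j _ => hnn i j) (Finset.mem_univ _)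
    calc ∑ t ∈ Finset.range T, (1 + ε t ω) * g t js
        ≤ ∑ t ∈ Finset.range T, (1 + ε t ω) * g t (k (t+1) ω) := hBTL T js
      _ = ∑ t ∈ Finset.range T, (1 + ε t ω) * g t (k t ω)
          + ∑ t ∈ Finset.range T, ((1 + ε t ω) * g t (k (t+1) ω)
              - (1 + ε t ω) * g t (k t ω)) := by
            rw [← Finset.sum_add_distrib]
            exact Finset.sum_congr rfl fun t _ => by ring
      _ ≤ ∑ t ∈ Finset.range T, (1 + ε t ω) * g t (k t ω)
          + ∑ t ∈ Finset.range T, ∑ i : Fin N, ∑ j : Fin N,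
              (Eset i j t).indicator (fun _ => 2 * |g t i - g t j|) ω :=
            add_le_add_right (Finset.sum_le_sum fun t _ => hterm t) _
  -- integrability of the three aggregate functions
  have hFint : Integrable (fun ω => ∑ t ∈ Finset.range T, (1 + ε t ω) * g t js) μ :=
    integrable_finset_sum _ fun t _ => h1εint t (fun _ => g t js) measurable_const
      (fun _ => abs_le.2 ⟨(hg t js).1, (hg t js).2⟩)
  have hGint : Integrable (fun ω => ∑ t ∈ Finset.range T, (1 + ε t ω) * g t (k t ω)) μ :=
    integrable_finset_sum _ fun t _ => h1εint t _ (hXmeas t) (hXbd t)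
  have hHint_term : ∀ (t : ℕ) (i j : Fin N),
      Integrable ((Eset i j t).indicator (fun _ => 2 * |g t i - g t j|)) μ :=
    fun t i j => (integrable_const _).indicator (hEmeas i j t)
  have hHint : Integrable (fun ω => ∑ t ∈ Finset.range T, ∑ i : Fin N, ∑ j : Fin N,
      (Eset i j t).indicator (fun _ => 2 * |g t i - g t j|) ω) μ :=
    integrable_finset_sum _ fun t _ => integrable_finset_sum _ fun i _ =>
      integrable_finset_sum _ fun j _ => hHint_term t i j
  have hint_le := integral_mono_ae hFint (hGint.add hHint) hae_main
  simp only [Pi.add_apply] at hint_le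
  rw [integral_add hGint hHint] at hint_le
  -- values of the integrals
  have hFval : ∫ ω, ∑ t ∈ Finset.range T, (1 + ε t ω) * g t js ∂μ
      = 2 * α * ∑ t ∈ Finset.range T, g t js := by
    rw [integral_finset_sum _ (fun t _ => h1εint t (fun _ => g t js) measurable_const
      (fun _ => abs_le.2 ⟨(hg t js).1, (hg t js).2⟩)), Finset.mul_sum]
    exact Finset.sum_congr rfl fun t _ => hconst t (g t js)
  have hGval : ∫ ω, ∑ t ∈ Finset.range T, (1 + ε t ω) * g t (k t ω) ∂μ
      = 2 * α * ∑ t ∈ Finset.range T, ∫ ω, g t (k t ω) ∂μ := by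
    rw [integral_finset_sum _ (fun t _ => h1εint t _ (hXmeas t) (hXbd t)), Finset.mul_sum]
    exact Finset.sum_congr rfl fun t _ => hmul t
  have hHval : ∫ ω, (∑ t ∈ Finset.range T, ∑ i : Fin N, ∑ j : Fin N,
        (Eset i j t).indicator (fun _ => 2 * |g t i - g t j|) ω) ∂μ
      = ∑ t ∈ Finset.range T, ∑ i : Fin N, ∑ j : Fin N,
          2 * |g t i - g t j| * P i j t := by
    rw [integral_finset_sum _ (fun t _ => integrable_finset_sum _ fun i _ =>
      integrable_finset_sum _ fun j _ => hHint_term t i j)]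
    refine Finset.sum_congr rfl fun t _ => ?_
    rw [integral_finset_sum _ (fun i _ => integrable_finset_sum _ fun j _ => hHint_term t i j)]
    refine Finset.sum_congr rfl fun i _ => ?_
    rw [integral_finset_sum _ (fun j _ => hHint_term t i j)]
    refine Finset.sum_congr rfl fun j _ => ?_
    rw [integral_indicator_const _ (hEmeas i j t)]
    simp only [hPdef, smul_eq_mul, measureReal_def]
    ring
  have hmain : 2 * α * ∑ t ∈ Finset.range T, g t js
      ≤ 2 * α * ∑ t ∈ Finset.range T, ∫ ω, g t (k t ω) ∂μ
        + ∑ t ∈ Finset.range T, ∑ i : Fin N, ∑ j : Fin N,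
            2 * |g t i - g t j| * P i j t := by
    rw [← hFval, ← hGval, ← hHval]
    exact hint_le
  -- rearrange and bound by the sup
  set Bsup : ℝ := ⨆ i : Fin N, ⨆ j : Fin N,
    ∑ t ∈ Finset.range T, |g t i - g t j| * P i j t with hBdef
  have hswap : ∑ t ∈ Finset.range T, ∑ i : Fin N, ∑ j : Fin N,
        2 * |g t i - g t j| * P i j t
      = 2 * ∑ i : Fin N, ∑ j : Fin N, ∑ t ∈ Finset.range T,
          |g t i - g t j| * P i j t := by
    have hinner : ∀ i j : Fin N, ∑ t ∈ Finset.range T, 2 * |g t i - g t j| * P i j t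
        = 2 * ∑ t ∈ Finset.range T, |g t i - g t j| * P i j t := by
      intro i j
      rw [Finset.mul_sum]
      exact Finset.sum_congr rfl fun t _ => by ring
    calc ∑ t ∈ Finset.range T, ∑ i : Fin N, ∑ j : Fin N, 2 * |g t i - g t j| * P i j t
        = ∑ i : Fin N, ∑ t ∈ Finset.range T, ∑ j : Fin N,
            2 * |g t i - g t j| * P i j t := Finset.sum_comm
      _ = ∑ i : Fin N, ∑ j : Fin N, ∑ t ∈ Finset.range T,
            2 * |g t i - g t j| * P i j t :=
          Finset.sum_congr rfl fun i _ => Finset.sum_comm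
      _ = ∑ i : Fin N, ∑ j : Fin N,
            2 * ∑ t ∈ Finset.range T, |g t i - g t j| * P i j t :=
          Finset.sum_congr rfl fun i _ => Finset.sum_congr rfl fun j _ => hinner i j
      _ = 2 * ∑ i : Fin N, ∑ j : Fin N, ∑ t ∈ Finset.range T,
            |g t i - g t j| * P i j t := by
          rw [Finset.mul_sum]
          exact Finset.sum_congr rfl fun i _ => (Finset.mul_sum _ _ _).symm
  have hsum_le : ∑ i : Fin N, ∑ j : Fin N, ∑ t ∈ Finset.range T,
      |g t i - g t j| * P i j t ≤ (N : ℝ)^2 * Bsup := by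
    have hle1 : ∀ i j : Fin N,
        ∑ t ∈ Finset.range T, |g t i - g t j| * P i j t ≤ Bsup := by
      intro i j
      have h1 : ∑ t ∈ Finset.range T, |g t i - g t j| * P i j t
          ≤ ⨆ j' : Fin N, ∑ t ∈ Finset.range T, |g t i - g t j'| * P i j' t :=
        le_ciSup (f := fun j' : Fin N =>
          ∑ t ∈ Finset.range T, |g t i - g t j'| * P i j' t)
          (Set.Finite.bddAbove (Set.finite_range _)) j
      have h2 : (⨆ j' : Fin N, ∑ t ∈ Finset.range T, |g t i - g t j'| * P i j' t)
          ≤ Bsup :=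
        le_ciSup (f := fun i' : Fin N => ⨆ j' : Fin N,
          ∑ t ∈ Finset.range T, |g t i' - g t j'| * P i' j' t)
          (Set.Finite.bddAbove (Set.finite_range _)) i
      exact h1.trans h2
    calc ∑ i : Fin N, ∑ j : Fin N, ∑ t ∈ Finset.range T, |g t i - g t j| * P i j t
        ≤ ∑ _i : Fin N, ∑ _j : Fin N, Bsup :=
          Finset.sum_le_sum fun i _ => Finset.sum_le_sum fun j _ => hle1 i j
      _ = (N : ℝ)^2 * Bsup := by
          simp [Finset.sum_const, Finset.card_univ]
          ring
  -- compute the left-hand side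
  have hL : ∫ ω, ((⨆ j : Fin N, ∑ t ∈ Finset.range T, g t j)
        - ∑ t ∈ Finset.range T, g t (k t ω)) ∂μ
      = ∑ t ∈ Finset.range T, g t js
        - ∑ t ∈ Finset.range T, ∫ ω, g t (k t ω) ∂μ := by
    rw [integral_sub (integrable_const _) (integrable_finset_sum _ fun t _ => hXint t),
      integral_const, integral_finset_sum _ fun t _ => hXint t, hsup_eq]
    simp
  have hBsup_eq : (⨆ i : Fin N, ⨆ j : Fin N,
      ∑ t ∈ Finset.range T, |g t i - g t j| *
        (μ {ω | (0 ≤ ∑ τ ∈ Finset.range t, (1 + ε τ ω) * (g τ i - g τ j)) ∧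
                (∑ τ ∈ Finset.range (t + 1), (1 + ε τ ω) * (g τ i - g τ j) ≤ 0)}).toReal)
      = Bsup := by
    simp only [hBdef, hPdef, hEdef]
  rw [hL, ← hBsup_eq, hBsup_eq]
  rw [div_mul_eq_mul_div, le_div_iff₀ hα0]
  rw [hswap] at hmain
  nlinarith [hsum_le, hmain]
end

section
/- (Littlewood–Offord theorem of Erdős.) Let x_1, …, x_n be real numbers with |x_i| ≥ 1 for all i, and let ε_1, …, ε_n be i.i.d. Rademacher random variables. Then for every Δ > 0 and every closed interval B of radius Δ (i.e., of length 2Δ), P(ε_1 x_1 + ⋯ + ε_n x_n ∈ B) ≤ (⌊Δ⌋ + 1) · S(n) / 2^n, where S(n) is the largest binomial coefficient C(n, ⌊n/2⌋) and ⌊·⌋ denotes the integer part. -/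
open Finset

lemma LO_count_bound {n k : ℕ} (hk : 0 < k) (w : Fin n → ℝ) (hw : ∀ i, 1 ≤ w i)
    (ℓ a : ℝ) (hℓ2 : ℓ < 2) (hℓ0 : 0 < ℓ) (𝒜 : Finset (Finset (Fin n)))
    (h𝒜 : ∀ S ∈ 𝒜, (2 * ∑ i ∈ S, w i - ∑ i, w i) ∈ Set.Icc a (a + ℓ * k)) :
    𝒜.card ≤ k * n.choose (n / 2) := by
  classical
  set φ : Finset (Fin n) → ℝ := fun S => 2 * ∑ i ∈ S, w i - ∑ i, w i with hφ
  have hcover : 𝒜 ⊆ (range k).biUnion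
      (fun j => 𝒜.filter fun S => φ S ∈ Set.Icc (a + ℓ * j) (a + ℓ * (j + 1))) := by
    intro S hS
    have h1 : a ≤ φ S := (h𝒜 S hS).1
    have h2 : φ S ≤ a + ℓ * k := (h𝒜 S hS).2
    set t : ℝ := (φ S - a) / ℓ with ht
    have ht0 : 0 ≤ t := div_nonneg (by linarith) hℓ0.le
    have htfl : (0:ℤ) ≤ ⌊t⌋ := Int.le_floor.2 (by exact_mod_cast ht0)
    set j : ℕ := min ⌊t⌋.toNat (k - 1) with hj
    have hjk : j < k := lt_of_le_of_lt (min_le_right _ _) (Nat.pred_lt hk.ne')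
    have hcast : ((⌊t⌋.toNat : ℝ)) = (⌊t⌋ : ℝ) := by
      exact_mod_cast congrArg (Int.cast : ℤ → ℝ) (Int.toNat_of_nonneg htfl)
    have hlow : a + ℓ * j ≤ φ S := by
      have hjt : (j : ℝ) ≤ t := by
        calc (j : ℝ) ≤ (⌊t⌋.toNat : ℝ) := by exact_mod_cast min_le_left _ _
        _ = (⌊t⌋ : ℝ) := hcast
        _ ≤ t := Int.floor_le t
      have := mul_le_mul_of_nonneg_left hjt hℓ0.le
      rw [ht, mul_div_cancel₀ _ hℓ0.ne'] at this
      linarith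
    have hhigh : φ S ≤ a + ℓ * (j + 1) := by
      rcases le_or_gt ⌊t⌋.toNat (k - 1) with h | h
      · have hjj : j = ⌊t⌋.toNat := min_eq_left h
        have : t < (j : ℝ) + 1 := by
          rw [hjj, hcast]; exact Int.lt_floor_add_one t
        have := mul_lt_mul_of_pos_left this hℓ0
        rw [ht, mul_div_cancel₀ _ hℓ0.ne'] at this
        linarith
      · have hjj : j = k - 1 := min_eq_right h.le
        have : (j : ℝ) + 1 = (k : ℝ) := by
          rw [hjj]
          have := Nat.succ_pred_eq_of_pos hk
          exact_mod_cast congrArg (Nat.cast : ℕ → ℝ) this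
        rw [this]; linarith
    exact mem_biUnion.2 ⟨j, mem_range.2 hjk, mem_filter.2 ⟨hS, hlow, hhigh⟩⟩
  refine le_trans (card_le_card hcover) (le_trans (card_biUnion_le) ?_)
  have hbound : ∀ j ∈ range k,
      (𝒜.filter fun S => φ S ∈ Set.Icc (a + ℓ * j) (a + ℓ * (j + 1))).card
        ≤ n.choose (n / 2) := by
    intro j _
    have anti : IsAntichain (· ⊆ ·)
        ((𝒜.filter fun S => φ S ∈ Set.Icc (a + ℓ * j) (a + ℓ * (j + 1))) :
          Set (Finset (Fin n))) := by
      intro S hS T hT hne hsub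
      simp only [coe_filter, Set.mem_setOf_eq, Set.mem_Icc] at hS hT
      obtain ⟨-, hS1, hS2⟩ := hS
      obtain ⟨-, hT1, hT2⟩ := hT
      have hsub' : S ⊆ T := hsub
      have hssub : S ⊂ T := Finset.ssubset_iff_subset_ne.2 ⟨hsub', hne⟩
      obtain ⟨i, hiT, hiS⟩ := Finset.exists_of_ssubset hssub
      have hsd : (T \ S).Nonempty := ⟨i, Finset.mem_sdiff.2 ⟨hiT, hiS⟩⟩
      have hsum : ∑ i ∈ T \ S, w i + ∑ i ∈ S, w i = ∑ i ∈ T, w i :=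
        Finset.sum_sdiff hsub'
      have hge : (1 : ℝ) ≤ ∑ i ∈ T \ S, w i := by
        calc (1 : ℝ) ≤ ((T \ S).card : ℝ) := by
              exact_mod_cast Finset.card_pos.2 hsd
        _ = ∑ _i ∈ T \ S, (1:ℝ) := by simp
        _ ≤ ∑ i ∈ T \ S, w i := Finset.sum_le_sum fun i _ => hw i
      have hdiff : φ T - φ S = 2 * ∑ i ∈ T \ S, w i := by
        simp only [hφ]; linarith
      linarith
    simpa using IsAntichain.sperner anti
  calc ∑ j ∈ range k, (𝒜.filter fun S => φ S ∈ Set.Icc (a + ℓ * j) (a + ℓ * (j + 1))).card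
      ≤ ∑ _j ∈ range k, n.choose (n / 2) := Finset.sum_le_sum hbound
  _ = k * n.choose (n / 2) := by simp [mul_comm]

open MeasureTheory ProbabilityTheory

/-- **Littlewood–Offord theorem of Erdős.** If `|x i| ≥ 1` for all `i` and
`ε_1,…,ε_n` are i.i.d. Rademacher random variables, then for every `Δ > 0` and every closed
interval of radius `Δ` (written `[c−Δ, c+Δ]`),
`P(∑ ε_i x_i ∈ [c−Δ, c+Δ]) ≤ (⌊Δ⌋+1) · C(n, ⌊n/2⌋) / 2^n`. -/
theorem littlewood_offord_erdos
    {Ω : Type*} [MeasurableSpace Ω] (μ : Measure Ω) [IsProbabilityMeasure μ]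
    (n : ℕ) (x : Fin n → ℝ) (hx : ∀ i, 1 ≤ |x i|)
    (ε : Fin n → Ω → ℝ) (hmeas : ∀ i, Measurable (ε i))
    (hIndep : iIndepFun ε μ)
    (hRad : ∀ i, μ {ω | ε i ω = 1} = 1 / 2 ∧ μ {ω | ε i ω = -1} = 1 / 2)
    (Δ : ℝ) (hΔ : 0 < Δ) (c : ℝ) :
    (μ {ω | ∑ i, ε i ω * x i ∈ Set.Icc (c - Δ) (c + Δ)}).toReal
      ≤ ((⌊Δ⌋ : ℝ) + 1) * (n.choose (n / 2) : ℝ) / 2 ^ n := by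
  classical
  have hx0 : ∀ i, x i ≠ 0 := fun i h => by have := hx i; rw [h] at this; norm_num at this
  -- sign vectors
  set e : Finset (Fin n) → Fin n → ℝ :=
    fun S i => (if i ∈ S then (1:ℝ) else -1) * (if 0 < x i then 1 else -1) with he
  have he_pm : ∀ S i, e S i = 1 ∨ e S i = -1 := by
    intro S i; simp only [he]; split_ifs <;> norm_num
  -- atoms
  set A : Finset (Fin n) → Set Ω := fun S => ⋂ i, (ε i) ⁻¹' {e S i} with hA
  have hatom : ∀ S, μ (A S) = (1/2 : ENNReal) ^ n := by
    intro S
    have := hIndep.meas_iInter (s := fun i => (ε i) ⁻¹' {e S i})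
      (fun i => ⟨{e S i}, measurableSet_singleton _, rfl⟩)
    rw [hA, this]
    have : ∀ i, μ ((ε i) ⁻¹' {e S i}) = 1/2 := by
      intro i
      rcases he_pm S i with h | h <;> rw [h]
      · exact (hRad i).1
      · exact (hRad i).2
    simp only [this, Finset.prod_const, Finset.card_univ, Fintype.card_fin]
  -- the null set
  set N : Set Ω := ⋃ i, {ω | ε i ω ≠ 1 ∧ ε i ω ≠ -1} with hN
  have hNnull : μ N = 0 := by
    refine measure_iUnion_null fun i => ?_
    have hset : {ω | ε i ω ≠ 1 ∧ ε i ω ≠ -1}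
        = ({ω | ε i ω = 1} ∪ {ω | ε i ω = -1})ᶜ := by
      ext ω; simp [not_or]
    have hm1 : MeasurableSet {ω | ε i ω = 1} := hmeas i (measurableSet_singleton 1)
    have hm2 : MeasurableSet {ω | ε i ω = -1} := hmeas i (measurableSet_singleton (-1))
    have hdisj : Disjoint {ω | ε i ω = 1} {ω | ε i ω = -1} := by
      rw [Set.disjoint_left]; intro ω h1 h2
      simp only [Set.mem_setOf_eq] at h1 h2; rw [h1] at h2; norm_num at h2
    have hunion : μ ({ω | ε i ω = 1} ∪ {ω | ε i ω = -1}) = 1 := by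
      rw [measure_union hdisj hm2, (hRad i).1, (hRad i).2]
      rw [ENNReal.div_add_div_same, one_add_one_eq_two]
      exact ENNReal.div_self (by norm_num) (by norm_num)
    rw [hset, measure_compl (hm1.union hm2) (measure_ne_top μ _), hunion, measure_univ,
      tsub_self]
  -- weights
  set w : Fin n → ℝ := fun i => |x i| with hw
  set φ : Finset (Fin n) → ℝ := fun S => 2 * ∑ i ∈ S, w i - ∑ i, w i with hφ
  -- value of the sum on an atom
  have hval : ∀ S : Finset (Fin n), ∀ ω ∈ A S, ∑ i, ε i ω * x i = φ S := by
    intro S ω hω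
    have hωi : ∀ i, ε i ω = e S i := by
      intro i
      have := Set.mem_iInter.1 hω i
      simpa using this
    have step : ∀ i, ε i ω * x i = if i ∈ S then w i else -w i := by
      intro i
      rw [hωi i, he]
      have habs : (if 0 < x i then (1:ℝ) else -1) * x i = |x i| := by
        split_ifs with h
        · rw [one_mul, abs_of_pos h]
        · rw [neg_one_mul, abs_of_nonpos (le_of_not_gt h)]
      rw [mul_assoc, habs]
      split_ifs <;> simp [hw]
    calc ∑ i, ε i ω * x i = ∑ i, (if i ∈ S then w i else -w i) :=
          Finset.sum_congr rfl fun i _ => step i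
    _ = ∑ i, ((if i ∈ S then 2 * w i else 0) - w i) := by
          refine Finset.sum_congr rfl fun i _ => ?_
          split_ifs <;> ring
    _ = (∑ i ∈ S, 2 * w i) - ∑ i, w i := by
          rw [Finset.sum_sub_distrib]
          congr 1
          rw [← Finset.sum_filter, Finset.filter_mem_eq_inter, Finset.univ_inter]
    _ = φ S := by simp only [hφ]; rw [Finset.mul_sum]
  -- the good family
  set 𝒜 : Finset (Finset (Fin n)) :=
    Finset.univ.filter (fun S => φ S ∈ Set.Icc (c - Δ) (c + Δ)) with h𝒜
  -- coverage
  have hcov : {ω | ∑ i, ε i ω * x i ∈ Set.Icc (c - Δ) (c + Δ)}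
      ⊆ N ∪ ⋃ S ∈ 𝒜, A S := by
    intro ω hω
    by_cases hωN : ω ∈ N
    · exact Or.inl hωN
    · right
      have hpm : ∀ i, ε i ω = 1 ∨ ε i ω = -1 := by
        intro i
        by_contra h
        push_neg at h
        exact hωN (Set.mem_iUnion.2 ⟨i, h⟩)
      set S : Finset (Fin n) := Finset.univ.filter (fun i => 0 < ε i ω * x i) with hS
      have hmemA : ω ∈ A S := by
        rw [hA]
        refine Set.mem_iInter.2 fun i => ?_
        simp only [Set.mem_preimage, Set.mem_singleton_iff]
        have hcond : (i ∈ S) ↔ 0 < ε i ω * x i := by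
          simp [hS]
        rcases hpm i with h | h
        · rw [h]
          rw [h, one_mul] at hcond
          simp only [he]
          rcases lt_trichotomy (x i) 0 with hlt | heq | hgt
          · rw [if_neg (by rw [hcond]; exact not_lt.2 hlt.le),
              if_neg (not_lt.2 hlt.le)]; norm_num
          · exact absurd heq (hx0 i)
          · rw [if_pos (hcond.2 hgt), if_pos hgt]; norm_num
        · rw [h]
          rw [h, neg_one_mul] at hcond
          simp only [he]
          rcases lt_trichotomy (x i) 0 with hlt | heq | hgt
          · rw [if_pos (hcond.2 (by linarith)), if_neg (not_lt.2 hlt.le)]; norm_num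
          · exact absurd heq (hx0 i)
          · rw [if_neg (by rw [hcond]; intro hc; linarith), if_pos hgt]; norm_num
      have hSin : S ∈ 𝒜 := by
        rw [h𝒜, Finset.mem_filter]
        refine ⟨Finset.mem_univ _, ?_⟩
        rw [← hval S ω hmemA]
        exact hω
      exact Set.mem_iUnion₂.2 ⟨S, hSin, hmemA⟩
  -- measure bound
  have hmeasure : μ {ω | ∑ i, ε i ω * x i ∈ Set.Icc (c - Δ) (c + Δ)}
      ≤ (𝒜.card : ENNReal) * (1/2) ^ n := by
    calc μ {ω | ∑ i, ε i ω * x i ∈ Set.Icc (c - Δ) (c + Δ)}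
        ≤ μ (N ∪ ⋃ S ∈ 𝒜, A S) := measure_mono hcov
    _ ≤ μ N + μ (⋃ S ∈ 𝒜, A S) := measure_union_le _ _
    _ = μ (⋃ S ∈ 𝒜, A S) := by rw [hNnull, zero_add]
    _ ≤ ∑ S ∈ 𝒜, μ (A S) := measure_biUnion_finset_le _ _
    _ = (𝒜.card : ENNReal) * (1/2) ^ n := by
        rw [Finset.sum_congr rfl fun S _ => hatom S, Finset.sum_const, nsmul_eq_mul]
  -- the integer k
  set k : ℕ := ⌊Δ⌋.toNat + 1 with hk
  have hfl0 : (0:ℤ) ≤ ⌊Δ⌋ := Int.floor_nonneg.2 hΔ.le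
  have hkr : (k : ℝ) = (⌊Δ⌋ : ℝ) + 1 := by
    have h1 : ((⌊Δ⌋.toNat : ℕ) : ℝ) = (⌊Δ⌋ : ℝ) := by
      exact_mod_cast Int.toNat_of_nonneg hfl0
    rw [hk]
    push_cast
    rw [h1]
  have hkpos : 0 < k := Nat.succ_pos _
  have hΔk : Δ < (k : ℝ) := by
    rw [hkr]; exact Int.lt_floor_add_one Δ
  -- counting bound
  have hcard : 𝒜.card ≤ k * n.choose (n / 2) := by
    refine LO_count_bound hkpos w (fun i => hx i) (2 * Δ / k) (c - Δ) ?_ ?_ 𝒜 ?_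
    · rw [div_lt_iff₀ (by positivity)]
      linarith
    · positivity
    · intro S hS
      rw [h𝒜, Finset.mem_filter] at hS
      have : c - Δ + 2 * Δ / k * k = c + Δ := by
        field_simp
        ring
      rw [this]
      exact hS.2
  -- conclude
  have htop : ((𝒜.card : ENNReal) * (1/2) ^ n) ≠ ⊤ := by
    apply ENNReal.mul_ne_top (ENNReal.natCast_ne_top _)
    exact ENNReal.pow_ne_top (by norm_num)
  calc (μ {ω | ∑ i, ε i ω * x i ∈ Set.Icc (c - Δ) (c + Δ)}).toReal
      ≤ ((𝒜.card : ENNReal) * (1/2) ^ n).toReal := ENNReal.toReal_mono htop hmeasure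
  _ = (𝒜.card : ℝ) * (1/2) ^ n := by
      rw [ENNReal.toReal_mul, ENNReal.toReal_pow]
      norm_num
  _ ≤ ((k : ℝ) * (n.choose (n / 2) : ℝ)) * (1/2) ^ n := by
      have h1 : (𝒜.card : ℝ) ≤ (k : ℝ) * (n.choose (n / 2) : ℝ) := by
        exact_mod_cast hcard
      have h2 : (0:ℝ) ≤ (1/2) ^ n := by positivity
      exact mul_le_mul_of_nonneg_right h1 h2
  _ = ((⌊Δ⌋ : ℝ) + 1) * (n.choose (n / 2) : ℝ) / 2 ^ n := by
      rw [hkr, one_div, inv_pow, div_eq_mul_inv]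
end

section
/- Let x_1, …, x_n be real numbers with |x_i| ≥ 1 for all i, and let ε_1, …, ε_n be i.i.d. Rademacher random variables. Then for every Δ > 0 and every closed interval B of radius Δ (i.e., of length 2Δ), P(ε_1 x_1 + ⋯ + ε_n x_n ∈ B) ≤ C_LO · (⌊Δ⌋ + 1) / √n, where C_LO = 2√2·e/π. -/
open MeasureTheory ProbabilityTheory

open scoped ENNReal


section LOaux
namespace LOaux
open Real Stirling Nat


lemma stirling_ub {n : ℕ} (hn : 1 ≤ n) : stirlingSeq n ≤ exp 1 / Real.sqrt 2 := by
  obtain ⟨m, rfl⟩ := Nat.exists_eq_add_of_le hn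
  have := stirlingSeq'_antitone (Nat.zero_le m)
  simpa [stirlingSeq_one, Function.comp, Nat.add_comm] using this

lemma stirling_lb {n : ℕ} (hn : 1 ≤ n) : Real.sqrt π ≤ stirlingSeq n := by
  obtain ⟨m, rfl⟩ := Nat.exists_eq_add_of_le hn
  have h : Filter.Tendsto (stirlingSeq ∘ Nat.succ) Filter.atTop (nhds (Real.sqrt π)) :=
    tendsto_stirlingSeq_sqrt_pi.comp (Filter.tendsto_add_atTop_nat 1)
  simpa [Function.comp, Nat.add_comm] using stirlingSeq'_antitone.le_of_tendsto h m

lemma stirling_eq {n : ℕ} (hn : 1 ≤ n) :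
    (n ! : ℝ) = stirlingSeq n * (Real.sqrt (2 * n) * (n / exp 1) ^ n) := by
  rw [stirlingSeq, div_mul_cancel₀]
  have : (0:ℝ) < n := by exact_mod_cast hn
  positivity

lemma centralBinom_bound {m : ℕ} (hm : 1 ≤ m) :
    ((2 * m).choose m : ℝ) ≤ exp 1 / (π * Real.sqrt 2) * (4 ^ m / Real.sqrt m) := by
  have hm' : (0:ℝ) < m := by exact_mod_cast hm
  have h1 : ((2 * m).choose m : ℝ) = (2 * m)! / (m ! * m !) := by
    rw [Nat.cast_choose ℝ (by omega), two_mul, Nat.add_sub_cancel]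
  have e2 : ((2*m)! : ℝ) = stirlingSeq (2*m) * (Real.sqrt (2 * (2*m)) * ((2*m) / exp 1) ^ (2*m)) :=
    by exact_mod_cast stirling_eq (n := 2*m) (by omega)
  have e1 : (m ! : ℝ) = stirlingSeq m * (Real.sqrt (2 * m) * (m / exp 1) ^ m) :=
    stirling_eq hm
  have hπ : Real.sqrt π ≤ stirlingSeq m := stirling_lb hm
  have hub : stirlingSeq (2*m) ≤ exp 1 / Real.sqrt 2 := stirling_ub (by omega)
  have hsπ : (0:ℝ) < Real.sqrt π := Real.sqrt_pos.2 pi_pos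
  have hB : (0:ℝ) < stirlingSeq m := hsπ.trans_le hπ
  have hπ2 : π ≤ stirlingSeq m ^ 2 := by
    calc π = Real.sqrt π ^ 2 := by rw [Real.sq_sqrt pi_pos.le]
    _ ≤ stirlingSeq m ^ 2 := by apply pow_le_pow_left₀ hsπ.le hπ
  have s1 : Real.sqrt (2 * (2*m)) = 2 * Real.sqrt m := by
    rw [show (2:ℝ) * (2*(m:ℝ)) = 4 * m by ring, Real.sqrt_mul (by norm_num),
      show (4:ℝ) = 2^2 by norm_num, Real.sqrt_sq (by norm_num)]
  have s2 : Real.sqrt (2 * m) = Real.sqrt 2 * Real.sqrt m := Real.sqrt_mul (by norm_num) _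
  have p1 : (2 * (m:ℝ) / exp 1) ^ (2*m) = 4 ^ m * ((m / exp 1) ^ m)^2 := by
    rw [mul_comm 2 m, pow_mul, show (2*(m:ℝ)/exp 1) = 2 * ((m:ℝ)/exp 1) by ring,
      mul_pow, mul_pow, ← pow_mul, mul_comm m 2, pow_mul]
    norm_num
  have hq : (0:ℝ) < ((m:ℝ) / exp 1) ^ m := by positivity
  have hsm : (0:ℝ) < Real.sqrt m := Real.sqrt_pos.2 hm'
  have hrat : ((2*m).choose m : ℝ)
      = stirlingSeq (2*m) / stirlingSeq m ^ 2 * (4 ^ m / Real.sqrt m) := by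
    rw [h1, e1, e2, s1, s2]
    push_cast
    rw [p1]
    field_simp
    ring_nf
    rw [Real.sq_sqrt (by norm_num : (0:ℝ) ≤ 2)]
  rw [hrat]
  apply mul_le_mul_of_nonneg_right _ (by positivity)
  calc stirlingSeq (2*m) / stirlingSeq m ^ 2 ≤ (exp 1 / Real.sqrt 2) / π :=
        div_le_div₀ (by positivity) hub pi_pos hπ2
  _ = exp 1 / (π * Real.sqrt 2) := by rw [div_div, mul_comm]


lemma choose_half_bound {n : ℕ} (hn : 1 ≤ n) :
    (n.choose (n / 2) : ℝ) ≤ 2 * Real.sqrt 2 * exp 1 / π * 2 ^ n / Real.sqrt n := by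
  have hs2 : (1:ℝ) ≤ Real.sqrt 2 := by
    rw [show (1:ℝ) = Real.sqrt 1 by simp]
    exact Real.sqrt_le_sqrt (by norm_num)
  have hss : Real.sqrt 2 * Real.sqrt 2 = 2 := Real.mul_self_sqrt (by norm_num)
  have hs2le : Real.sqrt 2 ≤ 2 := by nlinarith
  have he : (2.7:ℝ) ≤ exp 1 := by
    have := Real.exp_one_gt_d9; linarith
  have hπ : π ≤ 3.15 := by linarith [Real.pi_lt_d2]
  have hexp : (0:ℝ) < exp 1 := Real.exp_pos 1
  rcases Nat.lt_or_ge n 2 with h2 | h2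
  · -- n = 1
    interval_cases n
    norm_num [Nat.choose]
    rw [div_mul_eq_mul_div, le_div_iff₀ Real.pi_pos]
    nlinarith
  rcases Nat.even_or_odd n with ⟨m, rfl⟩ | ⟨m, rfl⟩
  · have hm : 1 ≤ m := by omega
    have hm' : (1:ℝ) ≤ m := by exact_mod_cast hm
    have h := centralBinom_bound hm
    have hn2 : (m + m) / 2 = m := by omega
    rw [hn2, show m + m = 2 * m by ring]
    refine h.trans ?_
    have hsm : (0:ℝ) < Real.sqrt m := Real.sqrt_pos.2 (by linarith)
    have hs2m : Real.sqrt (2*m : ℕ) = Real.sqrt 2 * Real.sqrt m := by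
      push_cast; exact Real.sqrt_mul (by norm_num) _
    rw [show ((2:ℝ))^(2*m) = 4^m by rw [pow_mul]; norm_num, hs2m]
    have h4 : (0:ℝ) < 4^m := by positivity
    rw [_root_.div_mul_div_comm, div_mul_eq_mul_div, div_div,
      div_le_div_iff₀ (by positivity) (by positivity)]
    nlinarith [mul_pos (mul_pos hexp h4) (mul_pos Real.pi_pos hsm),
      mul_pos (mul_pos (mul_pos hexp h4) (mul_pos Real.pi_pos hsm)) (Real.sqrt_pos.2 (by norm_num : (0:ℝ) < 2))]
  · -- n = 2m+1
    have hm : 1 ≤ m := by omega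
    have hm' : (1:ℝ) ≤ m := by exact_mod_cast hm
    have hhalf : (2*m+1) / 2 = m := by omega
    have hpascal : (2*m+1).choose m ≤ 2 * ((2*m).choose m) := by
      rcases Nat.exists_eq_add_of_le hm with ⟨k, rfl⟩
      rw [show 2*(1+k)+1 = (2*(1+k)) + 1 by ring, show (1+k) = k + 1 by ring]
      rw [Nat.choose_succ_succ]
      have h1 : (2*(k+1)).choose k ≤ (2*(k+1)).choose ((2*(k+1))/2) := Nat.choose_le_middle _ _
      have h2 : (2*(k+1)).choose (k+1) ≤ (2*(k+1)).choose ((2*(k+1))/2) := Nat.choose_le_middle _ _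
      have h3 : (2*(k+1))/2 = k+1 := by omega
      rw [h3] at h1 h2
      simp only [Nat.succ_eq_add_one] at *
      omega
    rw [hhalf]
    have h := centralBinom_bound hm
    have step1 : ((2*m+1).choose m : ℝ) ≤ 2 * (exp 1 / (π * Real.sqrt 2) * (4 ^ m / Real.sqrt m)) := by
      calc ((2*m+1).choose m : ℝ) ≤ 2 * ((2*m).choose m : ℝ) := by exact_mod_cast hpascal
      _ ≤ _ := by linarith
    refine step1.trans ?_
    have hsm : (0:ℝ) < Real.sqrt m := Real.sqrt_pos.2 (by linarith)
    have hsn : (0:ℝ) < Real.sqrt (2*m+1 : ℕ) := Real.sqrt_pos.2 (by push_cast; linarith)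
    have hpow : ((2:ℝ))^(2*m+1) = 2 * 4^m := by rw [pow_succ, pow_mul]; norm_num; ring
    rw [hpow]
    have hkey : Real.sqrt (2*m+1 : ℕ) ≤ 4 * Real.sqrt m := by
      rw [show (4:ℝ) * Real.sqrt m = Real.sqrt (16 * m) by
        rw [Real.sqrt_mul (by norm_num), show (16:ℝ) = 4^2 by norm_num, Real.sqrt_sq (by norm_num)]]
      apply Real.sqrt_le_sqrt
      push_cast
      linarith
    have h4 : (0:ℝ) < 4^m := by positivity
    calc 2 * (exp 1 / (π * Real.sqrt 2) * (4 ^ m / Real.sqrt m))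
        ≤ 2 * Real.sqrt 2 * exp 1 / π * (2 * 4 ^ m) / (4 * Real.sqrt m) := by
          rw [_root_.div_mul_div_comm, mul_div_assoc', div_mul_eq_mul_div, div_div,
            div_le_div_iff₀ (by positivity) (by positivity)]
          nlinarith [mul_pos (mul_pos hexp h4) (mul_pos Real.pi_pos hsm),
            mul_pos (mul_pos (mul_pos hexp h4) (mul_pos Real.pi_pos hsm)) (Real.sqrt_pos.2 (by norm_num : (0:ℝ) < 2))]
      _ ≤ 2 * Real.sqrt 2 * exp 1 / π * (2 * 4 ^ m) / Real.sqrt (2*m+1 : ℕ) := by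
          gcongr

end LOaux
end LOaux

section LOaux2
open scoped ENNReal
open Finset


lemma comb_bound {n : ℕ} (y : Fin n → ℝ) (hy : ∀ i, 1 ≤ y i) (a Δ : ℝ) (hΔ : 0 < Δ)
    [DecidablePred fun A : Finset (Fin n) => (∑ i ∈ A, y i) ∈ Set.Icc a (a + Δ)] :
    ((Finset.univ : Finset (Finset (Fin n))).filter
      (fun A => (∑ i ∈ A, y i) ∈ Set.Icc a (a + Δ))).card
      ≤ (⌊Δ⌋.toNat + 1) * n.choose (n / 2) := by
  classical
  set F := (Finset.univ : Finset (Finset (Fin n))).filter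
      (fun A => (∑ i ∈ A, y i) ∈ Set.Icc a (a + Δ)) with hF
  have hmap : ∀ A ∈ F, ⌊(∑ i ∈ A, y i) - a⌋ ∈ Finset.Icc (0:ℤ) ⌊Δ⌋ := by
    intro A hA
    simp only [hF, mem_filter, Set.mem_Icc] at hA
    refine Finset.mem_Icc.2 ⟨Int.floor_nonneg.2 (by linarith [hA.2.1]), ?_⟩
    exact Int.floor_le_floor (by linarith [hA.2.2])
  rw [Finset.card_eq_sum_card_fiberwise hmap]
  have hbound : ∀ k ∈ Finset.Icc (0:ℤ) ⌊Δ⌋,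
      (F.filter (fun A => ⌊(∑ i ∈ A, y i) - a⌋ = k)).card ≤ n.choose (n / 2) := by
    intro k _
    have hanti : IsAntichain (· ⊆ ·)
        ((F.filter (fun A => ⌊(∑ i ∈ A, y i) - a⌋ = k)) : Set (Finset (Fin n))) := by
      intro A hA B hB hne hsub
      simp only [coe_filter, Set.mem_setOf_eq] at hA hB
      have hss : A ⊆ B := hsub
      have hne' : (B \ A).Nonempty := by
        rw [Finset.sdiff_nonempty]
        exact fun h => hne (Finset.Subset.antisymm hss h)
      have h1 : (1:ℝ) ≤ ∑ i ∈ B \ A, y i := by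
        calc (1:ℝ) = (1:ℕ) • (1:ℝ) := by simp
        _ ≤ ((B \ A).card) • (1:ℝ) := by
            apply nsmul_le_nsmul_left (by norm_num) (Finset.card_pos.2 hne')
        _ ≤ ∑ i ∈ B \ A, y i := Finset.card_nsmul_le_sum _ _ _ (fun i _ => hy i)
      have hsum : ∑ i ∈ B, y i = ∑ i ∈ A, y i + ∑ i ∈ B \ A, y i := by
        rw [add_comm, Finset.sum_sdiff hss]
      have hfA := hA.2
      have hfB := hB.2
      have l1 : ((k:ℝ)) ≤ (∑ i ∈ A, y i) - a := by
        rw [← hfA]; exact Int.floor_le _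
      have l2 : (∑ i ∈ B, y i) - a < (k:ℝ) + 1 := by
        rw [← hfB]; push_cast; exact Int.lt_floor_add_one _
      linarith
    simpa using IsAntichain.sperner hanti
  calc ∑ k ∈ Finset.Icc (0:ℤ) ⌊Δ⌋,
        (F.filter (fun A => ⌊(∑ i ∈ A, y i) - a⌋ = k)).card
      ≤ ∑ k ∈ Finset.Icc (0:ℤ) ⌊Δ⌋, n.choose (n / 2) := Finset.sum_le_sum hbound
  _ = (⌊Δ⌋.toNat + 1) * n.choose (n / 2) := by
      rw [Finset.sum_const, Int.card_Icc]
      have h0 : (0:ℤ) ≤ ⌊Δ⌋ := Int.floor_nonneg.2 hΔ.le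
      have : (⌊Δ⌋ + 1 - 0).toNat = ⌊Δ⌋.toNat + 1 := by omega
      rw [this, smul_eq_mul]
  _ ≤ (⌊Δ⌋.toNat + 1) * n.choose (n / 2) := le_rfl


lemma prob_bound {Ω : Type*} [MeasurableSpace Ω] (μ : Measure Ω) [IsProbabilityMeasure μ]
    {n : ℕ} (x : Fin n → ℝ) (ε : Fin n → Ω → ℝ) (hmeas : ∀ i, Measurable (ε i))
    (hIndep : iIndepFun ε μ)
    (hRad : ∀ i, μ {ω | ε i ω = 1} = 1 / 2 ∧ μ {ω | ε i ω = -1} = 1 / 2)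
    (B : Set ℝ)
    [DecidablePred fun b : Fin n → Bool => (∑ i, (if b i = true then x i else -x i)) ∈ B] :
    μ {ω | ∑ i, ε i ω * x i ∈ B} ≤
      (((Finset.univ : Finset (Fin n → Bool)).filter
        (fun b : Fin n → Bool => (∑ i, (if b i = true then x i else -x i)) ∈ B)).card : ℝ≥0∞) * (1/2)^n := by
  classical
  set N : Set Ω := ⋃ i, {ω | ε i ω ≠ 1 ∧ ε i ω ≠ -1} with hN
  have hNnull : μ N = 0 := by
    refine measure_iUnion_null fun i => ?_
    have h1 : MeasurableSet {ω | ε i ω = 1} := (hmeas i) (measurableSet_singleton 1)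
    have h2 : MeasurableSet {ω | ε i ω = -1} := (hmeas i) (measurableSet_singleton (-1))
    have hd : Disjoint {ω | ε i ω = 1} {ω | ε i ω = -1} := by
      rw [Set.disjoint_left]
      rintro ω (h : ε i ω = 1) (h' : ε i ω = -1)
      rw [h] at h'; norm_num at h'
    have hu : μ ({ω | ε i ω = 1} ∪ {ω | ε i ω = -1}) = 1 := by
      rw [measure_union hd h2, (hRad i).1, (hRad i).2]
      rw [ENNReal.div_add_div_same, show (1:ℝ≥0∞)+1 = 2 from one_add_one_eq_two,
        ENNReal.div_self (by norm_num) ENNReal.ofNat_ne_top]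
    have : {ω | ε i ω ≠ 1 ∧ ε i ω ≠ -1} = ({ω | ε i ω = 1} ∪ {ω | ε i ω = -1})ᶜ := by
      ext ω; simp [not_or]
    rw [this, measure_compl (h1.union h2) (measure_ne_top μ _), hu, measure_univ, tsub_self]
  -- atoms
  set v : Bool → ℝ := fun b => if b then 1 else -1 with hv
  set atom : (Fin n → Bool) → Set Ω := fun b => ⋂ i, ε i ⁻¹' {v (b i)} with hatom
  have hatom_meas : ∀ b, μ (atom b) = (1/2)^n := by
    intro b
    rw [hatom]
    rw [hIndep.meas_iInter (fun i => ⟨{v (b i)}, measurableSet_singleton _, rfl⟩)]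
    have : ∀ i, μ (ε i ⁻¹' {v (b i)}) = 1/2 := by
      intro i
      cases hb : b i <;> simp only [hv, hb, if_true, if_false]
      · exact (hRad i).2
      · exact (hRad i).1
    simp only [this]
    simp [Finset.prod_const]
  -- covering
  have hcover : {ω | ∑ i, ε i ω * x i ∈ B} ⊆
      (⋃ b ∈ (Finset.univ : Finset (Fin n → Bool)).filter
        (fun b : Fin n → Bool => (∑ i, (if b i = true then x i else -x i)) ∈ B), atom b) ∪ N := by
    intro ω hω
    by_cases hG : ω ∈ N
    · exact Or.inr hG
    · left
      simp only [hN, Set.mem_iUnion, Set.mem_setOf_eq, not_exists, not_and, not_not] at hG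
      set b : Fin n → Bool := fun i => decide (ε i ω = 1) with hb
      have hval : ∀ i, ε i ω = v (b i) := by
        intro i
        by_cases h1 : ε i ω = 1
        · simp [hb, hv, h1]
        · have h2 : ε i ω = -1 := hG i h1
          simp only [hb, hv, h1, h2, decide_eq_true_eq]
          norm_num
      refine Set.mem_iUnion₂.2 ⟨b, ?_, ?_⟩
      · simp only [Finset.mem_filter, Finset.mem_univ, true_and]
        have : ∑ i, (if b i = true then x i else -x i) = ∑ i, ε i ω * x i := by
          refine Finset.sum_congr rfl fun i _ => ?_
          rw [hval i]
          cases hbi : b i <;> simp [hv]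
        rw [this]
        exact hω
      · exact Set.mem_iInter.2 fun i => by simp [hval i]
  calc μ {ω | ∑ i, ε i ω * x i ∈ B}
      ≤ μ ((⋃ b ∈ (Finset.univ : Finset (Fin n → Bool)).filter
        (fun b : Fin n → Bool => (∑ i, (if b i = true then x i else -x i)) ∈ B), atom b) ∪ N) := measure_mono hcover
    _ ≤ μ (⋃ b ∈ (Finset.univ : Finset (Fin n → Bool)).filter
        (fun b : Fin n → Bool => (∑ i, (if b i = true then x i else -x i)) ∈ B), atom b) + μ N := measure_union_le _ _
    _ ≤ (∑ b ∈ (Finset.univ : Finset (Fin n → Bool)).filter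
        (fun b : Fin n → Bool => (∑ i, (if b i = true then x i else -x i)) ∈ B), μ (atom b)) + 0 := by
        rw [hNnull]
        gcongr
        exact measure_biUnion_finset_le _ _
    _ = _ := by
        rw [add_zero]
        simp only [hatom_meas]
        rw [Finset.sum_const, nsmul_eq_mul]

end LOaux2


/-- **Littlewood–Offord bound with explicit constant.** If `|x i| ≥ 1` for all
`i` and `ε_1,…,ε_n` (with `n ≥ 1`) are i.i.d. Rademacher random variables, then for every
`Δ > 0` and every closed interval of radius `Δ` (written `[c−Δ, c+Δ]`),
`P(∑ ε_i x_i ∈ [c−Δ, c+Δ]) ≤ C_LO (⌊Δ⌋+1) / √n`, where `C_LO = 2√2·e/π`. -/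
theorem littlewood_offord_constant
    {Ω : Type*} [MeasurableSpace Ω] (μ : Measure Ω) [IsProbabilityMeasure μ]
    (n : ℕ) (hn : 0 < n) (x : Fin n → ℝ) (hx : ∀ i, 1 ≤ |x i|)
    (ε : Fin n → Ω → ℝ) (hmeas : ∀ i, Measurable (ε i))
    (hIndep : iIndepFun ε μ)
    (hRad : ∀ i, μ {ω | ε i ω = 1} = 1 / 2 ∧ μ {ω | ε i ω = -1} = 1 / 2)
    (Δ : ℝ) (hΔ : 0 < Δ) (c : ℝ) :
    (μ {ω | ∑ i, ε i ω * x i ∈ Set.Icc (c - Δ) (c + Δ)}).toReal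
      ≤ (2 * Real.sqrt 2 * Real.exp 1 / Real.pi) * ((⌊Δ⌋ : ℝ) + 1) / Real.sqrt n := by
  classical
  set B : Set ℝ := Set.Icc (c - Δ) (c + Δ) with hB
  set T : ℝ := ∑ i, |x i| with hT
  set a : ℝ := (c - Δ + T) / 2 with ha
  set G := (Finset.univ : Finset (Fin n → Bool)).filter
      (fun b : Fin n → Bool => (∑ i, (if b i = true then x i else -x i)) ∈ B) with hG
  set F := (Finset.univ : Finset (Finset (Fin n))).filter
      (fun A => (∑ i ∈ A, |x i|) ∈ Set.Icc a (a + Δ)) with hF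
  set Abl : (Fin n → Bool) → Finset (Fin n) :=
      fun b => Finset.univ.filter (fun i => b i = decide (0 < x i)) with hAbl
  have hsum_eq : ∀ b : Fin n → Bool,
      (∑ i, (if b i = true then x i else -x i))
        = 2 * (∑ i ∈ Abl b, |x i|) - T := by
    intro b
    have hptwise : ∀ i : Fin n, (if b i = true then x i else -x i)
        = (if b i = decide (0 < x i) then |x i| else -|x i|) := by
      intro i
      have hne : x i ≠ 0 := by
        intro h; have := hx i; rw [h] at this; norm_num at this
      rcases lt_or_gt_of_ne hne with hlt | hgt
      · have : ¬ (0 < x i) := by linarith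
        cases hbi : b i <;> simp [hbi, this, abs_of_neg hlt]
      · have : (0 < x i) := hgt
        cases hbi : b i <;> simp [hbi, this, abs_of_pos hgt]
    rw [Finset.sum_congr rfl (fun i _ => hptwise i)]
    rw [Finset.sum_ite]
    have hsplit : ∑ i ∈ Finset.univ.filter (fun i => ¬ (b i = decide (0 < x i))), |x i|
        = T - ∑ i ∈ Abl b, |x i| := by
      rw [hT, hAbl, eq_sub_iff_add_eq, add_comm]
      exact Finset.sum_filter_add_sum_filter_not _ _ _
    rw [Finset.sum_neg_distrib, hsplit]
    ring
  have hGF : G.card ≤ F.card := by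
    apply Finset.card_le_card_of_injOn Abl
    · intro b hb
      simp only [hG, Finset.mem_coe, Finset.mem_filter, Finset.mem_univ, true_and] at hb
      rw [hsum_eq b, hB] at hb
      obtain ⟨h1, h2⟩ := Set.mem_Icc.1 hb
      simp only [hF, Finset.mem_coe, Finset.mem_filter, Finset.mem_univ, true_and, Set.mem_Icc]
      constructor
      · rw [ha]; linarith
      · rw [ha]; linarith
    · intro b1 h1 b2 h2 heq
      funext i
      have hiff := Finset.ext_iff.1 heq i
      simp only [hAbl, Finset.mem_filter, Finset.mem_univ, true_and] at hiff
      cases hd : decide (0 < x i) <;> rw [hd] at hiff <;>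
        cases hb1 : b1 i <;> cases hb2 : b2 i <;> simp_all
  have hFcard : F.card ≤ (⌊Δ⌋.toNat + 1) * n.choose (n / 2) :=
    comb_bound (fun i => |x i|) hx a Δ hΔ
  have hprob := prob_bound μ x ε hmeas hIndep hRad B
  have hRHSne : ((G.card : ℝ≥0∞) * (1/2)^n) ≠ ⊤ := by
    apply ENNReal.mul_ne_top (ENNReal.natCast_ne_top _)
    apply ENNReal.pow_ne_top
    simp [ENNReal.div_eq_inv_mul]
  have h2 : (μ {ω | ∑ i, ε i ω * x i ∈ B}).toReal ≤ (G.card : ℝ) * (1/2)^n := by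
    have h3 := ENNReal.toReal_mono hRHSne hprob
    rwa [ENNReal.toReal_mul, ENNReal.toReal_pow, ENNReal.toReal_natCast,
      ENNReal.toReal_div, ENNReal.toReal_one, ENNReal.toReal_ofNat] at h3
  refine h2.trans ?_
  have hchoose := LOaux.choose_half_bound (n := n) hn
  have hfloor : ((⌊Δ⌋.toNat : ℝ)) = (⌊Δ⌋ : ℝ) := by
    have : (0:ℤ) ≤ ⌊Δ⌋ := Int.floor_nonneg.2 hΔ.le
    exact_mod_cast Int.toNat_of_nonneg this
  have hsn : (0:ℝ) < Real.sqrt n := Real.sqrt_pos.2 (by exact_mod_cast hn)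
  have hGr : (G.card : ℝ) ≤ ((⌊Δ⌋ : ℝ) + 1) * (n.choose (n / 2) : ℝ) := by
    calc (G.card : ℝ) ≤ (F.card : ℝ) := by exact_mod_cast hGF
    _ ≤ ((⌊Δ⌋.toNat + 1) * n.choose (n / 2) : ℕ) := by exact_mod_cast hFcard
    _ = ((⌊Δ⌋ : ℝ) + 1) * (n.choose (n / 2) : ℝ) := by push_cast [hfloor]; ring
  have hfl0 : (0:ℝ) ≤ (⌊Δ⌋ : ℝ) := by
    have : (0:ℤ) ≤ ⌊Δ⌋ := Int.floor_nonneg.2 hΔ.le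
    exact_mod_cast this
  calc (G.card : ℝ) * (1/2)^n
      ≤ (((⌊Δ⌋ : ℝ) + 1) * (n.choose (n / 2) : ℝ)) * (1/2)^n := by
        apply mul_le_mul_of_nonneg_right hGr (by positivity)
    _ ≤ (((⌊Δ⌋ : ℝ) + 1) * (2 * Real.sqrt 2 * Real.exp 1 / Real.pi * 2 ^ n / Real.sqrt n)) * (1/2)^n := by
        apply mul_le_mul_of_nonneg_right _ (by positivity)
        apply mul_le_mul_of_nonneg_left hchoose (by linarith)
    _ = (2 * Real.sqrt 2 * Real.exp 1 / Real.pi) * ((⌊Δ⌋ : ℝ) + 1) / Real.sqrt n := by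
        rw [show ((1:ℝ)/2)^n = (2^n)⁻¹ by rw [one_div, inv_pow]]
        field_simp
end

section
/- Let α ∈ (0,1) and let t > 0 be real. Then for every real x with 0 < x < t, α^x · (1−α)^{t−x} / (x^x · (t−x)^{t−x}) ≤ t^{−t}; that is, the function f(x) = α^x (1−α)^{t−x} x^{−x} (t−x)^{−(t−x)} attains its maximum value t^{−t} at x = αt. -/
/-- For `α ∈ (0,1)` and real `t > 0`, the function
`f(x) = α^x (1−α)^{t−x} x^{−x} (t−x)^{−(t−x)}` on `(0,t)` is bounded by `t^{−t}`,
and attains this maximum value at `x = αt`. (All powers are real powers.) -/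
theorem entropy_ratio_max
    (α t : ℝ) (hα : α ∈ Set.Ioo (0 : ℝ) 1) (ht : 0 < t) :
    (∀ x : ℝ, 0 < x → x < t →
        α ^ x * (1 - α) ^ (t - x) / (x ^ x * (t - x) ^ (t - x)) ≤ t ^ (-t)) ∧
      α ^ (α * t) * (1 - α) ^ (t - α * t)
          / ((α * t) ^ (α * t) * (t - α * t) ^ (t - α * t)) = t ^ (-t) := by
  obtain ⟨hα0, hα1⟩ := hα
  have h1α : (0:ℝ) < 1 - α := by linarith
  have hT : (0:ℝ) < t ^ t := Real.rpow_pos_of_pos ht t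
  constructor
  · intro x hx hxt
    have htx : (0:ℝ) < t - x := by linarith
    have hB : (0:ℝ) < x ^ x * (t - x) ^ (t - x) :=
      mul_pos (Real.rpow_pos_of_pos hx x) (Real.rpow_pos_of_pos htx (t - x))
    have key : (α * t / x) ^ (x / t) * ((1 - α) * t / (t - x)) ^ ((t - x) / t) ≤ 1 := by
      have h := Real.geom_mean_le_arith_mean2_weighted
        (w₁ := x / t) (w₂ := (t - x) / t) (p₁ := α * t / x) (p₂ := (1 - α) * t / (t - x))
        (by positivity) (by positivity) (by positivity) (by positivity)
        (by field_simp; ring)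
      calc (α * t / x) ^ (x / t) * ((1 - α) * t / (t - x)) ^ ((t - x) / t)
          ≤ x / t * (α * t / x) + (t - x) / t * ((1 - α) * t / (t - x)) := h
        _ = 1 := by field_simp; ring
    have key' : (α * t / x) ^ x * ((1 - α) * t / (t - x)) ^ (t - x) ≤ 1 := by
      have h := Real.rpow_le_rpow (by positivity) key ht.le
      rw [Real.one_rpow, Real.mul_rpow (by positivity) (by positivity),
        ← Real.rpow_mul (by positivity), ← Real.rpow_mul (by positivity),
        div_mul_cancel₀ _ ht.ne', div_mul_cancel₀ _ ht.ne'] at h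
      exact h
    have key2 : α ^ x * (1 - α) ^ (t - x) * t ^ t ≤ x ^ x * (t - x) ^ (t - x) := by
      have e : (α * t / x) ^ x * ((1 - α) * t / (t - x)) ^ (t - x)
          = α ^ x * (1 - α) ^ (t - x) * t ^ t / (x ^ x * (t - x) ^ (t - x)) := by
        rw [Real.div_rpow (by positivity) hx.le, Real.div_rpow (by positivity) htx.le,
          Real.mul_rpow hα0.le ht.le, Real.mul_rpow h1α.le ht.le]
        have htt : t ^ t = t ^ x * t ^ (t - x) := by
          rw [← Real.rpow_add ht]; ring_nf
        rw [htt]; field_simp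
      rw [e, div_le_one hB] at key'
      exact key'
    rw [Real.rpow_neg ht.le, div_le_iff₀ hB, inv_mul_eq_div, le_div_iff₀ hT]
    exact key2
  · have h1 : t - α * t = (1 - α) * t := by ring
    rw [h1, Real.mul_rpow hα0.le ht.le, Real.mul_rpow h1α.le ht.le, Real.rpow_neg ht.le]
    have htt : t ^ (α * t) * t ^ ((1 - α) * t) = t ^ t := by
      rw [← Real.rpow_add ht]; ring_nf
    have hαp := Real.rpow_pos_of_pos hα0 (α * t)
    have h1αp := Real.rpow_pos_of_pos h1α ((1 - α) * t)
    have htαp := Real.rpow_pos_of_pos ht (α * t)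
    have ht1αp := Real.rpow_pos_of_pos ht ((1 - α) * t)
    field_simp
    have htt' : t ^ (α * t) * t ^ (t * (1 - α)) = t ^ t := by rw [mul_comm t (1 - α)]; exact htt
    nlinarith [htt, htt', mul_pos hαp h1αp]
end

section
/- In the setting below: Σ_{t=1}^T |d_t| · P( Σ_{τ=1}^{t−1} ε_τ d_τ ≥ −Σ_{τ=1}^{t−1} d_τ and Σ_{τ=1}^{t} ε_τ d_τ ≤ −Σ_{τ=1}^{t} d_τ ) ≤ 20 · C_LO · √( T · log₂(4 · log₂ T) ), where C_LO = 2√2·e/π. -/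
open MeasureTheory ProbabilityTheory Finset
open scoped Classical ENNReal

-- Sperner on a sub-ground-set
lemma antichain_card_le {α : Type*} [DecidableEq α] (B : Finset α) (𝒜 : Finset (Finset α))
    (hsub : ∀ A ∈ 𝒜, A ⊆ B) (hac : IsAntichain (· ⊆ ·) (𝒜 : Set (Finset α))) :
    𝒜.card ≤ B.card.choose (B.card / 2) := by
  classical
  -- map to subsets of the subtype
  set F : Finset α → Finset {x // x ∈ B} := fun A => A.subtype (· ∈ B) with hF
  have hinj : Set.InjOn F 𝒜 := by
    intro A₁ h₁ A₂ h₂ he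
    ext x
    constructor
    · intro hx
      have hxB : x ∈ B := hsub _ h₁ hx
      have : (⟨x, hxB⟩ : {x // x ∈ B}) ∈ F A₁ := by simp [hF, hx]
      rw [he] at this
      simpa [hF] using this
    · intro hx
      have hxB : x ∈ B := hsub _ h₂ hx
      have : (⟨x, hxB⟩ : {x // x ∈ B}) ∈ F A₂ := by simp [hF, hx]
      rw [← he] at this
      simpa [hF] using this
  have himage : (𝒜.image F).card = 𝒜.card := Finset.card_image_of_injOn hinj
  have hac' : IsAntichain (· ⊆ ·) ((𝒜.image F : Finset (Finset {x // x ∈ B})) : Set (Finset {x // x ∈ B})) := by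
    intro F₁ h₁ F₂ h₂ hne hle
    simp only [Finset.coe_image, Set.mem_image, Finset.mem_coe] at h₁ h₂
    obtain ⟨A₁, hA₁, rfl⟩ := h₁
    obtain ⟨A₂, hA₂, rfl⟩ := h₂
    have hsub12 : A₁ ⊆ A₂ := by
      intro x hx
      have hxB : x ∈ B := hsub _ hA₁ hx
      have : (⟨x, hxB⟩ : {x // x ∈ B}) ∈ F A₁ := by simp [hF, hx]
      have := hle this
      simpa [hF] using this
    exact hac (Finset.mem_coe.2 hA₁) (Finset.mem_coe.2 hA₂)
      (fun h => hne (by rw [h])) hsub12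
  have := IsAntichain.sperner hac'
  rw [himage] at this
  simpa [Fintype.card_coe] using this

-- family with no chain-pair of gap ≥ 2
lemma card_le_two_mul_choose {α : Type*} [DecidableEq α] (B : Finset α) (𝒜 : Finset (Finset α))
    (hsub : ∀ A ∈ 𝒜, A ⊆ B)
    (hchain : ∀ A₁ ∈ 𝒜, ∀ A₂ ∈ 𝒜, A₁ ⊆ A₂ → (A₂ \ A₁).card ≤ 1) :
    𝒜.card ≤ 2 * B.card.choose (B.card / 2) := by
  classical
  set 𝒜₁ := 𝒜.filter (fun A => ∀ C ∈ 𝒜, C ⊆ A → C = A) with h𝒜₁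
  set 𝒜₂ := 𝒜.filter (fun A => ¬ ∀ C ∈ 𝒜, C ⊆ A → C = A) with h𝒜₂
  have hunion : 𝒜 = 𝒜₁ ∪ 𝒜₂ := by
    rw [h𝒜₁, h𝒜₂, Finset.filter_union_filter_not_eq]
  have hcard : 𝒜.card ≤ 𝒜₁.card + 𝒜₂.card := by
    rw [hunion]; exact Finset.card_union_le _ _
  have hac₁ : IsAntichain (· ⊆ ·) (𝒜₁ : Set (Finset α)) := by
    intro A₁ h₁ A₂ h₂ hne hle
    simp only [h𝒜₁, Finset.coe_filter, Set.mem_setOf_eq] at h₁ h₂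
    exact hne (h₂.2 A₁ h₁.1 hle)
  have hac₂ : IsAntichain (· ⊆ ·) (𝒜₂ : Set (Finset α)) := by
    intro A₁ h₁ A₂ h₂ hne hle
    simp only [h𝒜₂, Finset.coe_filter, Set.mem_setOf_eq, not_forall] at h₁ h₂
    obtain ⟨C, hC, hCsub, hCne⟩ := h₁.2
    have hCA₂ : C ⊆ A₂ := hCsub.trans hle
    have h2 := hchain C hC A₂ h₂.1 hCA₂
    have hClt : C.card < A₁.card := Finset.card_lt_card (ssubset_of_subset_of_ne hCsub hCne)
    have hA₁lt : A₁.card < A₂.card := Finset.card_lt_card (ssubset_of_subset_of_ne hle hne)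
    have : (A₂ \ C).card = A₂.card - C.card := Finset.card_sdiff_of_subset hCA₂
    omega
  have h₁le := antichain_card_le B 𝒜₁ (fun A hA => hsub A (Finset.filter_subset _ _ hA)) hac₁
  have h₂le := antichain_card_le B 𝒜₂ (fun A hA => hsub A (Finset.filter_subset _ _ hA)) hac₂
  omega

lemma count_interval_le {n : ℕ} (c : Fin n → ℝ) (r a b : ℝ) (hr : 0 < r) (hL : b - a ≤ 4*r)
    (B : Finset (Fin n)) (hB : ∀ i ∈ B, r < |c i|) : (Finset.univ.filter (fun σ : Fin n → Bool =>
        a ≤ ∑ i, (if σ i then c i else -c i) ∧ (∑ i, (if σ i then c i else -c i)) ≤ b)).card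
      ≤ 2^(n - B.card) * (2 * (B.card.choose (B.card / 2))) := by
  classical
  set f : (Fin n → Bool) → Fin n → ℝ := fun σ i => if σ i then c i else -c i with hf
  set S : (Fin n → Bool) → ℝ := fun σ => ∑ i, f σ i with hS
  set F : Finset (Fin n → Bool) := Finset.univ.filter (fun σ => a ≤ S σ ∧ S σ ≤ b) with hFdef
  set out : (Fin n → Bool) → (Fin n → Bool) := fun σ i => if i ∈ B then false else σ i with hout
  set Amap : (Fin n → Bool) → Finset (Fin n) := fun σ => B.filter (fun i => 0 < f σ i) with hAmap
  have hcne : ∀ i ∈ B, c i ≠ 0 := by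
    intro i hi h
    have := hB i hi
    rw [h, abs_zero] at this
    linarith
  have habsf : ∀ σ i, |f σ i| = |c i| := by
    intro σ i
    simp only [hf]
    split <;> simp [abs_neg]
  have hval : ∀ σ, ∀ i ∈ B, f σ i = if i ∈ Amap σ then |c i| else -|c i| := by
    intro σ i hi
    have habs := habsf σ i
    have hne : f σ i ≠ 0 := by
      intro h
      rw [h, abs_zero] at habs
      exact hcne i hi (abs_eq_zero.mp habs.symm)
    by_cases hpos : 0 < f σ i
    · rw [if_pos (by simp [hAmap, hi, hpos])]
      rw [← habs, abs_of_pos hpos]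
    · rw [if_neg (by simp [hAmap, hi, hpos])]
      push_neg at hpos
      have hneg : f σ i < 0 := lt_of_le_of_ne hpos hne
      rw [← habs, abs_of_neg hneg]; ring
  -- fiber bound
  have fiber_bound : ∀ ρ, (F.filter (fun σ => out σ = ρ)).card
      ≤ 2 * (B.card.choose (B.card / 2)) := by
    intro ρ
    set fib := F.filter (fun σ => out σ = ρ) with hfib
    have hinj : Set.InjOn Amap fib := by
      intro σ₁ h₁ σ₂ h₂ hAeq
      simp only [hfib, hFdef, Finset.mem_coe, Finset.mem_filter, Finset.mem_univ, true_and] at h₁ h₂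
      funext i
      by_cases hiB : i ∈ B
      · by_contra hne
        have hmem : (i ∈ Amap σ₁) = (i ∈ Amap σ₂) := by rw [hAeq]
        have hf12 : f σ₁ i = - f σ₂ i := by
          simp only [hf]
          cases hb1 : σ₁ i <;> cases hb2 : σ₂ i <;>
            simp [hb1, hb2] at hne ⊢
        have h1 : (0 < f σ₁ i) ↔ ¬ (0 < f σ₂ i) := by
          rw [hf12]
          constructor
          · intro h hh; linarith
          · intro h
            have : f σ₂ i ≠ 0 := by
              intro hz
              have := habsf σ₂ i
              rw [hz, abs_zero] at this
              exact hcne i hiB (abs_eq_zero.mp this.symm)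
            rcases lt_trichotomy (f σ₂ i) 0 with hlt | heq | hgt
            · linarith
            · exact absurd heq this
            · exact absurd hgt h
        simp only [hAmap, Finset.mem_filter, hiB, true_and] at hmem
        rw [hmem] at h1
        tauto
      · have e1 := congrFun h₁.2 i
        have e2 := congrFun h₂.2 i
        simp only [hout, if_neg hiB] at e1 e2
        rw [e1, e2]
    have hcardim : fib.card = (fib.image Amap).card :=
      (Finset.card_image_of_injOn hinj).symm
    rw [hcardim]
    apply card_le_two_mul_choose B
    · intro A hA
      simp only [Finset.mem_image] at hA
      obtain ⟨σ, _, rfl⟩ := hA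
      exact Finset.filter_subset _ _
    · -- chain condition
      intro A₁ hA₁ A₂ hA₂ hle
      simp only [Finset.mem_image] at hA₁ hA₂
      obtain ⟨σ₁, hσ₁, rfl⟩ := hA₁
      obtain ⟨σ₂, hσ₂, rfl⟩ := hA₂
      simp only [hfib, hFdef, Finset.mem_filter, Finset.mem_univ, true_and] at hσ₁ hσ₂
      by_contra hcard
      push_neg at hcard
      have hcard2 : 2 ≤ (Amap σ₂ \ Amap σ₁).card := hcard
      -- S σ₂ - S σ₁ = 2 * ∑_{i ∈ A₂ \ A₁} |c i|
      have hoff : ∀ i ∉ B, f σ₂ i = f σ₁ i := by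
        intro i hiB
        have e1 := congrFun hσ₁.2 i
        have e2 := congrFun hσ₂.2 i
        simp only [hout, if_neg hiB] at e1 e2
        simp only [hf]
        rw [e1, e2]
      have hdiff : S σ₂ - S σ₁ = ∑ i ∈ B, (f σ₂ i - f σ₁ i) := by
        rw [hS, ← Finset.sum_sub_distrib]
        exact (Finset.sum_subset (Finset.subset_univ B)
          (fun x _ hx => by rw [hoff x hx]; ring)).symm
      have hterm : ∀ i ∈ B, f σ₂ i - f σ₁ i
          = if i ∈ Amap σ₂ \ Amap σ₁ then 2 * |c i| else 0 := by
        intro i hi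
        rw [hval σ₁ i hi, hval σ₂ i hi]
        by_cases h1 : i ∈ Amap σ₁
        · have h2 : i ∈ Amap σ₂ := hle h1
          simp [h1, h2, Finset.mem_sdiff]
        · by_cases h2 : i ∈ Amap σ₂
          · simp [h1, h2, Finset.mem_sdiff]; ring
          · simp [h1, h2, Finset.mem_sdiff]
      have hdiff2 : S σ₂ - S σ₁ = ∑ i ∈ Amap σ₂ \ Amap σ₁, 2 * |c i| := by
        rw [hdiff, Finset.sum_congr rfl hterm, Finset.sum_ite_mem]
        congr 1
        rw [Finset.inter_eq_right]
        exact (Finset.sdiff_subset).trans (Finset.filter_subset _ _)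
      have hsumlt : 2 * r * (Amap σ₂ \ Amap σ₁).card < ∑ i ∈ Amap σ₂ \ Amap σ₁, 2 * |c i| := by
        have hne : (Amap σ₂ \ Amap σ₁).Nonempty := by
          rw [← Finset.card_pos]; omega
        calc 2 * r * (Amap σ₂ \ Amap σ₁).card
            = ∑ _i ∈ Amap σ₂ \ Amap σ₁, 2 * r := by
              rw [Finset.sum_const, nsmul_eq_mul]; ring
          _ < ∑ i ∈ Amap σ₂ \ Amap σ₁, 2 * |c i| := by
              apply Finset.sum_lt_sum_of_nonempty hne
              intro i hi
              have hiB : i ∈ B := (Finset.sdiff_subset.trans (Finset.filter_subset _ _)) hi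
              have := hB i hiB
              linarith
      have hba : S σ₂ - S σ₁ ≤ b - a := by
        linarith [hσ₁.1.2, hσ₂.1.1, hσ₁.1.1, hσ₂.1.2]
      have hcast : (2:ℝ) ≤ ((Amap σ₂ \ Amap σ₁).card : ℝ) := by exact_mod_cast hcard2
      nlinarith [hdiff2, hsumlt, hba, hL, hr]
  -- total
  have hFcount : F.card = ∑ ρ ∈ F.image out, (F.filter (fun σ => out σ = ρ)).card :=
    Finset.card_eq_sum_card_image out F
  have himcard : (F.image out).card ≤ 2^(n - B.card) := by
    have hsub2 : F.image out ⊆ Fintype.piFinset (fun i => if i ∈ B then {false} else Finset.univ) := by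
      intro ρ hρ
      simp only [Finset.mem_image] at hρ
      obtain ⟨σ, _, rfl⟩ := hρ
      rw [Fintype.mem_piFinset]
      intro i
      by_cases hiB : i ∈ B <;> simp [hout, hiB]
    calc (F.image out).card ≤ _ := Finset.card_le_card hsub2
      _ = ∏ i : Fin n, (if i ∈ B then ({false} : Finset Bool) else Finset.univ).card :=
          Fintype.card_piFinset _
      _ = 2^(n - B.card) := by
          rw [← Finset.prod_filter_mul_prod_filter_not Finset.univ (· ∈ B)]
          have h1 : ∀ i ∈ Finset.univ.filter (· ∈ B),
              (if i ∈ B then ({false} : Finset Bool) else Finset.univ).card = 1 := by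
            intro i hi
            simp only [Finset.mem_filter] at hi
            simp [hi.2]
          have h2 : ∀ i ∈ Finset.univ.filter (¬ · ∈ B),
              (if i ∈ B then ({false} : Finset Bool) else Finset.univ).card = 2 := by
            intro i hi
            simp only [Finset.mem_filter] at hi
            simp [hi.2]
          rw [Finset.prod_congr rfl h1, Finset.prod_congr rfl h2]
          simp only [Finset.prod_const, one_pow, one_mul]
          congr 1
          have : Finset.univ.filter (· ∈ B) = B := by
            ext i; simp
          rw [Finset.filter_not, this]
          rw [Finset.card_sdiff_of_subset (Finset.subset_univ B)]
          simp
  calc F.card = ∑ ρ ∈ F.image out, (F.filter (fun σ => out σ = ρ)).card := hFcount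
    _ ≤ ∑ _ρ ∈ F.image out, 2 * (B.card.choose (B.card / 2)) :=
        Finset.sum_le_sum (fun ρ _ => fiber_bound ρ)
    _ = (F.image out).card * (2 * (B.card.choose (B.card / 2))) := by
        rw [Finset.sum_const, smul_eq_mul]
    _ ≤ 2^(n - B.card) * (2 * (B.card.choose (B.card / 2))) := by
        apply Nat.mul_le_mul_right
        exact himcard

-- L1/L7: rank sum lemma
lemma sum_inv_sqrt_rank (B : Finset ℕ) :
    ∑ t ∈ B, 1 / Real.sqrt (((B.filter (· < t)).card : ℝ) + 1) ≤ 2 * Real.sqrt B.card := by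
  induction B using Finset.strongInduction with
  | _ B ih =>
    rcases B.eq_empty_or_nonempty with rfl | hne
    · simp
    · set M := B.max' hne with hM
      have hMB : M ∈ B := B.max'_mem hne
      have hsub : B.erase M ⊂ B := Finset.erase_ssubset hMB
      have key : ∀ t ∈ B.erase M, (B.filter (· < t)).card = ((B.erase M).filter (· < t)).card := by
        intro t ht
        congr 1
        ext s
        simp only [Finset.mem_filter, Finset.mem_erase]
        constructor
        · rintro ⟨hs, hst⟩
          refine ⟨⟨?_, hs⟩, hst⟩
          rintro rfl
          exact absurd (B.le_max' t (Finset.mem_of_mem_erase ht)) (not_le.2 hst)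
        · rintro ⟨⟨_, hs⟩, hst⟩; exact ⟨hs, hst⟩
      have hfM : B.filter (· < M) = B.erase M := by
        ext s
        simp only [Finset.mem_filter, Finset.mem_erase]
        constructor
        · rintro ⟨hs, hsM⟩; exact ⟨ne_of_lt hsM, hs⟩
        · rintro ⟨hne', hs⟩; exact ⟨hs, lt_of_le_of_ne (B.le_max' s hs) hne'⟩
      have hcard : (B.erase M).card = B.card - 1 := Finset.card_erase_of_mem hMB
      have hpos : 1 ≤ B.card := Finset.card_pos.2 hne
      rw [← Finset.sum_erase_add _ _ hMB]
      have h1 : ∑ t ∈ B.erase M, 1 / Real.sqrt (((B.filter (· < t)).card : ℝ) + 1)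
          = ∑ t ∈ B.erase M, 1 / Real.sqrt ((((B.erase M).filter (· < t)).card : ℝ) + 1) := by
        apply Finset.sum_congr rfl
        intro t ht; rw [key t ht]
      rw [h1, hfM, hcard]
      have h2 := ih (B.erase M) hsub
      rw [hcard] at h2
      set K := B.card
      have hK : (1:ℝ) ≤ K := by exact_mod_cast hpos
      have hcast : ((K - 1 : ℕ) : ℝ) = (K : ℝ) - 1 := by
        push_cast [Nat.cast_sub hpos]; ring
      rw [hcast] at h2 ⊢
      have ha := Real.sqrt_nonneg ((K:ℝ) - 1)
      have hb := Real.sqrt_nonneg (K:ℝ)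
      have ha2 : Real.sqrt ((K:ℝ)-1) ^ 2 = (K:ℝ) - 1 := Real.sq_sqrt (by linarith)
      have hb2 : Real.sqrt (K:ℝ) ^ 2 = (K:ℝ) := Real.sq_sqrt (by linarith)
      have hbpos : 0 < Real.sqrt (K:ℝ) := Real.sqrt_pos.2 (by linarith)
      have hstep : Real.sqrt ((K:ℝ) - 1 + 1) = Real.sqrt (K:ℝ) := by norm_num
      rw [hstep]
      have : 1 / Real.sqrt (K:ℝ) ≤ 2 * Real.sqrt (K:ℝ) - 2 * Real.sqrt ((K:ℝ)-1) := by
        rw [div_le_iff₀ hbpos]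
        nlinarith [sq_nonneg (Real.sqrt ((K:ℝ)-1) - Real.sqrt (K:ℝ))]
      linarith [h2]

lemma choose_pair_bound (k : ℕ) :
    ((2*k).choose k : ℝ) ≤ 2^(2*k) * Real.sqrt 2 / Real.sqrt (2*(k:ℝ)+1) ∧
    ((2*k+1).choose k : ℝ) ≤ 2^(2*k+1) * Real.sqrt 2 / Real.sqrt (2*(k:ℝ)+3) := by
  induction k with
  | zero =>
    have h2 : Real.sqrt 2 ^ 2 = 2 := Real.sq_sqrt (by norm_num)
    have h3 : Real.sqrt 3 ^ 2 = 3 := Real.sq_sqrt (by norm_num)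
    have h2n := Real.sqrt_nonneg 2
    have h3n := Real.sqrt_nonneg 3
    constructor
    · norm_num
    · norm_num
      rw [le_div_iff₀ (Real.sqrt_pos.2 (by norm_num : (0:ℝ) < 3))]
      nlinarith
  | succ k ih =>
    obtain ⟨ihA, ihB⟩ := ih
    have s3 : (0:ℝ) < Real.sqrt (2*(k:ℝ)+3) := Real.sqrt_pos.2 (by positivity)
    have s5 : (0:ℝ) < Real.sqrt (2*(k:ℝ)+5) := Real.sqrt_pos.2 (by positivity)
    have s3sq : Real.sqrt (2*(k:ℝ)+3) ^ 2 = 2*(k:ℝ)+3 := Real.sq_sqrt (by positivity)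
    have s5sq : Real.sqrt (2*(k:ℝ)+5) ^ 2 = 2*(k:ℝ)+5 := Real.sq_sqrt (by positivity)
    set a := Real.sqrt (2*(k:ℝ)+3)
    set b := Real.sqrt (2*(k:ℝ)+5)
    -- A_{k+1}: C(2k+2, k+1) = 2 * C(2k+1, k)
    have hsym : (2*k+1).choose (k+1) = (2*k+1).choose k := by
      have := Nat.choose_symm (show k+1 ≤ 2*k+1 by omega)
      have h2 : 2*k+1-(k+1) = k := by omega
      rw [h2] at this
      exact this.symm
    have hA_eq : ((2*k+2).choose (k+1) : ℕ) = 2 * (2*k+1).choose k := by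
      have h : 2*k+2 = (2*k+1)+1 := by ring
      rw [h, Nat.choose_succ_succ, hsym]; ring
    set C1 : ℝ := ((2*k+1).choose k : ℝ)
    set C2 : ℝ := ((2*k+2).choose (k+1) : ℝ)
    set C3 : ℝ := ((2*k+3).choose (k+1) : ℝ)
    have hC2 : C2 = 2 * C1 := by simp only [C2, C1, hA_eq]; push_cast; ring
    have hA : C2 ≤ 2^(2*k+2) * Real.sqrt 2 / a := by
      rw [hC2]
      calc 2 * C1 ≤ 2 * (2^(2*k+1) * Real.sqrt 2 / a) := by linarith [ihB]
        _ = 2^(2*k+2) * Real.sqrt 2 / a := by ring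
    have hA' : C2 * a ≤ 2^(2*k+2) * Real.sqrt 2 := by
      rw [le_div_iff₀ s3] at hA; exact hA
    -- ratio identity
    have hratio : C3 * ((k:ℝ)+2) = C2 * (2*(k:ℝ)+3) := by
      have hpascal : (2*k+3).choose (k+1) = (2*k+2).choose k + (2*k+2).choose (k+1) := by
        have h : 2*k+3 = (2*k+2)+1 := by ring
        rw [h, Nat.choose_succ_succ]
      have hrow := Nat.choose_succ_right_eq (2*k+2) k
      have hsub : 2*k+2-k = k+2 := by omega
      rw [hsub] at hrow
      have hrowR : ((2*k+2).choose (k+1) : ℝ) * ((k:ℝ)+1) = ((2*k+2).choose k : ℝ) * ((k:ℝ)+2) := by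
        exact_mod_cast hrow
      simp only [C3, C2, hpascal]
      push_cast
      nlinarith [hrowR]
    have hmul : a * b ≤ 2*(k:ℝ)+4 := by nlinarith [sq_nonneg (a - b)]
    have key : C2 * a * (a * b) ≤ (2^(2*k+2) * Real.sqrt 2) * (2*(k:ℝ)+4) :=
      mul_le_mul hA' hmul (by positivity) (by positivity)
    have key2 : C2 * (2*(k:ℝ)+3) * b ≤ 2^(2*k+2) * Real.sqrt 2 * (2*(k:ℝ)+4) := by
      have h : C2 * a * (a * b) = C2 * (a^2) * b := by ring
      rw [h, s3sq] at key
      exact key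
    have hkpos : (0:ℝ) < (k:ℝ)+2 := by positivity
    have hB3 : C3 * b ≤ 2^(2*k+3) * Real.sqrt 2 := by
      have h1 : C3 * b * ((k:ℝ)+2) ≤ 2^(2*k+3) * Real.sqrt 2 * ((k:ℝ)+2) := by
        have h2 : C3 * b * ((k:ℝ)+2) = C3 * ((k:ℝ)+2) * b := by ring
        rw [h2, hratio]
        calc C2 * (2*(k:ℝ)+3) * b ≤ 2^(2*k+2) * Real.sqrt 2 * (2*(k:ℝ)+4) := key2
          _ = 2^(2*k+3) * Real.sqrt 2 * ((k:ℝ)+2) := by ring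
      exact le_of_mul_le_mul_right h1 hkpos
    constructor
    · -- even: goal ((2*(k+1)).choose (k+1) : ℝ) ≤ 2^(2*(k+1)) * √2 / √(2*(k+1)+1)
      have e1 : 2*(k+1) = 2*k+2 := by ring
      have e2 : (2*((k:ℝ)+1)+1) = 2*(k:ℝ)+3 := by ring
      rw [e1]
      push_cast
      rw [e2]
      rw [le_div_iff₀ s3]
      exact hA'
    · have e1 : 2*(k+1)+1 = 2*k+3 := by ring
      have e2 : (2*((k:ℝ)+1)+3) = 2*(k:ℝ)+5 := by ring
      rw [e1]
      push_cast
      rw [e2]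
      rw [le_div_iff₀ s5]
      exact hB3

lemma choose_half_le (m : ℕ) :
    (m.choose (m/2) : ℝ) ≤ 2^m * Real.sqrt 2 / Real.sqrt ((m:ℝ)+1) := by
  rcases Nat.even_or_odd m with ⟨k, hk⟩ | ⟨k, hk⟩
  · subst hk
    have h := (choose_pair_bound k).1
    have e : (k+k)/2 = k := by omega
    have e2 : k+k = 2*k := by ring
    rw [e, e2]
    convert h using 3
    push_cast; ring
  · subst hk
    have h := (choose_pair_bound k).2
    have e : (2*k+1)/2 = k := by omega
    rw [e]
    calc ((2*k+1).choose k : ℝ) ≤ 2^(2*k+1) * Real.sqrt 2 / Real.sqrt (2*(k:ℝ)+3) := h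
      _ ≤ 2^(2*k+1) * Real.sqrt 2 / Real.sqrt (((2*k+1:ℕ):ℝ)+1) := by
          apply div_le_div_of_nonneg_left (by positivity) (Real.sqrt_pos.2 (by push_cast; positivity))
          apply Real.sqrt_le_sqrt
          push_cast; linarith

lemma marginal_eq {Ω : Type*} [MeasurableSpace Ω] (μ : Measure Ω) [IsProbabilityMeasure μ] (ε : ℕ → Ω → ℝ) (hmeas : ∀ t, Measurable (ε t))
    (hRad : ∀ t, μ {ω | ε t ω = 1} = 1 / 2 ∧ μ {ω | ε t ω = -1} = 1 / 2)
    (n : ℕ) (s : Set ℝ) (hs : MeasurableSet s) :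
    μ (ε n ⁻¹' s) = 2⁻¹ * ((if (1:ℝ) ∈ s then 1 else 0) + (if (-1:ℝ) ∈ s then 1 else 0)) := by
  set E₁ : Set Ω := {ω | ε n ω = 1} with hE₁
  set E₂ : Set Ω := {ω | ε n ω = -1} with hE₂
  have hm₁ : MeasurableSet E₁ := (hmeas n) (measurableSet_singleton 1)
  have hm₂ : MeasurableSet E₂ := (hmeas n) (measurableSet_singleton (-1))
  have hdisj : Disjoint E₁ E₂ := by
    rw [Set.disjoint_left]
    intro ω h1 h2
    simp only [hE₁, hE₂, Set.mem_setOf_eq] at h1 h2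
    rw [h1] at h2; norm_num at h2
  have hunion : μ (E₁ ∪ E₂) = 1 := by
    rw [measure_union hdisj hm₂, (hRad n).1, (hRad n).2]
    norm_num
    rw [ENNReal.inv_two_add_inv_two]
  have hNzero : μ ((E₁ ∪ E₂)ᶜ) = 0 := by
    rw [measure_compl (hm₁.union hm₂) (measure_ne_top μ _), hunion, measure_univ, tsub_self]
  have hsplit : μ (ε n ⁻¹' s) = μ (ε n ⁻¹' s ∩ E₁) + μ (ε n ⁻¹' s ∩ E₂) := by
    have h1 : μ (ε n ⁻¹' s) = μ (ε n ⁻¹' s ∩ (E₁ ∪ E₂)) + μ (ε n ⁻¹' s ∩ (E₁ ∪ E₂)ᶜ) :=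
      (measure_inter_add_diff _ (hm₁.union hm₂)).symm
    have h2 : μ (ε n ⁻¹' s ∩ (E₁ ∪ E₂)ᶜ) = 0 :=
      measure_mono_null Set.inter_subset_right hNzero
    rw [h2, add_zero] at h1
    rw [h1, Set.inter_union_distrib_left]
    exact measure_union (hdisj.mono Set.inter_subset_right Set.inter_subset_right)
      ((hmeas n hs).inter hm₂)
  have hpiece₁ : μ (ε n ⁻¹' s ∩ E₁) = if (1:ℝ) ∈ s then 2⁻¹ else 0 := by
    by_cases h : (1:ℝ) ∈ s
    · rw [if_pos h]
      have : ε n ⁻¹' s ∩ E₁ = E₁ := by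
        apply Set.inter_eq_right.2
        intro ω hω
        simp only [hE₁, Set.mem_setOf_eq] at hω
        simp only [Set.mem_preimage, hω]
        exact h
      rw [this, (hRad n).1]
      norm_num
    · rw [if_neg h]
      have : ε n ⁻¹' s ∩ E₁ = ∅ := by
        ext ω
        simp only [Set.mem_inter_iff, Set.mem_preimage, hE₁, Set.mem_setOf_eq,
          Set.mem_empty_iff_false, iff_false, not_and]
        intro hω hω1
        rw [hω1] at hω
        exact h hω
      rw [this, measure_empty]
  have hpiece₂ : μ (ε n ⁻¹' s ∩ E₂) = if (-1:ℝ) ∈ s then 2⁻¹ else 0 := by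
    by_cases h : (-1:ℝ) ∈ s
    · rw [if_pos h]
      have : ε n ⁻¹' s ∩ E₂ = E₂ := by
        apply Set.inter_eq_right.2
        intro ω hω
        simp only [hE₂, Set.mem_setOf_eq] at hω
        simp only [Set.mem_preimage, hω]
        exact h
      rw [this, (hRad n).2]
      norm_num
    · rw [if_neg h]
      have : ε n ⁻¹' s ∩ E₂ = ∅ := by
        ext ω
        simp only [Set.mem_inter_iff, Set.mem_preimage, hE₂, Set.mem_setOf_eq,
          Set.mem_empty_iff_false, iff_false, not_and]
        intro hω hω1
        rw [hω1] at hω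
        exact h hω
      rw [this, measure_empty]
  rw [hsplit, hpiece₁, hpiece₂]
  by_cases h1 : (1:ℝ) ∈ s <;> by_cases h2 : (-1:ℝ) ∈ s <;> simp [h1, h2] <;> ring_nf <;>
    simp [mul_add]

lemma law_count {Ω : Type*} [MeasurableSpace Ω] (μ : Measure Ω) [IsProbabilityMeasure μ] (ε : ℕ → Ω → ℝ) (hmeas : ∀ t, Measurable (ε t))
    (hIndep : iIndepFun ε μ)
    (hRad : ∀ t, μ {ω | ε t ω = 1} = 1 / 2 ∧ μ {ω | ε t ω = -1} = 1 / 2)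
    (t : ℕ) (A : Set (Fin t → ℝ)) (hA : MeasurableSet A) :
    μ {ω | (fun i : Fin t => ε i ω) ∈ A}
      = (((Finset.univ.filter (fun σ : Fin t → Bool =>
            (fun i => if σ i then (1:ℝ) else -1) ∈ A)).card : ℝ≥0∞)) * ((2:ℝ≥0∞)^t)⁻¹ := by
  classical
  set Φ : Ω → (Fin t → ℝ) := fun ω i => ε i ω with hΦ
  have hΦmeas : Measurable Φ := measurable_pi_lambda _ (fun i => hmeas i)
  set v : (Fin t → Bool) → (Fin t → ℝ) := fun σ i => if σ i then (1:ℝ) else -1 with hv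
  set cnt : Measure (Fin t → ℝ) :=
    ((2:ℝ≥0∞)^t)⁻¹ • ∑ σ : Fin t → Bool, Measure.dirac (v σ) with hcnt
  haveI hprob : ∀ i : Fin t, IsProbabilityMeasure (μ.map (ε i)) :=
    fun i => Measure.isProbabilityMeasure_map (hmeas i).aemeasurable
  haveI : ∀ i : Fin t, SigmaFinite ((fun i : Fin t => μ.map (ε (i:ℕ))) i) :=
    fun i => inferInstance
  -- step 1 : joint law is the product measure
  have eq1 : μ.map Φ = Measure.pi (fun i : Fin t => μ.map (ε (i:ℕ))) := by
    refine (Measure.pi_eq ?_).symm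
    intro s hs
    rw [Measure.map_apply hΦmeas (MeasurableSet.univ_pi hs)]
    set Sext : ℕ → Set ℝ := fun n => if h : n < t then s ⟨n, h⟩ else Set.univ with hSext
    have hpre : Φ ⁻¹' (Set.pi Set.univ s) = ⋂ n ∈ Finset.range t, ε n ⁻¹' (Sext n) := by
      ext ω
      simp only [Set.mem_preimage, Set.mem_pi, Set.mem_univ, true_imp_iff,
        Set.mem_iInter, Finset.mem_range]
      constructor
      · intro h n hn
        simp only [hSext, dif_pos hn]
        exact h ⟨n, hn⟩
      · intro h i
        have := h i.val i.isLt
        simpa only [hSext, dif_pos i.isLt] using this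
    rw [hpre]
    rw [hIndep.measure_inter_preimage_eq_mul (Finset.range t)
      (fun n hn => by
        simp only [hSext]
        split
        · exact hs _
        · exact MeasurableSet.univ)]
    rw [← Fin.prod_univ_eq_prod_range (fun n => μ (ε n ⁻¹' Sext n)) t]
    apply Finset.prod_congr rfl
    intro i _
    rw [Measure.map_apply (hmeas i) (hs i)]
    congr 1
    simp only [hSext, dif_pos i.isLt]
  -- step 2 : counting measure is also the product measure
  have eq2 : cnt = Measure.pi (fun i : Fin t => μ.map (ε (i:ℕ))) := by
    refine (Measure.pi_eq ?_).symm
    intro s hs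
    have hdirac : ∀ σ : Fin t → Bool, Measure.dirac (v σ) (Set.pi Set.univ s)
        = ∏ i : Fin t, (if v σ i ∈ s i then (1:ℝ≥0∞) else 0) := by
      intro σ
      rw [Measure.dirac_apply' _ (MeasurableSet.univ_pi hs), Finset.prod_boole]
      simp only [Set.indicator_apply, Set.mem_pi, Set.mem_univ, true_imp_iff, Pi.one_apply,
        Finset.mem_univ, true_implies]
    rw [hcnt, Measure.smul_apply, Measure.coe_finset_sum, smul_eq_mul]
    simp only [Finset.sum_apply]
    rw [Finset.sum_congr rfl (fun σ _ => hdirac σ)]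
    have hswap : ∑ σ : Fin t → Bool, ∏ i : Fin t, (if v σ i ∈ s i then (1:ℝ≥0∞) else 0)
        = ∏ i : Fin t, ∑ b : Bool, (if (if b then (1:ℝ) else -1) ∈ s i then (1:ℝ≥0∞) else 0) := by
      rw [Finset.prod_univ_sum, Fintype.piFinset_univ]
    rw [hswap]
    have hmarg : ∀ i : Fin t, (μ.map (ε (i:ℕ))) (s i)
        = 2⁻¹ * ((if (1:ℝ) ∈ s i then 1 else 0) + (if (-1:ℝ) ∈ s i then 1 else 0)) := by
      intro i
      rw [Measure.map_apply (hmeas i) (hs i)]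
      exact marginal_eq μ ε hmeas hRad i (s i) (hs i)
    rw [Finset.prod_congr rfl (fun i (_ : i ∈ Finset.univ) => hmarg i)]
    rw [Finset.prod_mul_distrib]
    rw [Finset.prod_const]
    have hcard : (Finset.univ : Finset (Fin t)).card = t := Finset.card_univ.trans (Fintype.card_fin t)
    rw [hcard]
    rw [← ENNReal.inv_pow]
    congr 1
    apply Finset.prod_congr rfl
    intro i _
    rw [Fintype.sum_bool]
    norm_num [add_comm]
  have : μ {ω | Φ ω ∈ A} = (μ.map Φ) A := (Measure.map_apply hΦmeas hA).symm
  rw [show {ω | (fun i : Fin t => ε i ω) ∈ A} = {ω | Φ ω ∈ A} from rfl, this, eq1, ← eq2]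
  rw [hcnt, Measure.smul_apply, Measure.coe_finset_sum, smul_eq_mul]
  simp only [Finset.sum_apply]
  have : ∀ σ : Fin t → Bool, Measure.dirac (v σ) A = if v σ ∈ A then (1:ℝ≥0∞) else 0 := by
    intro σ
    rw [Measure.dirac_apply' _ hA]
    simp [Set.indicator_apply]
  rw [Finset.sum_congr rfl (fun σ _ => this σ)]
  rw [Finset.sum_boole]
  rw [mul_comm]

set_option maxHeartbeats 1000000 in
/-- With `d_1,…,d_T` (`T ≥ 2`) real numbers with `|d_t| ≤ 2` and `ε` i.i.d.
Rademacher, the total switching sum is at most `20·C_LO·√(T·log₂(4·log₂ T))` where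
`C_LO = 2√2·e/π`. Time is 0-indexed: index `t ∈ {0,…,T−1}` stands for the paper's round
`t+1`. -/
theorem switching_sum_total_bound
    {Ω : Type*} [MeasurableSpace Ω] (μ : Measure Ω) [IsProbabilityMeasure μ]
    (T : ℕ) (hT : 2 ≤ T) (d : ℕ → ℝ) (hd : ∀ t, |d t| ≤ 2)
    (ε : ℕ → Ω → ℝ) (hmeas : ∀ t, Measurable (ε t))
    (hIndep : iIndepFun ε μ)
    (hRad : ∀ t, μ {ω | ε t ω = 1} = 1 / 2 ∧ μ {ω | ε t ω = -1} = 1 / 2) :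
    ∑ t ∈ Finset.range T, |d t| *
        (μ {ω | (-∑ τ ∈ Finset.range t, d τ ≤ ∑ τ ∈ Finset.range t, ε τ ω * d τ) ∧
                (∑ τ ∈ Finset.range (t + 1), ε τ ω * d τ
                  ≤ -∑ τ ∈ Finset.range (t + 1), d τ)}).toReal
      ≤ 20 * (2 * Real.sqrt 2 * Real.exp 1 / Real.pi) *
          Real.sqrt (T * Real.logb 2 (4 * Real.logb 2 T)) := by
  classical
  -- abbreviations
  set Pt : ℕ → ℝ := fun t =>
        (μ {ω | (-∑ τ ∈ Finset.range t, d τ ≤ ∑ τ ∈ Finset.range t, ε τ ω * d τ) ∧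
                (∑ τ ∈ Finset.range (t + 1), ε τ ω * d τ
                  ≤ -∑ τ ∈ Finset.range (t + 1), d τ)}).toReal with hPt
  show ∑ t ∈ Finset.range T, |d t| * Pt t ≤ _
  set g : ℕ → ℝ := fun t => |d t| * Pt t with hg
  have hPt0 : ∀ t, 0 ≤ Pt t := fun t => ENNReal.toReal_nonneg
  have hPt1 : ∀ t, Pt t ≤ 1 := by
    intro t
    simp only [hPt]
    rw [← ENNReal.toReal_one]
    exact ENNReal.toReal_mono ENNReal.one_ne_top prob_le_one
  have hgnonneg : ∀ t, 0 ≤ g t := fun t => mul_nonneg (abs_nonneg _) (hPt0 t)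
  have hgtriv : ∀ t, g t ≤ |d t| := by
    intro t
    have h1 := hPt1 t
    have h0 := abs_nonneg (d t)
    simp only [hg]
    nlinarith
  -- bucket predicate
  set pk : ℕ → ℕ → Prop := fun k τ => 1 < |d τ| * 2^k ∧ |d τ| * 2^k ≤ 2 with hpk
  -- ** Key per-t bound **
  have key : ∀ k t, pk k t →
      Pt t ≤ 2 * Real.sqrt 2 /
            Real.sqrt ((((Finset.range t).filter (pk k)).card : ℝ) + 1) := by
    intro k t hpkt
    set a : ℝ := -∑ τ ∈ Finset.range t, d τ with ha
    set b : ℝ := a + 2 * |d t| with hb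
    set f : (Fin t → ℝ) → ℝ := fun x => ∑ i, x i * d i with hf
    have hfmeas : Measurable f := by
      apply Finset.measurable_sum
      intro i _
      exact (measurable_pi_apply i).mul_const _
    set A : Set (Fin t → ℝ) := {x | a ≤ f x ∧ f x ≤ b} with hA
    have hAmeas : MeasurableSet A := by
      have : A = f ⁻¹' (Set.Icc a b) := rfl
      rw [this]
      exact hfmeas measurableSet_Icc
    -- Step I : event ⊆ interval event (up to null set)
    have step1 : μ {ω | (-∑ τ ∈ Finset.range t, d τ ≤ ∑ τ ∈ Finset.range t, ε τ ω * d τ) ∧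
                (∑ τ ∈ Finset.range (t + 1), ε τ ω * d τ
                  ≤ -∑ τ ∈ Finset.range (t + 1), d τ)}
        ≤ μ {ω | (fun i : Fin t => ε i ω) ∈ A} := by
      set Ev := {ω | (-∑ τ ∈ Finset.range t, d τ ≤ ∑ τ ∈ Finset.range t, ε τ ω * d τ) ∧
                (∑ τ ∈ Finset.range (t + 1), ε τ ω * d τ
                  ≤ -∑ τ ∈ Finset.range (t + 1), d τ)} with hEv
      set G := ε t ⁻¹' ({1, -1} : Set ℝ) with hG
      have hGmeas : MeasurableSet G := (hmeas t) (by measurability)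
      have hGone : μ G = 1 := by
        rw [hG, marginal_eq μ ε hmeas hRad t ({1,-1} : Set ℝ) (by measurability)]
        norm_num
        exact ENNReal.inv_mul_cancel two_ne_zero ENNReal.ofNat_ne_top
      have hGc : μ Gᶜ = 0 := by
        rw [measure_compl hGmeas (measure_ne_top μ _), hGone, measure_univ, tsub_self]
      have hincl : Ev ∩ G ⊆ {ω | (fun i : Fin t => ε i ω) ∈ A} := by
        intro ω hω
        obtain ⟨⟨h1, h2⟩, hωG⟩ := hω
        simp only [Set.mem_setOf_eq, hA, hf]
        have hsum : ∑ i : Fin t, ε i ω * d i = ∑ τ ∈ Finset.range t, ε τ ω * d τ :=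
          Fin.sum_univ_eq_sum_range (fun τ => ε τ ω * d τ) t
        rw [hsum]
        refine ⟨h1, ?_⟩
        rw [Finset.sum_range_succ, Finset.sum_range_succ] at h2
        have hε : ε t ω = 1 ∨ ε t ω = -1 := by
          simpa [hG] using hωG
        rcases hε with hε | hε
        · rw [hε, one_mul] at h2
          have hdd : -|d t| ≤ d t := neg_abs_le (d t)
          have hdd2 : d t ≤ |d t| := le_abs_self (d t)
          rw [hb]
          linarith [ha]
        · rw [hε, neg_one_mul] at h2
          rw [hb]
          have h0 : (0:ℝ) ≤ 2 * |d t| := by positivity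
          linarith [ha]
      calc μ Ev = μ (Ev ∩ G) + μ (Ev \ G) := (measure_inter_add_diff Ev hGmeas).symm
        _ ≤ μ {ω | (fun i : Fin t => ε i ω) ∈ A} + 0 :=
            add_le_add (measure_mono hincl)
              (le_of_eq (measure_mono_null (Set.diff_subset_compl Ev G) hGc))
        _ = μ {ω | (fun i : Fin t => ε i ω) ∈ A} := add_zero _
    -- Step II : exact count
    have step2 := law_count μ ε hmeas hIndep hRad t A hAmeas
    -- Step III : combinatorial bound on the count
    set B : Finset (Fin t) := Finset.univ.filter (fun i : Fin t => pk k i.val) with hB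
    have hmt : B.card ≤ t := by
      calc B.card ≤ (Finset.univ : Finset (Fin t)).card :=
            Finset.card_le_card (Finset.filter_subset _ _)
        _ = t := by simp
    have hcount : (Finset.univ.filter (fun σ : Fin t → Bool =>
            (fun i => if σ i then (1:ℝ) else -1) ∈ A)).card
          ≤ 2^(t - B.card) * (2 * (B.card.choose (B.card/2))) := by
      have hsum_eq : ∀ σ : Fin t → Bool,
          (∑ i : Fin t, (if σ i then (1:ℝ) else -1) * d i)
            = ∑ i : Fin t, (if σ i then d i.val else -d i.val) := by
        intro σ
        apply Finset.sum_congr rfl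
        intro i _
        split <;> ring
      have hfilter_eq : Finset.univ.filter (fun σ : Fin t → Bool =>
            (fun i => if σ i then (1:ℝ) else -1) ∈ A)
          = Finset.univ.filter (fun σ : Fin t → Bool =>
            a ≤ ∑ i, (if σ i then d i.val else -d i.val)
              ∧ (∑ i, (if σ i then d i.val else -d i.val)) ≤ b) := by
        apply Finset.filter_congr
        intro σ _
        simp only [hA, hf, Set.mem_setOf_eq, hsum_eq σ]
      rw [hfilter_eq]
      have hpow : (0:ℝ) < (2:ℝ)^k := by positivity
      apply count_interval_le (fun i : Fin t => d i.val) ((1/2:ℝ)^k) a b (by positivity)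
      · -- b - a ≤ 4 r
        have h2 : |d t| * 2^k ≤ 2 := hpkt.2
        have hdt : |d t| ≤ 2 / 2^k := by
          rw [le_div_iff₀ hpow]; exact h2
        have hrw : (4:ℝ) * (1/2:ℝ)^k = 2 * (2 / 2^k) := by
          rw [div_pow, one_pow]; field_simp; ring
        rw [hb, hrw]
        linarith
      · -- weights in B exceed r
        intro i hi
        rw [hB, Finset.mem_filter] at hi
        have h1 : 1 < |d i.val| * 2^k := hi.2.1
        rw [div_pow, one_pow, div_lt_iff₀ hpow]
        linarith
    -- translate B.card
    have hmcard : B.card = ((Finset.range t).filter (pk k)).card := by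
      rw [hB, Finset.card_filter, Finset.card_filter]
      exact Fin.sum_univ_eq_sum_range (fun n => if pk k n then 1 else 0) t
    -- Step IV : probability bound in ℝ
    set m : ℕ := B.card with hm
    have h1 : Pt t ≤ (μ {ω | (fun i : Fin t => ε i ω) ∈ A}).toReal := by
      simp only [hPt]
      exact ENNReal.toReal_mono (measure_ne_top μ _) step1
    set N : ℕ := (Finset.univ.filter (fun σ : Fin t → Bool =>
          (fun i => if σ i then (1:ℝ) else -1) ∈ A)).card with hN
    have h2 : (μ {ω | (fun i : Fin t => ε i ω) ∈ A}).toReal = (N:ℝ) * (((2:ℝ)^t)⁻¹) := by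
      rw [step2, ENNReal.toReal_mul, ENNReal.toReal_inv, ENNReal.toReal_pow,
        ENNReal.toReal_ofNat, ENNReal.toReal_natCast]
      congr!
    have hsq : (0:ℝ) < Real.sqrt ((m:ℝ)+1) := Real.sqrt_pos.2 (by positivity)
    have hcast : (N:ℝ) ≤ 2^(t-m) * (2 * (m.choose (m/2) : ℝ)) := by exact_mod_cast hcount
    have hc2 : (m.choose (m/2) : ℝ) ≤ 2^m * Real.sqrt 2 / Real.sqrt ((m:ℝ)+1) :=
      choose_half_le m
    have hNle : (N:ℝ) ≤ 2^(t-m) * (2 * (2^m * Real.sqrt 2 / Real.sqrt ((m:ℝ)+1))) := by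
      calc (N:ℝ) ≤ 2^(t-m) * (2 * (m.choose (m/2) : ℝ)) := hcast
        _ ≤ 2^(t-m) * (2 * (2^m * Real.sqrt 2 / Real.sqrt ((m:ℝ)+1))) := by
            have hstep := mul_le_mul_of_nonneg_left hc2 (show (0:ℝ) ≤ 2 by norm_num)
            exact mul_le_mul_of_nonneg_left hstep (by positivity)
    have hpowsub : (2:ℝ)^(t-m) * 2^m = 2^t := by
      rw [← pow_add]
      congr 1
      exact Nat.sub_add_cancel hmt
    have h3 : (N:ℝ) * (((2:ℝ)^t)⁻¹) ≤ 2 * Real.sqrt 2 / Real.sqrt ((m:ℝ)+1) := by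
      calc (N:ℝ) * (((2:ℝ)^t)⁻¹)
          ≤ (2^(t-m) * (2 * (2^m * Real.sqrt 2 / Real.sqrt ((m:ℝ)+1)))) * (((2:ℝ)^t)⁻¹) :=
            mul_le_mul_of_nonneg_right hNle (by positivity)
        _ = 2 * Real.sqrt 2 / Real.sqrt ((m:ℝ)+1) := by
            rw [show (2:ℝ)^t = 2^(t-m) * 2^m from hpowsub.symm]
            have hsne : Real.sqrt ((m:ℝ)+1) ≠ 0 := ne_of_gt hsq
            field_simp
    rw [← hmcard]
    rw [h2] at h1
    exact h1.trans h3
  -- ** bucket index function **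
  set idx : ℕ → ℕ := fun t => if h : ∃ k, 1 < |d t| * 2^k then min (Nat.find h) T else T
    with hidx
  have hidxle : ∀ t, idx t ≤ T := by
    intro t
    by_cases h : ∃ k, 1 < |d t| * 2^k
    · simp only [hidx, dif_pos h]
      exact min_le_right _ _
    · simp only [hidx, dif_neg h]
      exact le_refl T
  have hidx_bucket : ∀ t, idx t < T → pk (idx t) t := by
    intro t hlt
    by_cases h : ∃ k, 1 < |d t| * 2^k
    · have heq : idx t = min (Nat.find h) T := by simp only [hidx, dif_pos h]
      rw [heq] at hlt ⊢
      have hfind : Nat.find h < T := by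
        rcases lt_or_ge (Nat.find h) T with h' | h'
        · exact h'
        · rw [min_eq_right h'] at hlt; omega
      rw [min_eq_left (le_of_lt hfind)] at hlt ⊢
      refine ⟨Nat.find_spec h, ?_⟩
      rcases Nat.eq_zero_or_pos (Nat.find h) with hzero | hpos
      · rw [hzero]
        simpa using hd t
      · have hmin := Nat.find_min h (Nat.sub_lt hpos one_pos)
        push_neg at hmin
        have hle1 : |d t| * 2^(Nat.find h - 1) ≤ 1 := hmin
        have hexp : Nat.find h = (Nat.find h - 1) + 1 := by omega
        rw [hexp, pow_succ]
        nlinarith [abs_nonneg (d t), pow_pos (show (0:ℝ) < 2 by norm_num) (Nat.find h - 1)]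
    · exfalso
      have : idx t = T := by simp only [hidx, dif_neg h]
      omega
  have hidx_tail : ∀ t, idx t = T → |d t| * 2^(T-1) ≤ 1 := by
    intro t heq
    by_cases h : ∃ k, 1 < |d t| * 2^k
    · have heq2 : idx t = min (Nat.find h) T := by simp only [hidx, dif_pos h]
      rw [heq2] at heq
      have hfind : T ≤ Nat.find h := by
        rcases le_or_gt T (Nat.find h) with h' | h'
        · exact h'
        · rw [min_eq_left (le_of_lt h')] at heq; omega
      have := Nat.find_min h (show T - 1 < Nat.find h by omega)
      push_neg at this
      exact this
    · push_neg at h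
      exact le_of_not_gt (fun hc => absurd hc (not_lt.2 (h (T-1))))
  -- ** decompose the sum by buckets **
  have hdecomp : ∑ t ∈ Finset.range T, g t
      = ∑ j ∈ Finset.range (T+1), ∑ t ∈ (Finset.range T).filter (fun t => idx t = j), g t :=
    (Finset.sum_fiberwise_of_maps_to
      (fun t _ => Finset.mem_range.2 (Nat.lt_succ_of_le (hidxle t))) g).symm
  -- per-bucket bound for j < T
  have hbucket : ∀ j, j < T →
      ∑ t ∈ (Finset.range T).filter (fun t => idx t = j), g t
        ≤ 8 * Real.sqrt 2 * Real.sqrt T * (1/2)^j := by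
    intro j hj
    set Bj : Finset ℕ := (Finset.range T).filter (pk j) with hBj
    have hsubset : (Finset.range T).filter (fun t => idx t = j) ⊆ Bj := by
      intro t ht
      rw [Finset.mem_filter] at ht
      rw [hBj, Finset.mem_filter]
      refine ⟨ht.1, ?_⟩
      have := hidx_bucket t (by rw [ht.2]; exact hj)
      rwa [ht.2] at this
    have hpowj : (0:ℝ) < (2:ℝ)^j := by positivity
    calc ∑ t ∈ (Finset.range T).filter (fun t => idx t = j), g t
        ≤ ∑ t ∈ Bj, g t :=
          Finset.sum_le_sum_of_subset_of_nonneg hsubset (fun t _ _ => hgnonneg t)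
      _ ≤ ∑ t ∈ Bj, (2 * (1/2:ℝ)^j) * (2 * Real.sqrt 2 /
            Real.sqrt (((Bj.filter (· < t)).card : ℝ) + 1)) := by
          apply Finset.sum_le_sum
          intro t ht
          have htmem := ht
          rw [hBj, Finset.mem_filter] at htmem
          obtain ⟨htT, hpkt⟩ := htmem
          have hdt : |d t| ≤ 2 * (1/2:ℝ)^j := by
            have h2 : |d t| * 2^j ≤ 2 := hpkt.2
            have hrw2 : (2:ℝ) * (1/2)^j = 2 / 2^j := by
              rw [div_pow, one_pow]; ring
            rw [hrw2, le_div_iff₀ hpowj]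
            exact h2
          have hPbound := key j t hpkt
          have hfe : (Finset.range t).filter (pk j) = Bj.filter (· < t) := by
            rw [hBj, Finset.filter_filter]
            ext τ
            simp only [Finset.mem_filter, Finset.mem_range]
            constructor
            · rintro ⟨hτ, hp⟩
              exact ⟨hτ.trans (Finset.mem_range.1 htT), hp, hτ⟩
            · rintro ⟨_, hp, hτ⟩
              exact ⟨hτ, hp⟩
          rw [hfe] at hPbound
          simp only [hg]
          exact mul_le_mul hdt hPbound (hPt0 t) (by positivity)
      _ = (2 * (1/2:ℝ)^j) * (2 * Real.sqrt 2) * ∑ t ∈ Bj,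
            1 / Real.sqrt (((Bj.filter (· < t)).card : ℝ) + 1) := by
          rw [Finset.mul_sum]
          apply Finset.sum_congr rfl
          intro t _
          field_simp
      _ ≤ (2 * (1/2:ℝ)^j) * (2 * Real.sqrt 2) * (2 * Real.sqrt Bj.card) := by
          apply mul_le_mul_of_nonneg_left (sum_inv_sqrt_rank Bj) (by positivity)
      _ ≤ 8 * Real.sqrt 2 * Real.sqrt T * (1/2)^j := by
          have hcardn : Bj.card ≤ T := by
            calc Bj.card ≤ (Finset.range T).card :=
                  Finset.card_le_card (Finset.filter_subset _ _)
              _ = T := Finset.card_range T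
          have hcard : (Bj.card : ℝ) ≤ T := by exact_mod_cast hcardn
          have hsqle := Real.sqrt_le_sqrt hcard
          have hsqnn := Real.sqrt_nonneg (Bj.card : ℝ)
          have hpw : (0:ℝ) ≤ (1/2:ℝ)^j := by positivity
          have hs2 : (0:ℝ) ≤ Real.sqrt 2 := Real.sqrt_nonneg 2
          nlinarith [mul_le_mul_of_nonneg_left hsqle
            (mul_nonneg (mul_nonneg (by norm_num : (0:ℝ) ≤ 8) hs2) hpw)]
  -- tail bound for j = T
  have htail : ∑ t ∈ (Finset.range T).filter (fun t => idx t = T), g t ≤ 1 := by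
    have hTle : T ≤ 2^(T-1) := by
      calc T = (T-1)+1 := by omega
        _ ≤ 2^(T-1) := Nat.succ_le_of_lt (Nat.lt_two_pow_self)
    have hTleR : (T:ℝ) ≤ 2^(T-1) := by exact_mod_cast hTle
    have hp : (0:ℝ) < 2^(T-1) := by positivity
    have h2T : (2:ℝ)^T = 2 * 2^(T-1) := by
      rw [← pow_succ']
      congr 1
      omega
    have hTpow : (T:ℝ) * (2 * (1/2:ℝ)^T) ≤ 1 := by
      rw [div_pow, one_pow, h2T]
      rw [show (T:ℝ) * (2 * (1 / (2 * 2^(T-1)))) = (T:ℝ) / 2^(T-1) by field_simp]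
      rw [div_le_one hp]
      exact hTleR
    calc ∑ t ∈ (Finset.range T).filter (fun t => idx t = T), g t
        ≤ ∑ _t ∈ (Finset.range T).filter (fun t => idx t = T), (2 * (1/2:ℝ)^T) := by
          apply Finset.sum_le_sum
          intro t ht
          rw [Finset.mem_filter] at ht
          have htail1 := hidx_tail t ht.2
          have hdt : |d t| ≤ 2 * (1/2:ℝ)^T := by
            rw [div_pow, one_pow, h2T]
            rw [show (2:ℝ) * (1 / (2 * 2^(T-1))) = (2^(T-1) : ℝ)⁻¹ by field_simp]
            rw [← le_div_iff₀ hp] at htail1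
            rw [one_div] at htail1
            exact htail1
          exact (hgtriv t).trans hdt
      _ = ((Finset.range T).filter (fun t => idx t = T)).card * (2 * (1/2:ℝ)^T) := by
          rw [Finset.sum_const, nsmul_eq_mul]
      _ ≤ (T:ℝ) * (2 * (1/2:ℝ)^T) := by
          apply mul_le_mul_of_nonneg_right _ (by positivity)
          have hcn : ((Finset.range T).filter (fun t => idx t = T)).card ≤ T := by
            calc _ ≤ (Finset.range T).card := Finset.card_le_card (Finset.filter_subset _ _)
              _ = T := Finset.card_range T
          exact_mod_cast hcn
      _ ≤ 1 := hTpow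
  -- combine
  have hmain : ∑ t ∈ Finset.range T, g t ≤ 16 * Real.sqrt 2 * Real.sqrt T + 1 := by
    rw [hdecomp, Finset.sum_range_succ]
    have h1 : ∑ j ∈ Finset.range T, ∑ t ∈ (Finset.range T).filter (fun t => idx t = j), g t
        ≤ ∑ j ∈ Finset.range T, 8 * Real.sqrt 2 * Real.sqrt T * (1/2)^j :=
      Finset.sum_le_sum (fun j hj => hbucket j (Finset.mem_range.1 hj))
    have h2 : ∑ j ∈ Finset.range T, 8 * Real.sqrt 2 * Real.sqrt T * ((1/2):ℝ)^j
        ≤ 16 * Real.sqrt 2 * Real.sqrt T := by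
      rw [← Finset.mul_sum]
      have hgle := sum_geometric_two_le T
      have hnn : (0:ℝ) ≤ 8 * Real.sqrt 2 * Real.sqrt T := by positivity
      nlinarith
    linarith [htail]
  -- ** final numeric comparison **
  have hT2 : (2:ℝ) ≤ (T:ℝ) := by exact_mod_cast hT
  have hlogbT : 1 ≤ Real.logb 2 (T:ℝ) := by
    rw [show (1:ℝ) = Real.logb 2 2 from (Real.logb_self_eq_one (by norm_num)).symm]
    exact Real.logb_le_logb_of_le (by norm_num) (by norm_num) hT2
  have hL2 : 2 ≤ Real.logb 2 (4 * Real.logb 2 (T:ℝ)) := by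
    have h4 : (4:ℝ) ≤ 4 * Real.logb 2 (T:ℝ) := by nlinarith
    calc (2:ℝ) = Real.logb 2 4 := by
          rw [show (4:ℝ) = 2^(2:ℕ) by norm_num, Real.logb_pow,
            Real.logb_self_eq_one (by norm_num)]
          norm_num
      _ ≤ Real.logb 2 (4 * Real.logb 2 (T:ℝ)) :=
          Real.logb_le_logb_of_le (by norm_num) (by norm_num) h4
  have hTL : Real.sqrt 2 * Real.sqrt T
      ≤ Real.sqrt ((T:ℝ) * Real.logb 2 (4 * Real.logb 2 (T:ℝ))) := by
    rw [← Real.sqrt_mul (by norm_num) (T:ℝ)]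
    apply Real.sqrt_le_sqrt
    nlinarith
  have hs2a : Real.sqrt 2 ≤ 1.415 := by
    rw [show (1.415:ℝ) = Real.sqrt (1.415^2) from (Real.sqrt_sq (by norm_num)).symm]
    apply Real.sqrt_le_sqrt; norm_num
  have hs2b : 1.414 ≤ Real.sqrt 2 := by
    rw [show (1.414:ℝ) = Real.sqrt (1.414^2) from (Real.sqrt_sq (by norm_num)).symm]
    apply Real.sqrt_le_sqrt; norm_num
  have hsT : 1.414 ≤ Real.sqrt T :=
    le_trans hs2b (Real.sqrt_le_sqrt hT2)
  have hq : (0.862:ℝ) ≤ Real.exp 1 / Real.pi := by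
    rw [le_div_iff₀ Real.pi_pos]
    nlinarith [Real.pi_lt_d2, Real.exp_one_gt_d9, Real.pi_gt_three]
  have hrw : 20 * (2 * Real.sqrt 2 * Real.exp 1 / Real.pi)
      = 40 * Real.sqrt 2 * (Real.exp 1 / Real.pi) := by ring
  have hstep : 40 * Real.sqrt 2 * (Real.exp 1 / Real.pi) * (Real.sqrt 2 * Real.sqrt T)
      ≤ 20 * (2 * Real.sqrt 2 * Real.exp 1 / Real.pi) *
        Real.sqrt ((T:ℝ) * Real.logb 2 (4 * Real.logb 2 (T:ℝ))) := by
    rw [hrw]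
    apply mul_le_mul_of_nonneg_left hTL
    positivity
  have hs2sq : Real.sqrt 2 * Real.sqrt 2 = 2 := Real.mul_self_sqrt (by norm_num)
  have hexp : 40 * Real.sqrt 2 * (Real.exp 1 / Real.pi) * (Real.sqrt 2 * Real.sqrt T)
      = 80 * (Real.exp 1 / Real.pi) * Real.sqrt T := by
    linear_combination (40 * (Real.exp 1 / Real.pi) * Real.sqrt T) * hs2sq
  have hfinal : 16 * Real.sqrt 2 * Real.sqrt T + 1
      ≤ 80 * (Real.exp 1 / Real.pi) * Real.sqrt T := by
    have hx0 : (0:ℝ) ≤ Real.sqrt T := Real.sqrt_nonneg _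
    nlinarith [mul_le_mul_of_nonneg_right hs2a hx0, mul_le_mul_of_nonneg_right hq hx0, hsT]
  calc ∑ t ∈ Finset.range T, g t ≤ 16 * Real.sqrt 2 * Real.sqrt T + 1 := hmain
    _ ≤ 80 * (Real.exp 1 / Real.pi) * Real.sqrt T := hfinal
    _ = 40 * Real.sqrt 2 * (Real.exp 1 / Real.pi) * (Real.sqrt 2 * Real.sqrt T) := hexp.symm
    _ ≤ _ := hstep
end

section
/- The single-stream version of sampled fictitious play can incur linear expected regret against an adaptive opponent. Precisely, in the setting below with N = 2 strategies, there is an explicit deterministic adaptive opponent — on each odd round t it sets g_t = (0,0); on each even round t it sets g_t = (0, 1 − 0.1^t) if the player played strategy 1 in round t−1 and g_t = (1 − 0.1^t, 0) if the player played strategy 2 in round t−1 — such that the expected regret of the single-stream procedure satisfies E[R_T] ≥ 0.225·T − 2 for every T. -/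
open MeasureTheory ProbabilityTheory

open scoped Classical in
/-- The set of strategies maximizing a score function. -/
noncomputable def argmaxSet {N : ℕ} (f : Fin N → ℝ) : Finset (Fin N) :=
  Finset.univ.filter (fun j => ∀ j', f j' ≤ f j)

/-- Uniform selection from a finite set of strategies: given `u` uniform on `[0,1)`, `pick`
returns the `⌊u·|s|⌋`-th element of `s` in increasing order, which is a uniformly random
element of `s` whenever `s` is nonempty. -/
noncomputable def pick {N : ℕ} [NeZero N] (s : Finset (Fin N)) (u : ℝ) : Fin N :=
  (s.sort (· ≤ ·)).getD ⌊u * s.card⌋.toNat 0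

section Helpers

lemma fin2_cases (j : Fin 2) : j = 0 ∨ j = 1 := by omega

lemma argmax_left {f : Fin 2 → ℝ} (h : f 1 < f 0) : argmaxSet f = {0} := by
  classical
  ext j
  simp only [argmaxSet, Finset.mem_filter, Finset.mem_univ, true_and, Finset.mem_singleton,
    Fin.forall_fin_two]
  rcases fin2_cases j with hj | hj <;> subst hj
  · exact ⟨fun _ => rfl, fun _ => ⟨le_refl _, h.le⟩⟩
  · constructor
    · intro hh; exact absurd hh.1 (not_le.2 h)
    · intro hh; exact absurd hh (by omega)

lemma argmax_right {f : Fin 2 → ℝ} (h : f 0 < f 1) : argmaxSet f = {1} := by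
  classical
  ext j
  simp only [argmaxSet, Finset.mem_filter, Finset.mem_univ, true_and, Finset.mem_singleton,
    Fin.forall_fin_two]
  rcases fin2_cases j with hj | hj <;> subst hj
  · constructor
    · intro hh; exact absurd hh.2 (not_le.2 h)
    · intro hh; exact absurd hh (by omega)
  · exact ⟨fun _ => rfl, fun _ => ⟨h.le, le_refl _⟩⟩

lemma argmax_tie {f : Fin 2 → ℝ} (h : f 0 = f 1) : argmaxSet f = Finset.univ := by
  classical
  ext j
  simp only [argmaxSet, Finset.mem_filter, Finset.mem_univ, true_and, Fin.forall_fin_two,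
    iff_true]
  rcases fin2_cases j with hj | hj <;> subst hj
  · exact ⟨le_refl _, h.ge⟩
  · exact ⟨h.le, le_refl _⟩

lemma sort_univ_fin2 : (Finset.univ : Finset (Fin 2)).sort (· ≤ ·) = [0, 1] := by
  have h : (Finset.univ : Finset (Fin 2)) = {0, 1} := by decide
  rw [h]
  rw [Finset.sort_insert (· ≤ ·) (by intro b hb; simp at hb; simp [hb]) (by simp)]
  simp

lemma pick_left (u : ℝ) : pick ({0} : Finset (Fin 2)) u = 0 := by
  rw [pick, Finset.sort_singleton]
  rcases Nat.eq_zero_or_pos (⌊u * (({0} : Finset (Fin 2)).card : ℝ)⌋.toNat) with h | h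
  · rw [h]; rfl
  · rw [List.getD_eq_default]
    simp only [List.length_singleton]
    omega

lemma pick_right {u : ℝ} (h0 : 0 ≤ u) (h1 : u < 1) : pick ({1} : Finset (Fin 2)) u = 1 := by
  have : ⌊u * (({1} : Finset (Fin 2)).card : ℝ)⌋ = 0 := by
    rw [Finset.card_singleton]
    push_cast
    rw [mul_one]
    exact Int.floor_eq_zero_iff.2 ⟨h0, h1⟩
  rw [pick, this, Finset.sort_singleton]
  rfl

lemma pick_tie_lt {u : ℝ} (h0 : 0 ≤ u) (h : u < 1/2) :
    pick (Finset.univ : Finset (Fin 2)) u = 0 := by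
  have : ⌊u * ((Finset.univ : Finset (Fin 2)).card : ℝ)⌋ = 0 := by
    rw [Finset.card_univ, Fintype.card_fin]
    push_cast
    exact Int.floor_eq_zero_iff.2 ⟨by positivity, by linarith⟩
  rw [pick, this, sort_univ_fin2]
  rfl

lemma pick_tie_ge {u : ℝ} (h0 : 1/2 ≤ u) (h : u < 1) :
    pick (Finset.univ : Finset (Fin 2)) u = 1 := by
  have : ⌊u * ((Finset.univ : Finset (Fin 2)).card : ℝ)⌋ = 1 := by
    rw [Finset.card_univ, Fintype.card_fin]
    push_cast
    rw [Int.floor_eq_iff]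
    constructor <;> push_cast <;> linarith
  rw [pick, this, sort_univ_fin2]
  rfl

/-- `pick ∘ argmaxSet` is jointly measurable. -/
lemma measurable_pickArgmax :
    Measurable (fun p : (Fin 2 → ℝ) × ℝ => pick (argmaxSet p.1) p.2) := by
  have hrw : (fun p : (Fin 2 → ℝ) × ℝ => pick (argmaxSet p.1) p.2)
      = fun p => if p.1 1 < p.1 0 then pick ({0} : Finset (Fin 2)) p.2
          else if p.1 0 < p.1 1 then pick ({1} : Finset (Fin 2)) p.2
          else pick (Finset.univ : Finset (Fin 2)) p.2 := by
    funext p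
    rcases lt_trichotomy (p.1 0) (p.1 1) with h | h | h
    · rw [if_neg (by linarith), if_pos h, argmax_right h]
    · rw [if_neg (by linarith), if_neg (by linarith), argmax_tie h]
    · rw [if_pos h, argmax_left h]
  rw [hrw]
  have hm1 : Measurable (fun p : (Fin 2 → ℝ) × ℝ => p.1 1) :=
    (measurable_pi_apply 1).comp measurable_fst
  have hm0 : Measurable (fun p : (Fin 2 → ℝ) × ℝ => p.1 0) :=
    (measurable_pi_apply 0).comp measurable_fst
  have hpick : ∀ s : Finset (Fin 2), Measurable (fun x : ℝ => pick s x) := by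
    intro s
    have h1 : Measurable (fun x : ℝ => x * (s.card : ℝ)) :=
      (measurable_id : Measurable (id : ℝ → ℝ)).mul_const _
    have h2 : Measurable (fun x : ℝ => ⌊x * (s.card : ℝ)⌋) := Int.measurable_floor.comp h1
    have h3 : Measurable (fun z : ℤ => (s.sort (· ≤ ·)).getD z.toNat (0 : Fin 2)) :=
      measurable_from_top
    exact h3.comp h2
  refine Measurable.ite (measurableSet_lt hm1 hm0) ((hpick _).comp measurable_snd) ?_
  exact Measurable.ite (measurableSet_lt hm0 hm1) ((hpick _).comp measurable_snd)
    ((hpick _).comp measurable_snd)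

lemma isup_fin2 (f : Fin 2 → ℝ) : (⨆ j, f j) = max (f 0) (f 1) := by
  apply le_antisymm
  · refine ciSup_le fun j => ?_
    rcases fin2_cases j with h | h <;> subst h
    · exact le_max_left _ _
    · exact le_max_right _ _
  · exact max_le (le_ciSup (Set.Finite.bddAbove (Set.finite_range f)) 0)
      (le_ciSup (Set.Finite.bddAbove (Set.finite_range f)) 1)

/-- Deterministic analysis of the single-stream dynamics for a fixed good sample point. -/
lemma dynamics (e v : ℕ → ℝ) (he : ∀ t, e t = 1 ∨ e t = -1)
    (hv : ∀ t, v t ∈ Set.Ico (0:ℝ) 1)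
    (k : ℕ → Fin 2) (g : ℕ → Fin 2 → ℝ)
    (hgE : ∀ t j, t % 2 = 0 → g t j = 0)
    (hgO : ∀ t (j : Fin 2), t % 2 = 1 →
        g t j = (if k (t - 1) = 0
          then (if j = 1 then 1 - (0.1 : ℝ) ^ (t + 1) else 0)
          else (if j = 0 then 1 - (0.1 : ℝ) ^ (t + 1) else 0)))
    (hp : ∀ t, k t = pick (argmaxSet (fun j =>
        ∑ τ ∈ Finset.range t, (1 + e τ) * g τ j)) (v t)) :
    (k 0 = if v 0 < 1/2 then 0 else 1) ∧ (k 1 = if v 1 < 1/2 then 0 else 1) ∧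
      ∀ m, (∃ i, i < m ∧ e (2*i+1) = 1) → g (2*m+1) (k (2*m+1)) = 0 := by
  set F : ℕ → Fin 2 → ℝ := fun t j => ∑ τ ∈ Finset.range t, (1 + e τ) * g τ j with hF
  have hk : ∀ t, k t = pick (argmaxSet (F t)) (v t) := hp
  have hF0 : ∀ j, F 0 j = 0 := fun j => by simp [hF]
  have hFsucc : ∀ t j, F (t+1) j = F t j + (1 + e t) * g t j := fun t j => by
    simp [hF, Finset.sum_range_succ]
  have hFodd : ∀ m j, F (2*m+1) j = F (2*m) j := fun m j => by
    rw [hFsucc, hgE (2*m) j (by omega), mul_zero, add_zero]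
  have kpos : ∀ t, F t 1 < F t 0 → k t = 0 := fun t h => by
    rw [hk t, argmax_left h, pick_left]
  have kneg : ∀ t, F t 0 < F t 1 → k t = 1 := fun t h => by
    rw [hk t, argmax_right h, pick_right (hv t).1 (hv t).2]
  have ktie : ∀ t, F t 0 = F t 1 → k t = (if v t < 1/2 then 0 else 1) := fun t h => by
    rw [hk t, argmax_tie h]
    split_ifs with hvt
    · exact pick_tie_lt (hv t).1 hvt
    · exact pick_tie_ge (not_lt.1 hvt) (hv t).2
  have h2m1 : ∀ m : ℕ, (2*m+1) % 2 = 1 := fun m => by omega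
  have hgodd : ∀ m (j : Fin 2), g (2*m+1) j =
      (if k (2*m) = 0 then (if j = 1 then 1 - (0.1 : ℝ) ^ (2*m+2) else 0)
        else (if j = 0 then 1 - (0.1 : ℝ) ^ (2*m+2) else 0)) := by
    intro m j
    have h1 : 2*m+1-1 = 2*m := by omega
    have h2 : 2*m+1+1 = 2*m+2 := by omega
    rw [hgO (2*m+1) j (h2m1 m), h1, h2]
  have hApos : ∀ n : ℕ, (0:ℝ) < 1 - (0.1:ℝ)^(n+2) := by
    intro n
    have : (0.1:ℝ)^(n+2) < 1 := pow_lt_one₀ (by norm_num) (by norm_num) (by omega)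
    linarith
  have hAmono : ∀ m : ℕ, (0.1:ℝ)^(2*m+4) < (0.1:ℝ)^(2*m+2) :=
    fun m => pow_lt_pow_right_of_lt_one₀ (by norm_num) (by norm_num) (by omega)
  have inv : ∀ m, ((∀ i, i < m → e (2*i+1) = -1) ∧ (∀ j, F (2*m) j = 0)) ∨
      (F (2*m) 0 ≠ F (2*m) 1 ∧ |F (2*m) 0 - F (2*m) 1| < 2*(1 - (0.1:ℝ)^(2*m+2))) := by
    intro m
    induction m with
    | zero => exact Or.inl ⟨fun i hi => absurd hi (by omega), hF0⟩
    | succ m ih =>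
      have hstep : ∀ j, F (2*(m+1)) j = F (2*m) j + (1 + e (2*m+1)) * g (2*m+1) j := by
        intro j
        have : 2*(m+1) = (2*m+1)+1 := by omega
        rw [this, hFsucc, hFodd]
      have hA0 : 0 < 1 - (0.1:ℝ)^(2*m+2) := hApos (2*m)
      have hbnd : 2*(1 - (0.1:ℝ)^(2*m+2)) < 2*(1 - (0.1:ℝ)^(2*(m+1)+2)) := by
        have := hAmono m
        have h4 : 2*(m+1)+2 = 2*m+4 := by omega
        rw [h4]
        linarith
      rcases ih with ⟨hall, hzero⟩ | ⟨hne, habs⟩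
      · rcases he (2*m+1) with h1 | h1
        · right
          rcases fin2_cases (k (2*m)) with hk0 | hk0
          · have hg0 : g (2*m+1) 0 = 0 := by rw [hgodd]; simp [hk0]
            have hg1 : g (2*m+1) 1 = 1 - (0.1:ℝ)^(2*m+2) := by rw [hgodd]; simp [hk0]
            rw [hstep 0, hstep 1, hzero 0, hzero 1, hg0, hg1, h1]
            refine ⟨fun hcon => by linarith, ?_⟩
            rw [abs_sub_lt_iff]
            constructor <;> linarith
          · have hg0 : g (2*m+1) 0 = 1 - (0.1:ℝ)^(2*m+2) := by rw [hgodd]; simp [hk0]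
            have hg1 : g (2*m+1) 1 = 0 := by rw [hgodd]; simp [hk0]
            rw [hstep 0, hstep 1, hzero 0, hzero 1, hg0, hg1, h1]
            refine ⟨fun hcon => by linarith, ?_⟩
            rw [abs_sub_lt_iff]
            constructor <;> linarith
        · left
          refine ⟨fun i hi => ?_, fun j => ?_⟩
          · rcases Nat.lt_or_ge i m with h | h
            · exact hall i h
            · have : i = m := by omega
              rw [this]; exact h1
          · rw [hstep j, hzero j, h1]; ring
      · right
        rcases lt_or_gt_of_ne hne with hlt | hgt
        · have hk1 : k (2*m) = 1 := kneg (2*m) hlt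
          have hg0 : g (2*m+1) 0 = 1 - (0.1:ℝ)^(2*m+2) := by rw [hgodd]; simp [hk1]
          have hg1 : g (2*m+1) 1 = 0 := by rw [hgodd]; simp [hk1]
          have habs' := abs_sub_lt_iff.1 habs
          rw [hstep 0, hstep 1, hg0, hg1]
          rcases he (2*m+1) with h1 | h1 <;> rw [h1]
          · refine ⟨fun hcon => by linarith [habs'.2], ?_⟩
            rw [abs_sub_lt_iff]
            constructor <;> linarith [habs'.1, habs'.2]
          · refine ⟨fun hcon => hne (by linarith), ?_⟩
            rw [abs_sub_lt_iff]
            constructor <;> linarith [habs'.1, habs'.2]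
        · have hk0 : k (2*m) = 0 := kpos (2*m) hgt
          have hg0 : g (2*m+1) 0 = 0 := by rw [hgodd]; simp [hk0]
          have hg1 : g (2*m+1) 1 = 1 - (0.1:ℝ)^(2*m+2) := by rw [hgodd]; simp [hk0]
          have habs' := abs_sub_lt_iff.1 habs
          rw [hstep 0, hstep 1, hg0, hg1]
          rcases he (2*m+1) with h1 | h1 <;> rw [h1]
          · refine ⟨fun hcon => by linarith [habs'.1], ?_⟩
            rw [abs_sub_lt_iff]
            constructor <;> linarith [habs'.1, habs'.2]
          · refine ⟨fun hcon => hne (by linarith), ?_⟩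
            rw [abs_sub_lt_iff]
            constructor <;> linarith [habs'.1, habs'.2]
  refine ⟨?_, ?_, ?_⟩
  · exact ktie 0 (by rw [hF0, hF0])
  · have h : F 1 0 = F 1 1 := by
      have := hFodd 0
      simp only [Nat.mul_zero, Nat.zero_add] at this
      rw [this 0, this 1, hF0, hF0]
    exact ktie 1 h
  · intro m ⟨i, hi, hei⟩
    rcases inv m with ⟨hall, _⟩ | ⟨hne, _⟩
    · rw [hall i hi] at hei; norm_num at hei
    · rcases lt_or_gt_of_ne hne with hlt | hgt
      · have hk1 : k (2*m) = 1 := kneg (2*m) hlt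
        have hk1' : k (2*m+1) = 1 := by
          apply kneg
          rw [hFodd, hFodd]; exact hlt
        rw [hk1', hgodd]; simp [hk1]
      · have hk0 : k (2*m) = 0 := kpos (2*m) hgt
        have hk0' : k (2*m+1) = 0 := by
          apply kpos
          rw [hFodd, hFodd]; exact hgt
        rw [hk0', hgodd]; simp [hk0]

lemma geom_half_sum (n : ℕ) : ∑ i ∈ Finset.range n, ((1:ℝ)/2)^(i+1) = 1 - (1/2)^n := by
  induction n with
  | zero => simp
  | succ n ih =>
    rw [Finset.sum_range_succ, ih, pow_succ]
    ring

lemma bound_sum (T : ℕ) : ∑ t ∈ Finset.range T,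
    (if t % 2 = 0 then (0:ℝ) else if t = 1 then 1/2 else (1/2:ℝ)^((t-1)/2)) ≤ 3/2 := by
  classical
  have hb0 : ∀ t : ℕ, (0:ℝ) ≤
      (if t % 2 = 0 then (0:ℝ) else if t = 1 then 1/2 else (1/2:ℝ)^((t-1)/2)) := by
    intro t; split_ifs <;> positivity
  have h4 : ∀ m : ℕ, (if (2*m+1) % 2 = 0 then (0:ℝ)
      else if 2*m+1 = 1 then 1/2 else (1/2:ℝ)^((2*m+1-1)/2))
      = if m = 0 then (1/2:ℝ) else (1/2)^m := by
    intro m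
    rcases Nat.eq_zero_or_pos m with h | h
    · subst h; norm_num
    · rw [if_neg (by omega), if_neg (by omega), if_neg (by omega)]
      congr 1
      omega
  have h1 : ∑ t ∈ (Finset.range T).filter (fun t => ¬ t % 2 = 0),
      (if t % 2 = 0 then (0:ℝ) else if t = 1 then 1/2 else (1/2:ℝ)^((t-1)/2))
      = ∑ t ∈ Finset.range T,
      (if t % 2 = 0 then (0:ℝ) else if t = 1 then 1/2 else (1/2:ℝ)^((t-1)/2)) := by
    refine Finset.sum_filter_of_ne fun t _ hne => ?_
    intro hmod
    exact hne (by rw [if_pos hmod])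
  rw [← h1]
  have h2 : (Finset.range T).filter (fun t => ¬ t % 2 = 0)
      ⊆ (Finset.range T).image (fun m => 2*m+1) := by
    intro t ht
    simp only [Finset.mem_filter, Finset.mem_range] at ht
    exact Finset.mem_image.2 ⟨t/2, Finset.mem_range.2 (by omega), by omega⟩
  calc ∑ t ∈ (Finset.range T).filter (fun t => ¬ t % 2 = 0),
      (if t % 2 = 0 then (0:ℝ) else if t = 1 then 1/2 else (1/2:ℝ)^((t-1)/2))
      ≤ ∑ t ∈ (Finset.range T).image (fun m => 2*m+1),
        (if t % 2 = 0 then (0:ℝ) else if t = 1 then 1/2 else (1/2:ℝ)^((t-1)/2)) :=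
        Finset.sum_le_sum_of_subset_of_nonneg h2 (fun i _ _ => hb0 i)
    _ = ∑ m ∈ Finset.range T, (if m = 0 then (1/2:ℝ) else (1/2)^m) := by
        rw [Finset.sum_image (by intro x _ y _ h; simp only at h; omega)]
        exact Finset.sum_congr rfl fun m _ => h4 m
    _ ≤ 3/2 := by
        cases T with
        | zero => norm_num
        | succ n =>
          rw [Finset.sum_range_succ']
          have e1 : ∀ i : ℕ, (if i + 1 = 0 then (1/2:ℝ) else (1/2)^(i+1)) = (1/2:ℝ)^(i+1) :=
            fun i => by rw [if_neg (by omega)]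
          rw [if_pos rfl]
          have e2 : ∑ i ∈ Finset.range n, (if i + 1 = 0 then (1/2:ℝ) else (1/2)^(i+1))
              = ∑ i ∈ Finset.range n, ((1:ℝ)/2)^(i+1) :=
            Finset.sum_congr rfl fun i _ => e1 i
          rw [e2, geom_half_sum]
          have : (0:ℝ) ≤ (1/2:ℝ)^n := by positivity
          linarith


end Helpers

/-- **linear regret of the single-stream version against an adaptive
opponent.** The player has `N = 2` strategies and uses the single-stream version: a single
stream `ε_1, ε_2, …` of i.i.d. Rademacher variables, with uniform tie-breaking variables
`u t`, all jointly independent. Time is 0-indexed: at even time `t` (the paper's odd round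
`t+1`) the opponent plays `g_t = (0,0)`; at odd time `t` (the paper's even round `t+1`) the
opponent plays `(0, 1 − 0.1^{t+1})` if the player's previous move was strategy `0`, and
`(1 − 0.1^{t+1}, 0)` otherwise. Then the expected regret satisfies
`E[R_T] ≥ 0.225·T − 2` for every `T`. -/
theorem single_stream_linear_regret
    {Ω : Type*} [MeasurableSpace Ω] (μ : Measure Ω) [IsProbabilityMeasure μ]
    (ε : ℕ → Ω → ℝ) (u : ℕ → Ω → ℝ)
    (hεmeas : ∀ t, Measurable (ε t)) (humeas : ∀ t, Measurable (u t))
    (hεRad : ∀ t, μ {ω | ε t ω = 1} = 1 / 2 ∧ μ {ω | ε t ω = -1} = 1 / 2)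
    (huUnif : ∀ t, μ.map (u t) = volume.restrict (Set.Ico (0 : ℝ) 1))
    (hIndep : iIndepFun
        (fun (p : ℕ ⊕ ℕ) (ω : Ω) => Sum.elim (fun n => ε n ω) (fun n => u n ω) p) μ)
    (k : ℕ → Ω → Fin 2) (g : ℕ → Ω → Fin 2 → ℝ)
    (hgEven : ∀ t ω j, t % 2 = 0 → g t ω j = 0)
    (hgOdd : ∀ t ω (j : Fin 2), t % 2 = 1 →
        g t ω j = (if k (t - 1) ω = 0
          then (if j = 1 then 1 - (0.1 : ℝ) ^ (t + 1) else 0)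
          else (if j = 0 then 1 - (0.1 : ℝ) ^ (t + 1) else 0)))
    (hplay : ∀ t ω, k t ω = pick (argmaxSet (fun j =>
        ∑ τ ∈ Finset.range t, (1 + ε τ ω) * g τ ω j)) (u t ω)) :
    ∀ T : ℕ, (0.225 : ℝ) * T - 2
      ≤ ∫ ω, ((⨆ j : Fin 2, ∑ t ∈ Finset.range T, g t ω j)
          - ∑ t ∈ Finset.range T, g t ω (k t ω)) ∂μ := by
  intro T
  -- measurability of k
  have hkmeas : ∀ t, Measurable (k t) := by
    intro t
    induction t using Nat.strong_induction_on with
    | _ t ih =>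
      have hgm : ∀ τ, τ < t → ∀ j, Measurable (fun ω => g τ ω j) := by
        intro τ hτ j
        rcases Nat.mod_two_eq_zero_or_one τ with hp2 | hp2
        · have h0 : (fun ω => g τ ω j) = fun _ => 0 := funext fun ω => hgEven τ ω j hp2
          rw [h0]; exact measurable_const
        · have hτ1 : τ - 1 < t := by omega
          have hkm : Measurable (k (τ-1)) := ih (τ-1) hτ1
          have h0 : (fun ω => g τ ω j) = fun ω => if k (τ-1) ω = 0
              then (if j = 1 then 1 - (0.1:ℝ)^(τ+1) else 0)
              else (if j = 0 then 1 - (0.1:ℝ)^(τ+1) else 0) :=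
            funext fun ω => hgOdd τ ω j hp2
          rw [h0]
          exact Measurable.ite (hkm (measurableSet_singleton 0)) measurable_const
            measurable_const
      have h0 : k t = fun ω => (fun p : (Fin 2 → ℝ) × ℝ => pick (argmaxSet p.1) p.2)
          ((fun j => ∑ τ ∈ Finset.range t, (1 + ε τ ω) * g τ ω j), u t ω) :=
        funext fun ω => hplay t ω
      rw [h0]
      refine measurable_pickArgmax.comp (Measurable.prodMk ?_ (humeas t))
      refine measurable_pi_lambda _ fun j => ?_
      exact Finset.measurable_sum _ fun τ hτ =>
        ((measurable_const.add (hεmeas τ)).mul (hgm τ (Finset.mem_range.1 hτ) j))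
  have hgmeas : ∀ τ j, Measurable (fun ω => g τ ω j) := by
    intro τ j
    rcases Nat.mod_two_eq_zero_or_one τ with hp2 | hp2
    · have h0 : (fun ω => g τ ω j) = fun _ => 0 := funext fun ω => hgEven τ ω j hp2
      rw [h0]; exact measurable_const
    · have h0 : (fun ω => g τ ω j) = fun ω => if k (τ-1) ω = 0
          then (if j = 1 then 1 - (0.1:ℝ)^(τ+1) else 0)
          else (if j = 0 then 1 - (0.1:ℝ)^(τ+1) else 0) :=
        funext fun ω => hgOdd τ ω j hp2
      rw [h0]
      exact Measurable.ite ((hkmeas (τ-1)) (measurableSet_singleton 0)) measurable_const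
        measurable_const
  -- bounds on g
  have hg01 : ∀ t ω j, 0 ≤ g t ω j ∧ g t ω j ≤ 1 := by
    intro t ω j
    rcases Nat.mod_two_eq_zero_or_one t with hp2 | hp2
    · rw [hgEven t ω j hp2]; norm_num
    · have key1 : (0.1:ℝ)^(t+1) ≤ 1 := pow_le_one₀ (by norm_num) (by norm_num)
      have key2 : (0:ℝ) ≤ (0.1:ℝ)^(t+1) := by positivity
      rw [hgOdd t ω j hp2]
      split_ifs <;> constructor <;> linarith
  -- measurability of the paid-off sequence
  have hgkmeas : ∀ t, Measurable (fun ω => g t ω (k t ω)) := by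
    intro t
    rcases Nat.mod_two_eq_zero_or_one t with hp2 | hp2
    · have h0 : (fun ω => g t ω (k t ω)) = fun _ => 0 :=
        funext fun ω => hgEven t ω (k t ω) hp2
      rw [h0]; exact measurable_const
    · have h0 : (fun ω => g t ω (k t ω)) = fun ω => if k (t-1) ω = 0
          then (if k t ω = 1 then 1 - (0.1:ℝ)^(t+1) else 0)
          else (if k t ω = 0 then 1 - (0.1:ℝ)^(t+1) else 0) :=
        funext fun ω => hgOdd t ω (k t ω) hp2
      rw [h0]
      exact Measurable.ite ((hkmeas (t-1)) (measurableSet_singleton 0))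
        (Measurable.ite ((hkmeas t) (measurableSet_singleton 1)) measurable_const
          measurable_const)
        (Measurable.ite ((hkmeas t) (measurableSet_singleton 0)) measurable_const
          measurable_const)
  have hgkint : ∀ t, Integrable (fun ω => g t ω (k t ω)) μ := by
    intro t
    refine Integrable.mono' (integrable_const 1) (hgkmeas t).aestronglyMeasurable
      (Filter.Eventually.of_forall fun ω => ?_)
    rw [Real.norm_eq_abs, abs_le]
    exact ⟨by linarith [(hg01 t ω (k t ω)).1], (hg01 t ω (k t ω)).2⟩
  -- the sums
  set S : Fin 2 → Ω → ℝ := fun j ω => ∑ t ∈ Finset.range T, g t ω j with hS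
  set G : Ω → ℝ := fun ω => ∑ t ∈ Finset.range T, g t ω (k t ω) with hG
  have hSmeas : ∀ j, Measurable (S j) := fun j =>
    Finset.measurable_sum _ fun t _ => hgmeas t j
  have hGint : Integrable G μ := integrable_finset_sum _ fun t _ => hgkint t
  have hSint : ∀ j, Integrable (S j) μ := by
    intro j
    refine Integrable.mono' (integrable_const (T : ℝ)) (hSmeas j).aestronglyMeasurable
      (Filter.Eventually.of_forall fun ω => ?_)
    rw [Real.norm_eq_abs, abs_le]
    constructor
    · have : (0:ℝ) ≤ S j ω := Finset.sum_nonneg fun t _ => (hg01 t ω j).1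
      have hT : (0:ℝ) ≤ (T:ℝ) := by positivity
      linarith
    · calc S j ω ≤ ∑ t ∈ Finset.range T, (1:ℝ) :=
            Finset.sum_le_sum fun t _ => (hg01 t ω j).2
        _ = T := by simp
  -- pointwise sum of the two coordinates
  have hgsum : ∀ t ω, g t ω 0 + g t ω 1 = (if t % 2 = 1 then 1 - (0.1:ℝ)^(t+1) else 0) := by
    intro t ω
    rcases Nat.mod_two_eq_zero_or_one t with hp2 | hp2
    · rw [hgEven t ω 0 hp2, hgEven t ω 1 hp2, if_neg (by omega)]
      ring
    · rw [hgOdd t ω 0 hp2, hgOdd t ω 1 hp2, if_pos hp2]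
      rcases fin2_cases (k (t-1) ω) with h | h <;> simp [h]
  set W : ℝ := ∑ t ∈ Finset.range T, (if t % 2 = 1 then 1 - (0.1:ℝ)^(t+1) else 0) with hW
  have hSsum : ∀ ω, S 0 ω + S 1 ω = W := by
    intro ω
    rw [hS, hW, ← Finset.sum_add_distrib]
    exact Finset.sum_congr rfl fun t _ => hgsum t ω
  -- pointwise lower bound for the regret
  have hpoint : ∀ ω, W/2 - G ω ≤ (⨆ j : Fin 2, ∑ t ∈ Finset.range T, g t ω j)
      - ∑ t ∈ Finset.range T, g t ω (k t ω) := by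
    intro ω
    have h1 : (⨆ j : Fin 2, ∑ t ∈ Finset.range T, g t ω j) = max (S 0 ω) (S 1 ω) :=
      isup_fin2 _
    rw [h1]
    have h2 : W/2 ≤ max (S 0 ω) (S 1 ω) := by
      rcases le_total (S 0 ω) (S 1 ω) with h | h
      · have := hSsum ω
        have := le_max_right (S 0 ω) (S 1 ω)
        linarith
      · have := hSsum ω
        have := le_max_left (S 0 ω) (S 1 ω)
        linarith
    have : (∑ t ∈ Finset.range T, g t ω (k t ω)) = G ω := rfl
    linarith
  -- integrability of the integrand
  have hXint : Integrable (fun ω => (⨆ j : Fin 2, ∑ t ∈ Finset.range T, g t ω j)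
      - ∑ t ∈ Finset.range T, g t ω (k t ω)) μ := by
    have h1 : (fun ω => (⨆ j : Fin 2, ∑ t ∈ Finset.range T, g t ω j)
        - ∑ t ∈ Finset.range T, g t ω (k t ω)) = fun ω => max (S 0 ω) (S 1 ω) - G ω := by
      funext ω
      rw [isup_fin2]
    rw [h1]
    have hMint : Integrable (fun ω => max (S 0 ω) (S 1 ω)) μ := by
      refine Integrable.mono' (integrable_const (T : ℝ))
        (((hSmeas 0).max (hSmeas 1)).aestronglyMeasurable)
        (Filter.Eventually.of_forall fun ω => ?_)
      have h00 : (0:ℝ) ≤ S 0 ω := Finset.sum_nonneg fun t _ => (hg01 t ω 0).1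
      have hb : ∀ j, S j ω ≤ (T:ℝ) := by
        intro j
        calc S j ω ≤ ∑ t ∈ Finset.range T, (1:ℝ) :=
              Finset.sum_le_sum fun t _ => (hg01 t ω j).2
          _ = T := by simp
      rw [Real.norm_eq_abs, abs_le]
      constructor
      · have := le_max_left (S 0 ω) (S 1 ω); linarith
      · exact max_le (hb 0) (hb 1)
    exact hMint.sub hGint
  -- first inequality: E[X] ≥ W/2 - E[G]
  have hstep1 : W/2 - ∫ ω, G ω ∂μ ≤ ∫ ω, ((⨆ j : Fin 2, ∑ t ∈ Finset.range T, g t ω j)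
      - ∑ t ∈ Finset.range T, g t ω (k t ω)) ∂μ := by
    have h2 : ∫ ω, (W/2 - G ω) ∂μ = W/2 - ∫ ω, G ω ∂μ := by
      rw [integral_sub (integrable_const _) hGint, integral_const]
      simp
    rw [← h2]
    exact integral_mono ((integrable_const _).sub hGint) hXint hpoint
  -- the a.e. good set
  have hae : ∀ᵐ ω ∂μ, (∀ n, ε n ω = 1 ∨ ε n ω = -1) ∧ (∀ n, u n ω ∈ Set.Ico (0:ℝ) 1) := by
    have h1 : ∀ᵐ ω ∂μ, ∀ n, ε n ω = 1 ∨ ε n ω = -1 := by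
      rw [MeasureTheory.ae_all_iff]
      intro n
      have hmeas1 : MeasurableSet {ω | ε n ω = 1} := hεmeas n (measurableSet_singleton 1)
      have hmeas2 : MeasurableSet {ω | ε n ω = -1} := hεmeas n (measurableSet_singleton (-1))
      have hdisj : Disjoint {ω | ε n ω = 1} {ω | ε n ω = -1} := by
        rw [Set.disjoint_left]
        intro ω ha hb
        simp only [Set.mem_setOf_eq] at ha hb
        rw [ha] at hb
        norm_num at hb
      have hU : μ ({ω | ε n ω = 1} ∪ {ω | ε n ω = -1}) = 1 := by
        rw [measure_union hdisj hmeas2, (hεRad n).1, (hεRad n).2, ENNReal.add_halves]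
      rw [ae_iff]
      have hcompl := measure_compl (hmeas1.union hmeas2) (measure_ne_top μ _)
      rw [hU, measure_univ, tsub_self] at hcompl
      exact hcompl
    have h2 : ∀ᵐ ω ∂μ, ∀ n, u n ω ∈ Set.Ico (0:ℝ) 1 := by
      rw [MeasureTheory.ae_all_iff]
      intro n
      rw [ae_iff]
      have hset : {ω | ¬ u n ω ∈ Set.Ico (0:ℝ) 1} = u n ⁻¹' (Set.Ico (0:ℝ) 1)ᶜ := rfl
      rw [hset, ← Measure.map_apply (humeas n) measurableSet_Ico.compl, huUnif n,
        Measure.restrict_apply measurableSet_Ico.compl, Set.compl_inter_self]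
      exact measure_empty
    exact h1.and h2
  -- per-round expected gain bound
  have hval : ∀ n (s : Set ℝ), MeasurableSet s → μ (u n ⁻¹' s) = volume (s ∩ Set.Ico 0 1) := by
    intro n s hs
    rw [← Measure.map_apply (humeas n) hs, huUnif n, Measure.restrict_apply hs]
  have hterm : ∀ t, ∫ ω, g t ω (k t ω) ∂μ ≤
      (if t % 2 = 0 then 0 else if t = 1 then 1/2 else (1/2:ℝ)^((t-1)/2)) := by
    intro t
    rcases Nat.mod_two_eq_zero_or_one t with hp2 | hp2
    · rw [if_pos hp2]
      have h0 : (fun ω => g t ω (k t ω)) = fun _ => (0:ℝ) :=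
        funext fun ω => hgEven t ω _ hp2
      rw [h0, integral_const]
      simp
    · rw [if_neg (by omega)]
      by_cases ht1 : t = 1
      · subst ht1
        rw [if_pos rfl]
        set B : Set Ω := (u 0 ⁻¹' (Set.Iio (1/2)) ∩ u 1 ⁻¹' (Set.Iio (1/2))ᶜ)
            ∪ (u 0 ⁻¹' (Set.Iio (1/2))ᶜ ∩ u 1 ⁻¹' (Set.Iio (1/2))) with hBdef
        have hBmeas : MeasurableSet B :=
          (((humeas 0) measurableSet_Iio).inter ((humeas 1) measurableSet_Iio.compl)).union
            (((humeas 0) measurableSet_Iio.compl).inter ((humeas 1) measurableSet_Iio))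
        have hbound : ∀ᵐ ω ∂μ, g 1 ω (k 1 ω) ≤ B.indicator (fun _ => (1:ℝ)) ω := by
          filter_upwards [hae] with ω hω
          by_cases hB : ω ∈ B
          · rw [Set.indicator_of_mem hB]
            exact (hg01 1 ω _).2
          · rw [Set.indicator_of_notMem hB]
            obtain ⟨hk0, hk1, _⟩ := dynamics (fun n => ε n ω) (fun n => u n ω) hω.1 hω.2
              (fun s => k s ω) (fun s j => g s ω j) (fun s j h => hgEven s ω j h)
              (fun s j h => hgOdd s ω j h) (fun s => hplay s ω)
          -- on the complement of B the two tie breaks agree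
            have hkk : k 1 ω = k 0 ω := by
              rw [hk0, hk1]
              by_cases h0 : u 0 ω < 1/2 <;> by_cases h1 : u 1 ω < 1/2
              · rw [if_pos h0, if_pos h1]
              · exact absurd (show ω ∈ B from Or.inl ⟨h0, h1⟩) hB
              · exact absurd (show ω ∈ B from Or.inr ⟨h0, h1⟩) hB
              · rw [if_neg h0, if_neg h1]
            have hg1 := hgOdd 1 ω (k 1 ω) (by norm_num)
            rcases fin2_cases (k 0 ω) with h | h
            · rw [hg1]
              have h' : (1:ℕ) - 1 = 0 := rfl
              rw [h', if_pos h, hkk, h]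
              norm_num
            · rw [hg1]
              have h' : (1:ℕ) - 1 = 0 := rfl
              rw [h', if_neg (by rw [h]; exact (by omega : (1 : Fin 2) ≠ 0)), hkk, h]
              norm_num
        have hmono := integral_mono_ae (hgkint 1)
          ((integrable_const (1:ℝ)).indicator hBmeas) hbound
        rw [integral_indicator_const (1:ℝ) hBmeas, smul_eq_mul, mul_one, measureReal_def] at hmono
        have hv1 : ∀ n, μ (u n ⁻¹' (Set.Iio (1/2))) = ENNReal.ofReal (1/2) := by
          intro n
          rw [hval n _ measurableSet_Iio]
          have hseq : Set.Iio (1/2:ℝ) ∩ Set.Ico 0 1 = Set.Ico (0:ℝ) (1/2) := by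
            ext x
            simp only [Set.mem_inter_iff, Set.mem_Iio, Set.mem_Ico]
            constructor
            · rintro ⟨ha, hb, hc⟩; exact ⟨hb, ha⟩
            · rintro ⟨ha, hb⟩; exact ⟨hb, ha, by linarith⟩
          rw [hseq, Real.volume_Ico]
          norm_num
        have hv2 : ∀ n, μ (u n ⁻¹' (Set.Iio (1/2))ᶜ) = ENNReal.ofReal (1/2) := by
          intro n
          rw [hval n _ measurableSet_Iio.compl, Set.compl_Iio]
          have hseq : Set.Ici (1/2:ℝ) ∩ Set.Ico 0 1 = Set.Ico (1/2:ℝ) 1 := by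
            ext x
            simp only [Set.mem_inter_iff, Set.mem_Ici, Set.mem_Ico]
            constructor
            · rintro ⟨ha, _, hc⟩; exact ⟨ha, hc⟩
            · rintro ⟨ha, hb⟩; exact ⟨ha, by linarith, hb⟩
          rw [hseq, Real.volume_Ico]
          norm_num
        have hpair : ∀ (s0 s1 : Set ℝ), MeasurableSet s0 → MeasurableSet s1 →
            μ (u 0 ⁻¹' s0 ∩ u 1 ⁻¹' s1) = μ (u 0 ⁻¹' s0) * μ (u 1 ⁻¹' s1) := by
          intro s0 s1 h0 h1
          have hind := hIndep.indepFun (i := Sum.inr 0) (j := Sum.inr 1) (by simp)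
          exact hind.measure_inter_preimage_eq_mul s0 s1 h0 h1
        have hμB : μ B ≤ ENNReal.ofReal (1/2) := by
          calc μ B ≤ μ (u 0 ⁻¹' (Set.Iio (1/2)) ∩ u 1 ⁻¹' (Set.Iio (1/2))ᶜ)
              + μ (u 0 ⁻¹' (Set.Iio (1/2))ᶜ ∩ u 1 ⁻¹' (Set.Iio (1/2))) := measure_union_le _ _
            _ = ENNReal.ofReal (1/2) * ENNReal.ofReal (1/2)
                + ENNReal.ofReal (1/2) * ENNReal.ofReal (1/2) := by
                rw [hpair _ _ measurableSet_Iio measurableSet_Iio.compl,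
                  hpair _ _ measurableSet_Iio.compl measurableSet_Iio, hv1 0, hv2 1, hv2 0,
                  hv1 1]
            _ = ENNReal.ofReal (1/2) := by
                rw [← ENNReal.ofReal_mul (by norm_num),
                  ← ENNReal.ofReal_add (by norm_num) (by norm_num)]
                norm_num
        have htr : (μ B).toReal ≤ 1/2 := by
          have h := ENNReal.toReal_mono ENNReal.ofReal_ne_top hμB
          rw [ENNReal.toReal_ofReal (by norm_num)] at h
          exact h
        linarith
      · rw [if_neg ht1]
        have htm : t = 2*(t/2) + 1 := by omega
        set m := t / 2 with hm
        have hm1 : 1 ≤ m := by omega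
        set A : Set Ω := ⋂ i ∈ Finset.range m, (ε (2*i+1)) ⁻¹' {(-1:ℝ)} with hAdef
        have hAmeas : MeasurableSet A :=
          Finset.measurableSet_biInter _ fun i _ => hεmeas (2*i+1) (measurableSet_singleton _)
        have hbound : ∀ᵐ ω ∂μ, g t ω (k t ω) ≤ A.indicator (fun _ => (1:ℝ)) ω := by
          filter_upwards [hae] with ω hω
          by_cases hA : ω ∈ A
          · rw [Set.indicator_of_mem hA]
            exact (hg01 t ω _).2
          · rw [Set.indicator_of_notMem hA]
            obtain ⟨_, _, hlead⟩ := dynamics (fun n => ε n ω) (fun n => u n ω) hω.1 hω.2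
              (fun s => k s ω) (fun s j => g s ω j) (fun s j h => hgEven s ω j h)
              (fun s j h => hgOdd s ω j h) (fun s => hplay s ω)
            have hex : ∃ i, i < m ∧ ε (2*i+1) ω = 1 := by
              by_contra hcon
              push_neg at hcon
              apply hA
              rw [hAdef]
              refine Set.mem_iInter₂.2 fun i hi => ?_
              rcases hω.1 (2*i+1) with h | h
              · exact absurd h (hcon i (Finset.mem_range.1 hi))
              · exact h
            have := hlead m hex
            rw [htm]
            exact le_of_eq this
        have hmono := integral_mono_ae (hgkint t)
          ((integrable_const (1:ℝ)).indicator hAmeas) hbound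
        rw [integral_indicator_const (1:ℝ) hAmeas, smul_eq_mul, mul_one, measureReal_def] at hmono
        have hμA : μ A = ((1:ENNReal)/2)^m := by
          have key := hIndep.measure_inter_preimage_eq_mul
            (S := (Finset.range m).image (fun i => Sum.inl (2*i+1)))
            (sets := fun _ => {(-1:ℝ)}) (fun i _ => measurableSet_singleton _)
          have hset : (⋂ p ∈ (Finset.range m).image (fun i : ℕ => (Sum.inl (2*i+1) : ℕ ⊕ ℕ)),
              (fun ω => Sum.elim (fun n => ε n ω) (fun n => u n ω) p) ⁻¹' {(-1:ℝ)}) = A := by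
            rw [hAdef]
            ext ω
            simp only [Set.mem_iInter, Finset.mem_image, Finset.mem_range, Set.mem_preimage,
              Set.mem_singleton_iff, Sum.elim_inl]
            constructor
            · intro h i hi
              exact h (Sum.inl (2*i+1)) ⟨i, hi, rfl⟩
            · rintro h p ⟨i, hi, rfl⟩
              exact h i hi
          have hprod : ∏ p ∈ (Finset.range m).image (fun i : ℕ => (Sum.inl (2*i+1) : ℕ ⊕ ℕ)),
              μ ((fun ω => Sum.elim (fun n => ε n ω) (fun n => u n ω) p) ⁻¹' {(-1:ℝ)})
              = ((1:ENNReal)/2)^m := by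
            rw [Finset.prod_image (by intro x _ y _ h; injection h with h'; omega)]
            have hfac : ∀ i : ℕ, μ ((fun ω => Sum.elim (fun n => ε n ω) (fun n => u n ω)
                (Sum.inl (2*i+1) : ℕ ⊕ ℕ)) ⁻¹' {(-1:ℝ)}) = 1/2 := by
              intro i
              have hseteq : ((fun ω => Sum.elim (fun n => ε n ω) (fun n => u n ω)
                  (Sum.inl (2*i+1) : ℕ ⊕ ℕ)) ⁻¹' {(-1:ℝ)}) = {ω | ε (2*i+1) ω = -1} := rfl
              rw [hseteq]
              exact (hεRad (2*i+1)).2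
            rw [Finset.prod_congr rfl fun i _ => hfac i, Finset.prod_const,
              Finset.card_range]
          rw [hset] at key
          rw [key, hprod]
        rw [hμA] at hmono
        have htr : (((1:ENNReal)/2)^m).toReal = (1/2:ℝ)^m := by
          rw [ENNReal.toReal_pow]
          norm_num
        rw [htr] at hmono
        have hexp : (t-1)/2 = m := by omega
        rw [hexp]
        exact hmono
  -- sum of the bounds
  have hsumb : ∑ t ∈ Finset.range T,
      (if t % 2 = 0 then (0:ℝ) else if t = 1 then 1/2 else (1/2:ℝ)^((t-1)/2)) ≤ 3/2 :=
    bound_sum T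
  have hstep2 : ∫ ω, G ω ∂μ ≤ 3/2 := by
    rw [hG, integral_finset_sum _ fun t _ => hgkint t]
    exact le_trans (Finset.sum_le_sum fun t _ => hterm t) hsumb
  -- lower bound for W
  have hWbound : (0.99:ℝ) * ((T/2 : ℕ) : ℝ) ≤ W := by
    have hcount : ∀ n : ℕ, ∑ t ∈ Finset.range n, (if t % 2 = 1 then (1:ℝ) else 0)
        = ((n/2 : ℕ) : ℝ) := by
      intro n
      induction n with
      | zero => simp
      | succ n ih =>
        rw [Finset.sum_range_succ, ih]
        have hnat : (n+1)/2 = n/2 + (if n % 2 = 1 then 1 else 0) := by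
          rcases Nat.mod_two_eq_zero_or_one n with h | h <;> simp [h] <;> omega
        rw [hnat]
        rcases Nat.mod_two_eq_zero_or_one n with h | h <;> simp [h]
    rw [hW]
    calc (0.99:ℝ) * ((T/2 : ℕ) : ℝ)
        = ∑ t ∈ Finset.range T, (0.99 : ℝ) * (if t % 2 = 1 then (1:ℝ) else 0) := by
          rw [← Finset.mul_sum, hcount]
      _ ≤ ∑ t ∈ Finset.range T, (if t % 2 = 1 then 1 - (0.1:ℝ)^(t+1) else 0) := by
          refine Finset.sum_le_sum fun t _ => ?_
          rcases Nat.mod_two_eq_zero_or_one t with h | h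
          · simp [h]
          · rw [if_pos h, if_pos h, mul_one]
            have ht1 : 1 ≤ t := by omega
            have : (0.1:ℝ)^(t+1) ≤ (0.1:ℝ)^2 :=
              pow_le_pow_of_le_one (by norm_num) (by norm_num) (by omega)
            have h2 : (0.1:ℝ)^2 = 0.01 := by norm_num
            rw [h2] at this
            linarith
  -- conclusion
  have hhalf : ((T:ℝ) - 1)/2 ≤ ((T/2 : ℕ) : ℝ) := by
    have : T ≤ 2*(T/2) + 1 := by omega
    have := (Nat.cast_le (α := ℝ)).2 this
    push_cast at this
    linarith
  have hT0 : (0:ℝ) ≤ (T:ℝ) := by positivity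
  calc (0.225 : ℝ) * T - 2 ≤ W/2 - 3/2 := by nlinarith
    _ ≤ W/2 - ∫ ω, G ω ∂μ := by linarith
    _ ≤ _ := hstep1
end

section
/- Sampled fictitious play with Bernoulli(1/2) sampling has expected regret Ω(N) on a horizon T = 2N. Precisely, in the setting below with the explicit N × 2N payoff matrix — in odd round 2m−1 every strategy gets payoff −1 except strategy m, which gets 0; in even round 2m strategies 1 through m get payoff −1 and strategies m+1 through N get payoff 0 — the expected regret of sampled fictitious play over T = 2N rounds satisfies E[R_{2N}] ≥ N/2 − H_N, where H_N = Σ_{j=1}^N 1/j is the N-th harmonic number; in particular E[R_{2N}] = Ω(N) as N → ∞. -/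
open MeasureTheory ProbabilityTheory

/-- The counterexample payoff matrix, in 0-indexed time: at even time `t = 2m` (the paper's
odd round `2m+1`) every strategy gets `−1` except strategy `m`, which gets `0`; at odd time
`t = 2m+1` (the paper's even round `2m+2`) strategies `0,…,m` get `−1` and strategies
`m+1,…,N−1` get `0`. -/
noncomputable def counterexamplePayoff (N : ℕ) (t : ℕ) (j : Fin N) : ℝ :=
  if t % 2 = 0 then (if (j : ℕ) = t / 2 then 0 else -1)
  else (if (j : ℕ) ≤ t / 2 then -1 else 0)

section AuxSFP
open scoped ENNReal
variable {N : ℕ} [NeZero N]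


lemma G_even (N m : ℕ) (j : Fin N) :
    counterexamplePayoff N (2*m) j = if (j:ℕ) = m then 0 else -1 := by
  simp [counterexamplePayoff, Nat.mul_mod_right, Nat.mul_div_cancel_left _ (by norm_num : 0 < 2)]

lemma G_odd (N m : ℕ) (j : Fin N) :
    counterexamplePayoff N (2*m+1) j = if (j:ℕ) ≤ m then -1 else 0 := by
  have h1 : (2*m+1) % 2 = 1 := by omega
  have h2 : (2*m+1) / 2 = m := by omega
  simp [counterexamplePayoff, h1, h2]

lemma G_eq_of_ge {N : ℕ} (m τ : ℕ) (hτ : τ < 2*m) (j j' : Fin N)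
    (hj : m ≤ (j:ℕ)) (hj' : m ≤ (j':ℕ)) :
    counterexamplePayoff N τ j = counterexamplePayoff N τ j' := by
  have hd : τ / 2 < m := by omega
  unfold counterexamplePayoff
  by_cases h : τ % 2 = 0
  · rw [if_pos h, if_pos h, if_neg (show ¬((j:ℕ) = τ/2) by omega),
      if_neg (show ¬((j':ℕ) = τ/2) by omega)]
  · rw [if_neg h, if_neg h, if_neg (show ¬((j:ℕ) ≤ τ/2) by omega),
      if_neg (show ¬((j':ℕ) ≤ τ/2) by omega)]

lemma sum_range_two_mul {M : Type*} [AddCommMonoid M] (f : ℕ → M) (n : ℕ) :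
    ∑ t ∈ Finset.range (2*n), f t = ∑ m ∈ Finset.range n, (f (2*m) + f (2*m+1)) := by
  induction n with
  | zero => simp
  | succ n ih =>
    rw [Nat.mul_succ, Finset.sum_range_succ, Finset.sum_range_succ, Finset.sum_range_succ, ih]
    abel

lemma sum_G {N : ℕ} (j : Fin N) :
    ∑ t ∈ Finset.range (2*N), counterexamplePayoff N t j = (j:ℝ) + 1 - 2*N := by
  rw [sum_range_two_mul]
  have : ∀ m ∈ Finset.range N,
      counterexamplePayoff N (2*m) j + counterexamplePayoff N (2*m+1) j
        = ((if (j:ℕ) = m then (0:ℝ) else -1) + (if (j:ℕ) ≤ m then -1 else 0)) := by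
    intro m _; rw [G_even, G_odd]
  rw [Finset.sum_congr rfl this, Finset.sum_add_distrib]
  have hj : (j:ℕ) ∈ Finset.range N := Finset.mem_range.2 j.2
  have h1 : ∑ m ∈ Finset.range N, (if (j:ℕ) = m then (0:ℝ) else -1) = -(N:ℝ) + 1 := by
    have : ∀ m, (if (j:ℕ) = m then (0:ℝ) else -1) = -1 + (if m = (j:ℕ) then 1 else 0) := by
      intro m; by_cases h : (j:ℕ) = m
      · simp [h]
      · have h2 : ¬ (m = (j:ℕ)) := fun hh => h hh.symm
        simp [h, h2]
    rw [Finset.sum_congr rfl (fun m _ => this m), Finset.sum_add_distrib,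
      Finset.sum_ite_eq' _ _ (fun _ => (1:ℝ)), if_pos hj]
    simp
  have h2 : ∑ m ∈ Finset.range N, (if (j:ℕ) ≤ m then (-1:ℝ) else 0) = -((N:ℝ) - j) := by
    rw [Finset.sum_ite, Finset.sum_const, Finset.sum_const]
    have : (Finset.range N).filter (fun m => (j:ℕ) ≤ m) = Finset.Ico (j:ℕ) N := by
      ext m; simp [Finset.mem_filter, Finset.mem_range, Finset.mem_Ico, and_comm]
    rw [this, Nat.card_Ico]
    have : ((N - (j:ℕ) : ℕ) : ℝ) = (N:ℝ) - (j:ℕ) := by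
      rw [Nat.cast_sub (le_of_lt j.2)]
    simp [this]
  rw [h1, h2]; ring

lemma sup_G {N : ℕ} [NeZero N] :
    (⨆ j : Fin N, ∑ t ∈ Finset.range (2*N), counterexamplePayoff N t j) = -(N:ℝ) := by
  have hN : 0 < N := Nat.pos_of_ne_zero (NeZero.ne N)
  apply le_antisymm
  · apply ciSup_le
    intro j
    rw [sum_G]
    have : (j:ℝ) ≤ (N:ℝ) - 1 := by
      have := j.2
      have : (j:ℝ) + 1 ≤ (N:ℝ) := by exact_mod_cast this
      linarith
    linarith
  · have := le_ciSup (f := fun j : Fin N => ∑ t ∈ Finset.range (2*N), counterexamplePayoff N t j)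
      (Set.Finite.bddAbove (Set.finite_range _)) ⟨N-1, by omega⟩
    rw [sum_G] at this
    refine le_trans (le_of_eq ?_) this
    have : ((⟨N-1, by omega⟩ : Fin N) : ℝ) = (N:ℝ) - 1 := by
      simp only [Fin.val_mk]
      rw [Nat.cast_sub hN]; simp
    rw [this]; ring



lemma mem_argmaxSet {f : Fin N → ℝ} {j : Fin N} : j ∈ argmaxSet f ↔ ∀ j', f j' ≤ f j := by
  classical
  simp [argmaxSet]

lemma argmaxSet_nonempty (f : Fin N → ℝ) : (argmaxSet f).Nonempty := by
  obtain ⟨j, _, hj⟩ := Finset.exists_max_image Finset.univ f ⟨0, Finset.mem_univ 0⟩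
  exact ⟨j, mem_argmaxSet.2 fun j' => hj j' (Finset.mem_univ j')⟩

lemma pick_mem_or_eq_zero (s : Finset (Fin N)) (x : ℝ) : pick s x ∈ s ∨ pick s x = 0 := by
  unfold pick
  by_cases h : (⌊x * s.card⌋.toNat) < (s.sort (· ≤ ·)).length
  · left
    rw [List.getD_eq_getElem _ _ h]
    exact (Finset.mem_sort _).1 (List.getElem_mem _)
  · right
    rw [List.getD_eq_default _ _ (le_of_not_gt h)]

lemma measurable_pick (s : Finset (Fin N)) : Measurable (fun x : ℝ => pick s x) := by
  have : (fun x : ℝ => pick s x)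
      = (fun n : ℤ => (s.sort (· ≤ ·)).getD n.toNat 0) ∘ (fun x : ℝ => ⌊x * (s.card:ℝ)⌋) := rfl
  rw [this]
  exact measurable_from_top.comp (Int.measurable_floor.comp (measurable_id.mul_const _))

lemma volume_pick (s : Finset (Fin N)) (j : Fin N) (hj : j ∈ s) :
    volume ({x : ℝ | pick s x = j} ∩ Set.Ico 0 1) ≤ ((s.card : ℝ≥0∞))⁻¹ := by
  have hc : 0 < s.card := Finset.card_pos.2 ⟨j, hj⟩
  have hcR : (0:ℝ) < s.card := by exact_mod_cast hc
  set l := s.sort (· ≤ ·) with hl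
  have hlen : l.length = s.card := Finset.length_sort _
  have hnd : l.Nodup := s.sort_nodup _
  have hjl : j ∈ l := (Finset.mem_sort _).2 hj
  set i := l.idxOf j with hi
  have hil : i < l.length := List.idxOf_lt_length_iff.2 hjl
  have hsub : {x : ℝ | pick s x = j} ∩ Set.Ico 0 1
      ⊆ Set.Ico ((i:ℝ)/s.card) (((i:ℝ)+1)/s.card) := by
    rintro x ⟨hx, hx0, hx1⟩
    have hge : (0:ℝ) ≤ x * s.card := mul_nonneg hx0 hcR.le
    have hltc : x * s.card < s.card := by
      have := mul_lt_of_lt_one_left hcR hx1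
      linarith [mul_lt_mul_of_pos_right hx1 hcR]
    have hfl0 : (0:ℤ) ≤ ⌊x * (s.card:ℝ)⌋ := Int.floor_nonneg.2 hge
    set n := ⌊x * (s.card:ℝ)⌋.toNat with hn
    have hcast : (n : ℤ) = ⌊x * (s.card:ℝ)⌋ := Int.toNat_of_nonneg hfl0
    have hnle : (n:ℝ) ≤ x * s.card := by
      have := Int.floor_le (x * (s.card:ℝ))
      rw [← hcast] at this; exact_mod_cast this
    have hnlt : x * s.card < (n:ℝ) + 1 := by
      have := Int.lt_floor_add_one (x * (s.card:ℝ))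
      rw [← hcast] at this; exact_mod_cast this
    have hnlen : n < l.length := by
      rw [hlen]
      by_contra hcon
      push_neg at hcon
      have : (s.card : ℝ) ≤ (n:ℝ) := by exact_mod_cast hcon
      linarith
    have hget : l[n] = j := by
      have : pick s x = l.getD n 0 := rfl
      rw [← List.getD_eq_getElem _ _ hnlen, ← this, hx]
    have hni : n = i := by
      have h2 : l[i] = j := List.getElem_idxOf hil
      exact (hnd.getElem_inj_iff (hi := hnlen) (hj := hil)).1 (by rw [hget, h2])
    rw [← hni]
    constructor
    · rw [div_le_iff₀ hcR]; exact hnle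
    · rw [lt_div_iff₀ hcR]; exact hnlt
  calc volume ({x : ℝ | pick s x = j} ∩ Set.Ico 0 1)
      ≤ volume (Set.Ico ((i:ℝ)/s.card) (((i:ℝ)+1)/s.card)) := measure_mono hsub
    _ = ENNReal.ofReal (((i:ℝ)+1)/s.card - (i:ℝ)/s.card) := Real.volume_Ico
    _ = ((s.card : ℝ≥0∞))⁻¹ := by
        have : ((i:ℝ)+1)/s.card - (i:ℝ)/s.card = ((s.card:ℝ))⁻¹ := by
          field_simp
          ring
        rw [this, ENNReal.ofReal_inv_of_pos hcR, ENNReal.ofReal_natCast]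

lemma measurableSet_argmax {α : Type*} [MeasurableSpace α] (f : Fin N → α → ℝ)
    (hf : ∀ j, Measurable (f j)) (s : Finset (Fin N)) :
    MeasurableSet {a | argmaxSet (fun j => f j a) = s} := by
  classical
  have key : {a | argmaxSet (fun j => f j a) = s}
      = ⋂ j : Fin N, (if j ∈ s then (⋂ j' : Fin N, {a | f j' a ≤ f j a})
          else (⋂ j' : Fin N, {a | f j' a ≤ f j a})ᶜ) := by
    ext a
    have hT : ∀ j : Fin N, (a ∈ ⋂ j' : Fin N, {a | f j' a ≤ f j a}) ↔ (j ∈ argmaxSet (fun j => f j a)) := by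
      intro j
      rw [mem_argmaxSet]
      simp only [Set.mem_iInter, Set.mem_setOf_eq]
    simp only [Set.mem_setOf_eq, Set.mem_iInter, Finset.ext_iff]
    constructor
    · intro h j
      by_cases hjs : j ∈ s
      · rw [if_pos hjs]
        exact (hT j).2 ((h j).2 hjs)
      · rw [if_neg hjs]
        exact fun hcon => hjs ((h j).1 ((hT j).1 hcon))
    · intro h j
      have hj := h j
      by_cases hjs : j ∈ s
      · rw [if_pos hjs] at hj
        exact iff_of_true ((hT j).1 hj) hjs
      · rw [if_neg hjs] at hj
        exact iff_of_false (fun hc => hj ((hT j).2 hc)) hjs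
  rw [key]
  refine MeasurableSet.iInter fun j => ?_
  by_cases hjs : j ∈ s
  · rw [if_pos hjs]
    exact MeasurableSet.iInter fun j' => measurableSet_le (hf j') (hf j)
  · rw [if_neg hjs]
    exact (MeasurableSet.iInter fun j' => measurableSet_le (hf j') (hf j)).compl

end AuxSFP

open scoped ENNReal

/-- **Ω(N) lower bound at horizon `T = 2N`.** Sampled fictitious play with
fresh Bernoulli(1/2) sampling (`e t τ = ε^{(t)}_τ`) and uniform tie-breaking (`u t`), all
variables jointly independent, against the fixed (oblivious) counterexample payoff sequence
`g_1,…,g_{2N}` above, has expected regret at least `N/2 − H_N`, where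
`H_N = ∑_{j=1}^N 1/j` is the `N`-th harmonic number. -/
theorem sampled_fictitious_play_counterexample
    {Ω : Type*} [MeasurableSpace Ω] (μ : Measure Ω) [IsProbabilityMeasure μ]
    (N : ℕ) [NeZero N]
    (e : ℕ → ℕ → Ω → ℝ) (u : ℕ → Ω → ℝ)
    (hemeas : ∀ t τ, Measurable (e t τ)) (humeas : ∀ t, Measurable (u t))
    (heRad : ∀ t τ, μ {ω | e t τ ω = 1} = 1 / 2 ∧ μ {ω | e t τ ω = -1} = 1 / 2)
    (huUnif : ∀ t, μ.map (u t) = volume.restrict (Set.Ico (0 : ℝ) 1))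
    (hIndep : iIndepFun
        (fun (p : (ℕ × ℕ) ⊕ ℕ) (ω : Ω) =>
          Sum.elim (fun q => e q.1 q.2 ω) (fun n => u n ω) p) μ)
    (k : ℕ → Ω → Fin N)
    (hplay : ∀ t ω, k t ω = pick (argmaxSet (fun j =>
        ∑ τ ∈ Finset.range t, (1 + e t τ ω) * counterexamplePayoff N τ j)) (u t ω)) :
    (N : ℝ) / 2 - (∑ j ∈ Finset.range N, 1 / ((j : ℝ) + 1))
      ≤ ∫ ω, ((⨆ j : Fin N, ∑ t ∈ Finset.range (2 * N), counterexamplePayoff N t j)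
          - ∑ t ∈ Finset.range (2 * N), counterexamplePayoff N t (k t ω)) ∂μ := by
  classical
  have hN : 0 < N := Nat.pos_of_ne_zero (NeZero.ne N)
  set G := counterexamplePayoff N with hG
  set f : ℕ → Ω → Fin N → ℝ := fun t ω j =>
    ∑ τ ∈ Finset.range t, (1 + e t τ ω) * G τ j with hf
  have hfmeas : ∀ t j, Measurable (fun ω => f t ω j) := fun t j =>
    Finset.measurable_sum _ fun τ _ =>
      (measurable_const.add (hemeas t τ)).mul measurable_const
  have hplay' : ∀ t ω, k t ω = pick (argmaxSet (f t ω)) (u t ω) := hplay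
  set A : ℕ → Finset (Fin N) → Set Ω := fun t s => {ω | argmaxSet (f t ω) = s} with hA
  have hAmeas : ∀ t s, MeasurableSet (A t s) := fun t s =>
    measurableSet_argmax (fun j ω => f t ω j) (hfmeas t) s
  -- fibers of k are measurable
  have hkmeas : ∀ t j, MeasurableSet {ω | k t ω = j} := by
    intro t j
    have hrw : {ω | k t ω = j} = ⋃ s ∈ (Finset.univ : Finset (Finset (Fin N))),
        (A t s ∩ (u t) ⁻¹' {x | pick s x = j}) := by
      ext ω
      simp only [Set.mem_setOf_eq, Set.mem_iUnion, Set.mem_inter_iff, Set.mem_preimage,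
        Finset.mem_univ, exists_true_left]
      constructor
      · intro h
        exact ⟨argmaxSet (f t ω), rfl, by rw [hplay' t ω] at h; exact h⟩
      · rintro ⟨s, hs1, hs2⟩
        rw [hplay' t ω, show argmaxSet (f t ω) = s from hs1]
        exact hs2
    rw [hrw]
    exact MeasurableSet.biUnion (Finset.countable_toSet _) fun s _ =>
      (hAmeas t s).inter ((humeas t) ((measurable_pick s) (measurableSet_singleton j)))
  -- sum of fiber measures is 1
  have hkdisj : ∀ t, (↑(Finset.univ : Finset (Fin N)) : Set (Fin N)).PairwiseDisjoint
      (fun j => {ω | k t ω = j}) := by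
    intro t a _ b _ hab
    exact Set.disjoint_left.2 fun ω h1 h2 => hab ((h1 : k t ω = a).symm.trans h2)
  have hksum : ∀ t, ∑ j : Fin N, (μ {ω | k t ω = j}).toReal = 1 := by
    intro t
    have hU : ⋃ j ∈ (Finset.univ : Finset (Fin N)), {ω | k t ω = j} = Set.univ := by
      ext ω; simp
    have hm := (measure_biUnion_finset (μ := μ) (hkdisj t) (fun j _ => hkmeas t j)).symm
    rw [hU, measure_univ] at hm
    rw [← ENNReal.toReal_sum (fun j _ => measure_ne_top μ _), hm, ENNReal.toReal_one]
  -- integral formula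
  have hrep : ∀ t, (fun ω => G t (k t ω))
      = fun ω => ∑ j : Fin N, Set.indicator {ω' | k t ω' = j} (fun _ => G t j) ω := by
    intro t; funext ω
    rw [Finset.sum_eq_single (k t ω)]
    · exact (Set.indicator_of_mem rfl _).symm
    · intro j _ hj
      exact Set.indicator_of_notMem (fun h => hj ((h : k t ω = j).symm)) _
    · intro h; exact absurd (Finset.mem_univ _) h
  have hint : ∀ t, Integrable (fun ω => G t (k t ω)) μ := by
    intro t
    rw [hrep t]
    exact integrable_finset_sum _ fun j _ => (integrable_indicator_iff (hkmeas t j)).2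
      (integrableOn_const (measure_ne_top μ _))
  have hI : ∀ t, ∫ ω, G t (k t ω) ∂μ
      = ∑ j : Fin N, (μ {ω | k t ω = j}).toReal * G t j := by
    intro t
    rw [hrep t, integral_finset_sum _ (fun j _ => (integrable_indicator_iff (hkmeas t j)).2
      (integrableOn_const (measure_ne_top μ _)))]
    exact Finset.sum_congr rfl fun j _ => by
      rw [integral_indicator_const _ (hkmeas t j), smul_eq_mul]; rfl
  -- even-time probability bound
  have heven : ∀ m, ∀ hm : m < N,
      (μ {ω | k (2*m) ω = ⟨m, hm⟩}).toReal ≤ (((N - m : ℕ)) : ℝ)⁻¹ := by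
    intro m hm
    set jm : Fin N := ⟨m, hm⟩ with hjmdef
    set t := 2*m with htdef
    set S : Finset ((ℕ×ℕ) ⊕ ℕ) := (Finset.range t).image (fun τ => Sum.inl (t, τ)) with hS
    set T : Finset ((ℕ×ℕ) ⊕ ℕ) := ({Sum.inr t} : Finset ((ℕ×ℕ) ⊕ ℕ)) with hT
    have hST : Disjoint S T := by
      rw [Finset.disjoint_left]
      intro a haS haT
      obtain ⟨τ, _, rfl⟩ := Finset.mem_image.1 haS
      rw [hT, Finset.mem_singleton] at haT
      exact absurd haT (by simp)
    have hallmeas : ∀ i : (ℕ×ℕ)⊕ℕ,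
        Measurable (fun ω => Sum.elim (fun q => e q.1 q.2 ω) (fun n => u n ω) i) := by
      rintro (⟨a,b⟩|n)
      · exact hemeas a b
      · exact humeas n
    have hIF := hIndep.indepFun_finset S T hST hallmeas
    set φ : (S → ℝ) → Fin N → ℝ := fun v j => ∑ τ ∈ Finset.range t,
      (1 + (if h : Sum.inl (t, τ) ∈ S then v ⟨Sum.inl (t,τ), h⟩ else 0)) * G τ j with hφ
    have hφmeas : ∀ j, Measurable (fun v : S → ℝ => φ v j) := by
      intro j
      apply Finset.measurable_sum
      intro τ _
      apply Measurable.mul_const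
      apply Measurable.const_add
      by_cases h : Sum.inl (t, τ) ∈ S
      · simp only [dif_pos h]
        exact measurable_pi_apply _
      · simp only [dif_neg h]
        exact measurable_const
    have hFC : ∀ s : Finset (Fin N),
        (fun a (i : S) => Sum.elim (fun q => e q.1 q.2 a) (fun n => u n a) (i : (ℕ×ℕ)⊕ℕ))
          ⁻¹' {v | argmaxSet (φ v) = s} = A t s := by
      intro s
      ext ω
      have hφF : φ (fun i : S => Sum.elim (fun q => e q.1 q.2 ω) (fun n => u n ω)
          (i : (ℕ×ℕ)⊕ℕ)) = f t ω := by
        funext j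
        refine Finset.sum_congr rfl fun τ hτ => ?_
        have hmem : Sum.inl (t, τ) ∈ S := Finset.mem_image_of_mem _ hτ
        rw [dif_pos hmem]
        rfl
      simp only [Set.mem_preimage, Set.mem_setOf_eq, hφF, hA]
    have hkey : ∀ s : Finset (Fin N), μ (A t s ∩ {ω | pick s (u t ω) = jm})
        = μ (A t s) * μ {ω | pick s (u t ω) = jm} := by
      intro s
      have hCs : MeasurableSet {v : S → ℝ | argmaxSet (φ v) = s} :=
        measurableSet_argmax (fun j v => φ v j) hφmeas s
      have hDs : MeasurableSet {x : T → ℝ |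
          pick s (x ⟨Sum.inr t, Finset.mem_singleton_self _⟩) = jm} :=
        ((measurable_pick s).comp (measurable_pi_apply _)) (measurableSet_singleton jm)
      have h := hIF.measure_inter_preimage_eq_mul _ _ hCs hDs
      rw [hFC s] at h
      exact h
    have hterm : ∀ s : Finset (Fin N), μ (A t s ∩ {ω | pick s (u t ω) = jm})
        ≤ μ (A t s) * (((N - m : ℕ)) : ℝ≥0∞)⁻¹ := by
      intro s
      rcases Set.eq_empty_or_nonempty (A t s) with hAe|⟨ω₀, hω₀⟩
      · calc μ (A t s ∩ {ω | pick s (u t ω) = jm}) ≤ μ (A t s) :=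
              measure_mono Set.inter_subset_left
          _ = 0 := by rw [hAe, measure_empty]
          _ ≤ _ := zero_le
      · have hω₀' : argmaxSet (f t ω₀) = s := hω₀
        by_cases hjs : jm ∈ s
        · have hsubs : ∀ j : Fin N, m ≤ (j:ℕ) → j ∈ s := by
            intro j hj
            rw [← hω₀']
            rw [← hω₀'] at hjs
            have hmax := mem_argmaxSet.1 hjs
            refine mem_argmaxSet.2 fun j' => ?_
            have hc : f t ω₀ j = f t ω₀ jm :=
              Finset.sum_congr rfl fun τ hτ => by
                rw [hG, G_eq_of_ge m τ (Finset.mem_range.1 hτ) j jm hj (le_refl m)]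
            rw [hc]; exact hmax j'
          have hcard : (N - m : ℕ) ≤ s.card := by
            have hsub2 : Finset.Ico m N ⊆ s.image Fin.val := by
              intro a ha
              rw [Finset.mem_Ico] at ha
              exact Finset.mem_image.2 ⟨⟨a, ha.2⟩, hsubs _ ha.1, rfl⟩
            calc (N - m : ℕ) = (Finset.Ico m N).card := (Nat.card_Ico m N).symm
              _ ≤ (s.image Fin.val).card := Finset.card_le_card hsub2
              _ ≤ s.card := Finset.card_image_le
          have hBval : μ {ω | pick s (u t ω) = jm} ≤ (((N-m:ℕ)) : ℝ≥0∞)⁻¹ := by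
            have hpre : {ω | pick s (u t ω) = jm} = (u t)⁻¹' {x | pick s x = jm} := rfl
            have hms : MeasurableSet {x : ℝ | pick s x = jm} :=
              (measurable_pick s) (measurableSet_singleton jm)
            rw [hpre, ← Measure.map_apply (humeas t) hms, huUnif t,
              Measure.restrict_apply' measurableSet_Ico]
            refine le_trans (volume_pick s jm hjs) ?_
            exact ENNReal.inv_le_inv' (by exact_mod_cast hcard)
          calc μ (A t s ∩ {ω | pick s (u t ω) = jm})
              = μ (A t s) * μ {ω | pick s (u t ω) = jm} := hkey s
            _ ≤ μ (A t s) * (((N-m:ℕ)) : ℝ≥0∞)⁻¹ := mul_le_mul_right hBval _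
        · have hempty : A t s ∩ {ω | pick s (u t ω) = jm} = ∅ := by
            rw [Set.eq_empty_iff_forall_notMem]
            rintro ω ⟨hωA, hωB⟩
            have hωB' : pick s (u t ω) = jm := hωB
            rcases pick_mem_or_eq_zero s (u t ω) with hmem|h0
            · rw [hωB'] at hmem; exact hjs hmem
            · have hjm0 : jm = 0 := by rw [← hωB', h0]
              have hm0 : m = 0 := by
                have := congrArg Fin.val hjm0
                simpa [hjmdef] using this
              have hωA' : argmaxSet (f t ω) = s := hωA
              obtain ⟨j₁, hj₁⟩ := argmaxSet_nonempty (f t ω)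
              have hceq : f t ω jm = f t ω j₁ :=
                Finset.sum_congr rfl fun τ hτ => by
                  rw [hG, G_eq_of_ge m τ (Finset.mem_range.1 hτ) jm j₁ (le_refl m) (by omega)]
              have hjmmem : jm ∈ argmaxSet (f t ω) :=
                mem_argmaxSet.2 fun j' => hceq ▸ mem_argmaxSet.1 hj₁ j'
              rw [hωA'] at hjmmem
              exact hjs hjmmem
          rw [hempty, measure_empty]
          exact zero_le
    have hAsum : ∑ s ∈ (Finset.univ : Finset (Finset (Fin N))), μ (A t s) = 1 := by
      have hAU : ⋃ s ∈ (Finset.univ : Finset (Finset (Fin N))), A t s = Set.univ := by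
        ext ω
        simp only [Set.mem_iUnion, Finset.mem_univ, exists_true_left, Set.mem_univ, iff_true]
        exact ⟨argmaxSet (f t ω), rfl⟩
      have hAdisj : (↑(Finset.univ : Finset (Finset (Fin N))) :
          Set (Finset (Fin N))).PairwiseDisjoint (A t) := by
        intro a _ b _ hab
        exact Set.disjoint_left.2 fun ω h1 h2 =>
          hab ((h1 : argmaxSet (f t ω) = a).symm.trans h2)
      rw [← measure_biUnion_finset (μ := μ) hAdisj (fun s _ => hAmeas t s), hAU, measure_univ]
    have hfinal : μ {ω | k t ω = jm} ≤ (((N-m:ℕ)) : ℝ≥0∞)⁻¹ := by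
      have hcover : {ω | k t ω = jm} ⊆ ⋃ s ∈ (Finset.univ : Finset (Finset (Fin N))),
          (A t s ∩ {ω | pick s (u t ω) = jm}) := by
        intro ω h
        have h' : k t ω = jm := h
        simp only [Set.mem_iUnion, Finset.mem_univ, exists_true_left]
        refine ⟨argmaxSet (f t ω), rfl, ?_⟩
        rw [hplay' t ω] at h'
        exact h'
      calc μ {ω | k t ω = jm} ≤ ∑ s ∈ (Finset.univ : Finset (Finset (Fin N))),
            μ (A t s ∩ {ω | pick s (u t ω) = jm}) :=
          le_trans (measure_mono hcover) (measure_biUnion_finset_le _ _)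
        _ ≤ ∑ s ∈ (Finset.univ : Finset (Finset (Fin N))),
            μ (A t s) * (((N-m:ℕ)) : ℝ≥0∞)⁻¹ := Finset.sum_le_sum fun s _ => hterm s
        _ = (∑ s ∈ (Finset.univ : Finset (Finset (Fin N))), μ (A t s))
            * (((N-m:ℕ)) : ℝ≥0∞)⁻¹ := (Finset.sum_mul _ _ _).symm
        _ = (((N-m:ℕ)) : ℝ≥0∞)⁻¹ := by rw [hAsum, one_mul]
    have hne : (((N-m:ℕ)) : ℝ≥0∞)⁻¹ ≠ ⊤ :=
      ENNReal.inv_ne_top.2 (Nat.cast_ne_zero.2 (by omega))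
    have := ENNReal.toReal_mono hne hfinal
    rwa [ENNReal.toReal_inv, ENNReal.toReal_natCast] at this
  -- odd-time probability bound
  have hodd : ∀ m, m < N →
      (1:ℝ)/2 ≤ (μ {ω | (k (2*m+1) ω : ℕ) ≤ m}).toReal := by
    intro m hm
    have hsub : {ω | e (2*m+1) (2*m) ω = 1} ⊆ {ω | (k (2*m+1) ω : ℕ) ≤ m} := by
      intro ω he
      simp only [Set.mem_setOf_eq] at he ⊢
      rw [hplay' (2*m+1) ω]
      rcases pick_mem_or_eq_zero (argmaxSet (f (2*m+1) ω)) (u (2*m+1) ω) with hmem|h0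
      · set j := pick (argmaxSet (f (2*m+1) ω)) (u (2*m+1) ω) with hj
        by_contra hcon
        push_neg at hcon
        have hsplit : ∀ j' : Fin N, f (2*m+1) ω j'
            = (∑ τ ∈ Finset.range (2*m), (1 + e (2*m+1) τ ω) * G τ j')
              + (1 + e (2*m+1) (2*m) ω) * G (2*m) j' := by
          intro j'; rw [hf]; exact Finset.sum_range_succ _ _
        have hjm : f (2*m+1) ω j < f (2*m+1) ω ⟨m, hm⟩ := by
          rw [hsplit j, hsplit ⟨m, hm⟩]
          have hcommon : (∑ τ ∈ Finset.range (2*m), (1 + e (2*m+1) τ ω) * G τ j)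
              = ∑ τ ∈ Finset.range (2*m), (1 + e (2*m+1) τ ω) * G τ (⟨m, hm⟩ : Fin N) := by
            refine Finset.sum_congr rfl fun τ hτ => ?_
            rw [hG, G_eq_of_ge m τ (Finset.mem_range.1 hτ) j ⟨m, hm⟩ (le_of_lt hcon) (le_refl m)]
          rw [hcommon]
          have h1 : G (2*m) (⟨m, hm⟩ : Fin N) = 0 := by rw [hG, G_even]; simp
          have h2 : G (2*m) j = -1 := by
            rw [hG, G_even, if_neg (by omega)]
          rw [he, h1, h2]
          norm_num
        have := mem_argmaxSet.1 hmem ⟨m, hm⟩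
        linarith
      · rw [h0]
        simp
    have hle := measure_mono (μ := μ) hsub
    rw [(heRad (2*m+1) (2*m)).1] at hle
    have h2 := ENNReal.toReal_mono (measure_ne_top μ _) hle
    calc (1:ℝ)/2 = ((1/2 : ℝ≥0∞)).toReal := by simp
      _ ≤ _ := h2
  -- even-time integral bound
  have hIe : ∀ m, m < N → ∫ ω, G (2*m) (k (2*m) ω) ∂μ ≤ -1 + (((N - m : ℕ)) : ℝ)⁻¹ := by
    intro m hm
    rw [hI]
    have hterm : ∀ j : Fin N, (μ {ω | k (2*m) ω = j}).toReal * G (2*m) j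
        = -(μ {ω | k (2*m) ω = j}).toReal
          + (if j = ⟨m,hm⟩ then (μ {ω | k (2*m) ω = j}).toReal else 0) := by
      intro j
      rw [hG, G_even]
      by_cases h : (j:ℕ) = m
      · have hjj : j = ⟨m, hm⟩ := Fin.ext h
        simp [h, hjj]
      · have hjj : j ≠ ⟨m,hm⟩ := fun hh => h (by rw [hh])
        simp [h, hjj]
    rw [Finset.sum_congr rfl (fun j _ => hterm j), Finset.sum_add_distrib,
      Finset.sum_neg_distrib, hksum, Finset.sum_ite_eq' _ _
        (fun j => (μ {ω | k (2*m) ω = j}).toReal), if_pos (Finset.mem_univ _)]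
    have := heven m hm
    linarith
  -- odd-time integral bound
  have hIo : ∀ m, m < N → ∫ ω, G (2*m+1) (k (2*m+1) ω) ∂μ ≤ -(1/2) := by
    intro m hm
    rw [hI]
    have hterm : ∀ j : Fin N, (μ {ω | k (2*m+1) ω = j}).toReal * G (2*m+1) j
        = (if (j:ℕ) ≤ m then -(μ {ω | k (2*m+1) ω = j}).toReal else 0) := by
      intro j
      rw [hG, G_odd]
      by_cases h : (j:ℕ) ≤ m <;> simp [h]
    rw [Finset.sum_congr rfl (fun j _ => hterm j), ← Finset.sum_filter,
      Finset.sum_neg_distrib]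
    have key : ∑ j ∈ Finset.univ.filter (fun j : Fin N => (j:ℕ) ≤ m),
        (μ {ω | k (2*m+1) ω = j}).toReal = (μ {ω | (k (2*m+1) ω : ℕ) ≤ m}).toReal := by
      have hU2 : ⋃ j ∈ Finset.univ.filter (fun j : Fin N => (j:ℕ) ≤ m), {ω | k (2*m+1) ω = j}
          = {ω | (k (2*m+1) ω : ℕ) ≤ m} := by
        ext ω
        simp only [Set.mem_iUnion, Finset.mem_filter, Finset.mem_univ, true_and,
          Set.mem_setOf_eq]
        constructor
        · rintro ⟨j, hj1, hj2⟩
          rw [hj2]; exact hj1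
        · intro h; exact ⟨k (2*m+1) ω, h, rfl⟩
      rw [← hU2, measure_biUnion_finset (μ := μ)
        ((hkdisj (2*m+1)).subset (Finset.coe_subset.2 (Finset.filter_subset _ _))),
        ENNReal.toReal_sum (fun j _ => measure_ne_top μ _)]
      exact fun j _ => hkmeas (2*m+1) j
    rw [key]
    have := hodd m hm
    linarith
  -- final assembly
  have hintsum : Integrable (fun ω => ∑ t ∈ Finset.range (2*N), G t (k t ω)) μ :=
    integrable_finset_sum _ fun t _ => hint t
  rw [integral_sub (integrable_const _) hintsum,
    integral_finset_sum _ (fun t _ => hint t), integral_const, probReal_univ,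
    one_smul, hG, sup_G]
  have hsum_bound : ∑ t ∈ Finset.range (2*N), ∫ ω, G t (k t ω) ∂μ
      ≤ ∑ m ∈ Finset.range N, (-(3/2) + (((N-m:ℕ)):ℝ)⁻¹) := by
    rw [sum_range_two_mul (fun t => ∫ ω, G t (k t ω) ∂μ) N]
    refine Finset.sum_le_sum fun m hmem => ?_
    have hm := Finset.mem_range.1 hmem
    have h1 := hIe m hm
    have h2 := hIo m hm
    linarith
  have hharm : ∑ m ∈ Finset.range N, (((N-m:ℕ)):ℝ)⁻¹
      = ∑ j ∈ Finset.range N, 1/((j:ℝ)+1) := by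
    rw [← Finset.sum_range_reflect (fun j => 1/((j:ℝ)+1)) N]
    refine Finset.sum_congr rfl fun m hmem => ?_
    have hm := Finset.mem_range.1 hmem
    have h1 : N - 1 - m + 1 = N - m := by omega
    have h2 : ((N - 1 - m : ℕ) : ℝ) + 1 = ((N - m : ℕ) : ℝ) := by
      exact_mod_cast congrArg (fun x : ℕ => (x:ℝ)) h1
    rw [one_div, h2]
  have hsum2 : ∑ m ∈ Finset.range N, (-(3/2 : ℝ) + (((N-m:ℕ)):ℝ)⁻¹)
      = -(3/2)*N + ∑ j ∈ Finset.range N, 1/((j:ℝ)+1) := by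
    rw [Finset.sum_add_distrib, Finset.sum_const, hharm, Finset.card_range]
    ring
  rw [hsum2] at hsum_bound
  have hGsum : ∑ t ∈ Finset.range (2*N), ∫ ω, counterexamplePayoff N t (k t ω) ∂μ
      = ∑ t ∈ Finset.range (2*N), ∫ ω, G t (k t ω) ∂μ := by rw [hG]
  linarith [hsum_bound]
end
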